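/- arXiv:0904.0874 — 8 statements merged into one kernel-verified Lean document; each statement's English description precedes it below -/
import Mathlib

section
/- Let n ∈ ℕ and let A : (a,b) → Matrix (Fin n) (Fin n) ℂ be a continuously differentiable matrix-valued function on an open interval (a,b) ⊂ ℝ. Then for every s ∈ (a,b), the derivative of s ↦ exp(A(s)) exists and equals d/ds exp(A(s)) = ∫_0^1 exp((1−t)·A(s)) · A′(s) · exp(t·A(s)) dt. -/
open NormedSpace intervalIntegral

section Abstract
set_option linter.unusedSectionVars false
variable {𝔸 : Type*} [NormedRing 𝔸] [NormedAlgebra ℂ 𝔸] [CompleteSpace 𝔸]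

lemma myexp_smul (x : 𝔸) (t : ℝ) :
    HasDerivAt (fun u : ℝ => exp (u • x)) (exp (t • x) * x) t := by
  have := hasDerivAt_exp_smul_const (𝕂 := ℝ) x t
  exact this

lemma mynorm_exp_le (x : 𝔸) : ‖exp x‖ ≤ max ‖(1:𝔸)‖ 1 * Real.exp ‖x‖ := by
  set C := max ‖(1:𝔸)‖ 1 with hC
  have hC1 : (1:ℝ) ≤ C := le_max_right _ _
  have hb : ∀ k : ℕ, ‖((k.factorial : ℝ))⁻¹ • x ^ k‖ ≤ C * (‖x‖ ^ k / k.factorial) := by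
    intro k
    rw [norm_smul, norm_inv, Real.norm_natCast, div_eq_inv_mul, mul_comm C,
      mul_assoc]
    refine mul_le_mul_of_nonneg_left ?_ (by positivity)
    rcases Nat.eq_zero_or_pos k with hk | hk
    · subst hk; simp only [pow_zero, one_mul]; exact le_max_left _ _
    · exact le_trans (norm_pow_le' x hk) (le_mul_of_one_le_right (by positivity) hC1)
  have hsum : Summable fun k : ℕ => C * (‖x‖ ^ k / k.factorial) :=
    (Real.summable_pow_div_factorial ‖x‖).mul_left C
  have hs : Summable fun k : ℕ => ‖((k.factorial : ℝ))⁻¹ • x ^ k‖ :=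
    Summable.of_nonneg_of_le (fun k => norm_nonneg _) hb hsum
  calc ‖exp x‖ = ‖∑' k : ℕ, ((k.factorial : ℝ))⁻¹ • x ^ k‖ := by
        rw [exp_eq_tsum ℝ]
    _ ≤ ∑' k : ℕ, ‖((k.factorial : ℝ))⁻¹ • x ^ k‖ := norm_tsum_le_tsum_norm hs
    _ ≤ ∑' k : ℕ, C * (‖x‖ ^ k / k.factorial) := Summable.tsum_le_tsum hb hs hsum
    _ = C * Real.exp ‖x‖ := by
        rw [tsum_mul_left, Real.exp_eq_exp_ℝ, exp_eq_tsum_div]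

lemma myexp_cont : Continuous (exp : 𝔸 → 𝔸) :=
  continuous_iff_continuousAt.2 fun x => (exp_analytic (𝕂 := ℂ) x).continuousAt

lemma key (X Y : 𝔸) :
    exp Y - exp X
      = ∫ t in (0:ℝ)..1, exp ((1 - t) • X) * (Y - X) * exp (t • Y) := by
  have hg : ∀ t : ℝ, HasDerivAt (fun t : ℝ => exp ((1 - t) • X) * exp (t • Y))
      (exp ((1 - t) • X) * (Y - X) * exp (t • Y)) t := by
    intro t
    have h1 : HasDerivAt (fun t : ℝ => exp ((1 - t) • X))
        ((-1 : ℝ) • (exp ((1 - t) • X) * X)) t := by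
      have hinner : HasDerivAt (fun t : ℝ => 1 - t) (-1) t :=
        (hasDerivAt_id t).const_sub 1
      exact (myexp_smul X (1 - t)).scomp t hinner
    have h2 := myexp_smul Y t
    have := h1.mul h2
    convert this using 1
    · rfl
    have c1 : exp ((1 - t) • X) * X = X * exp ((1 - t) • X) :=
      (((Commute.refl X).smul_left ((1:ℝ) - t)).exp_left).eq
    have c2 : Y * exp (t • Y) = exp (t • Y) * Y :=
      (((Commute.refl Y).smul_right t).exp_right).eq
    rw [neg_one_smul, ← c2]
    noncomm_ring
  have e1c : Continuous fun t : ℝ => exp ((1 - t) • X) :=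
    myexp_cont.comp ((continuous_const.sub continuous_id).smul continuous_const)
  have e2c : Continuous fun t : ℝ => exp (t • Y) :=
    myexp_cont.comp (continuous_id.smul continuous_const)
  have hcont : Continuous fun t : ℝ => exp ((1 - t) • X) * (Y - X) * exp (t • Y) :=
    (e1c.mul continuous_const).mul e2c
  have := integral_eq_sub_of_hasDerivAt (f := fun t : ℝ => exp ((1 - t) • X) * exp (t • Y))
    (fun t _ => hg t) (hcont.intervalIntegrable 0 1)
  rw [this]
  simp

open MeasureTheory Filter Set Topology in
lemma aux (A A' : ℝ → 𝔸) (s : ℝ) (hA : HasDerivAt A (A' s) s) :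
    HasDerivAt (fun u : ℝ => exp (A u))
      (∫ t in (0:ℝ)..1, exp ((1 - t) • A s) * A' s * exp (t • A s)) s := by
  rw [hasDerivAt_iff_tendsto_slope]
  set F : ℝ → ℝ → 𝔸 := fun u t => exp ((1 - t) • A s) * slope A s u * exp (t • A u)
    with hF
  -- eventual bound data
  have hslope : Tendsto (slope A s) (𝓝[≠] s) (𝓝 (A' s)) :=
    hasDerivAt_iff_tendsto_slope.1 hA
  have hAc : Tendsto A (𝓝[≠] s) (𝓝 (A s)) :=
    hA.continuousAt.continuousWithinAt.tendsto
  set C : ℝ := max ‖(1:𝔸)‖ 1 * Real.exp (‖A s‖ + 1) * (‖A' s‖ + 1) *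
      (max ‖(1:𝔸)‖ 1 * Real.exp (‖A s‖ + 1)) with hC
  -- Step 1: tendsto of the integrals
  have step1 : Tendsto (fun u => ∫ t in (0:ℝ)..1, F u t) (𝓝[≠] s)
      (𝓝 (∫ t in (0:ℝ)..1, exp ((1 - t) • A s) * A' s * exp (t • A s))) := by
    apply intervalIntegral.tendsto_integral_filter_of_dominated_convergence (fun _ => C)
    · -- measurability
      filter_upwards with u
      apply Continuous.aestronglyMeasurable
      exact ((myexp_cont.comp ((continuous_const.sub continuous_id).smul
        continuous_const)).mul continuous_const).mul
        (myexp_cont.comp (continuous_id.smul continuous_const))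
    · -- bound
      have h1 : ∀ᶠ u in 𝓝[≠] s, ‖slope A s u‖ ≤ ‖A' s‖ + 1 := by
        have := hslope.norm.eventually_le_const (by linarith : ‖A' s‖ < ‖A' s‖ + 1)
        exact this
      have h2 : ∀ᶠ u in 𝓝[≠] s, ‖A u‖ ≤ ‖A s‖ + 1 := by
        have := hAc.norm.eventually_le_const (by linarith : ‖A s‖ < ‖A s‖ + 1)
        exact this
      filter_upwards [h1, h2] with u hu1 hu2
      refine Eventually.of_forall fun t ht => ?_
      rw [Set.uIoc_of_le (by norm_num : (0:ℝ) ≤ 1)] at ht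
      have e1 : ‖exp ((1 - t) • A s)‖ ≤ max ‖(1:𝔸)‖ 1 * Real.exp (‖A s‖ + 1) := by
        refine (mynorm_exp_le _).trans ?_
        refine mul_le_mul_of_nonneg_left (Real.exp_le_exp.2 ?_) (by positivity)
        rw [norm_smul, Real.norm_eq_abs]
        have : |1 - t| ≤ 1 := by rw [abs_le]; constructor <;> linarith [ht.1, ht.2]
        nlinarith [norm_nonneg (A s)]
      have e2 : ‖exp (t • A u)‖ ≤ max ‖(1:𝔸)‖ 1 * Real.exp (‖A s‖ + 1) := by
        refine (mynorm_exp_le _).trans ?_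
        refine mul_le_mul_of_nonneg_left (Real.exp_le_exp.2 ?_) (by positivity)
        rw [norm_smul, Real.norm_eq_abs]
        have h3 : |t| ≤ 1 := by rw [abs_le]; constructor <;> linarith [ht.1, ht.2]
        nlinarith [norm_nonneg (A u), abs_nonneg t]
      calc ‖F u t‖ ≤ ‖exp ((1 - t) • A s) * slope A s u‖ * ‖exp (t • A u)‖ :=
            norm_mul_le _ _
        _ ≤ (‖exp ((1 - t) • A s)‖ * ‖slope A s u‖) * ‖exp (t • A u)‖ :=
            mul_le_mul_of_nonneg_right (norm_mul_le _ _) (norm_nonneg _)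
        _ ≤ C := by
            rw [hC]
            exact mul_le_mul (mul_le_mul e1 hu1 (norm_nonneg _) (by positivity)) e2
              (norm_nonneg _) (by positivity)
    · exact intervalIntegrable_const
    · -- pointwise limit
      refine Eventually.of_forall fun t _ => ?_
      have l2 : Tendsto (fun u => exp (t • A u)) (𝓝[≠] s) (𝓝 (exp (t • A s))) :=
        (myexp_cont.tendsto _).comp (hAc.const_smul t)
      exact (tendsto_const_nhds.mul hslope).mul l2
  -- Step 2: slope equals the integral of F
  have step2 : ∀ u : ℝ, slope (fun u => exp (A u)) s u = ∫ t in (0:ℝ)..1, F u t := by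
    intro u
    rw [slope_def_module, key (A s) (A u), ← intervalIntegral.integral_smul]
    refine intervalIntegral.integral_congr fun t _ => ?_
    rw [hF]
    simp only [slope_def_module]
    rw [← smul_mul_assoc, ← mul_smul_comm]
  exact step1.congr fun u => (step2 u).symm
end Abstract

section Linfty
open Topology Filter
variable (n : ℕ)
attribute [local instance] Matrix.linftyOpNormedRing Matrix.linftyOpNormedAlgebra

noncomputable def entryCLM (i j : Fin n) : Matrix (Fin n) (Fin n) ℂ →L[ℝ] ℂ :=
  { toFun := fun M => M i j, map_add' := fun _ _ => rfl, map_smul' := fun _ _ => rfl,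
    cont := by exact (continuous_apply j).comp (continuous_apply i) }

lemma entry_hasDerivAt_iff (f : ℝ → Matrix (Fin n) (Fin n) ℂ)
    (f' : Matrix (Fin n) (Fin n) ℂ) (s : ℝ) :
    HasDerivAt f f' s ↔ ∀ i j, HasDerivAt (fun u => f u i j) (f' i j) s := by
  refine hasDerivAt_iff_tendsto_slope.trans ?_
  constructor
  · intro h i j
    rw [hasDerivAt_iff_tendsto_slope]
    have := (((continuous_apply j).comp (continuous_apply i)).tendsto f').comp h
    refine this.congr fun u => ?_
    simp [slope_def_module, Function.comp]
  · intro h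
    refine tendsto_pi_nhds.2 fun i => tendsto_pi_nhds.2 fun j => ?_
    have := hasDerivAt_iff_tendsto_slope.1 (h i j)
    refine this.congr fun u => ?_
    simp [slope_def_module, Function.comp]

lemma matrix_exp_cont : Continuous (exp : Matrix (Fin n) (Fin n) ℂ → _) := myexp_cont

lemma linfty_main (A A' : ℝ → Matrix (Fin n) (Fin n) ℂ) (s : ℝ)
    (hA : ∀ i j, HasDerivAt (fun u => A u i j) (A' s i j) s) :
    ∀ i j, HasDerivAt (fun u => exp (A u) i j)
      (∫ t in (0:ℝ)..1, (exp ((1 - t) • A s) * A' s * exp (t • A s)) i j) s := by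
  have hAm : HasDerivAt A (A' s) s := (entry_hasDerivAt_iff n A (A' s) s).2 hA
  have h := aux A A' s hAm
  have h' := (entry_hasDerivAt_iff n _ _ s).1 h
  intro i j
  have hInt : @IntervalIntegrable _ _ NormedAddGroup.toENormedAddMonoid
      (fun t : ℝ => exp ((1 - t) • A s) * A' s * exp (t • A s))
      MeasureTheory.volume 0 1 := by
    refine Continuous.intervalIntegrable ?_ 0 1
    exact ((myexp_cont.comp ((continuous_const.sub continuous_id).smul
      continuous_const)).mul continuous_const).mul
      (myexp_cont.comp (continuous_id.smul continuous_const))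
  have hcomm := (entryCLM n i j).intervalIntegral_comp_comm hInt
  have := h' i j
  convert this using 1
  · rfl
  · exact hcomm

end Linfty

attribute [local instance] Matrix.normedAddCommGroup Matrix.normedSpace

section Sup
open Topology Filter
variable (n : ℕ)

noncomputable def entryCLM2 (i j : Fin n) : Matrix (Fin n) (Fin n) ℂ →L[ℝ] ℂ :=
  { toFun := fun M => M i j, map_add' := fun _ _ => rfl, map_smul' := fun _ _ => rfl,
    cont := by exact (continuous_apply j).comp (continuous_apply i) }

lemma entry_hasDerivAt_iff2 (f : ℝ → Matrix (Fin n) (Fin n) ℂ)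
    (f' : Matrix (Fin n) (Fin n) ℂ) (s : ℝ) :
    HasDerivAt f f' s ↔ ∀ i j, HasDerivAt (fun u => f u i j) (f' i j) s := by
  refine hasDerivAt_iff_tendsto_slope.trans ?_
  constructor
  · intro h i j
    rw [hasDerivAt_iff_tendsto_slope]
    have := (((continuous_apply j).comp (continuous_apply i)).tendsto f').comp h
    refine this.congr fun u => ?_
    simp [slope_def_module, Function.comp]
  · intro h
    refine tendsto_pi_nhds.2 fun i => tendsto_pi_nhds.2 fun j => ?_
    have := hasDerivAt_iff_tendsto_slope.1 (h i j)
    refine this.congr fun u => ?_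
    simp [slope_def_module, Function.comp]

end Sup

/-- For a `C¹` matrix-valued function `A` on an open interval `(a,b)`, the derivative of
`s ↦ exp(A s)` exists and equals `∫_0^1 exp((1−t)·A s) · A′ s · exp(t·A s) dt`. -/
theorem derivative_of_matrix_exponential (n : ℕ) (a b : ℝ)
    (A A' : ℝ → Matrix (Fin n) (Fin n) ℂ)
    (hA : ∀ s ∈ Set.Ioo a b, HasDerivAt A (A' s) s)
    (hA' : ContinuousOn A' (Set.Ioo a b)) :
    ∀ s ∈ Set.Ioo a b,
      HasDerivAt (fun s : ℝ => NormedSpace.exp (A s))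
        (∫ t in (0:ℝ)..1,
          NormedSpace.exp ((1 - t) • A s) * A' s * NormedSpace.exp (t • A s)) s := by
  intro s hs
  have hAe : ∀ i j, HasDerivAt (fun u => A u i j) (A' s i j) s :=
    (entry_hasDerivAt_iff2 n A (A' s) s).1 (hA s hs)
  have h := linfty_main n A A' s hAe
  rw [entry_hasDerivAt_iff2 n]
  intro i j
  have hInt : @IntervalIntegrable _ _ NormedAddGroup.toENormedAddMonoid
      (fun t : ℝ => exp ((1 - t) • A s) * A' s * exp (t • A s))
      MeasureTheory.volume 0 1 := by
    refine Continuous.intervalIntegrable ?_ 0 1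
    exact (((matrix_exp_cont n).comp ((continuous_const.sub continuous_id).smul
      continuous_const)).matrix_mul continuous_const).matrix_mul
      ((matrix_exp_cont n).comp (continuous_id.smul continuous_const))
  have hcomm := (entryCLM2 n i j).intervalIntegral_comp_comm hInt
  convert h i j using 1
  exact hcomm.symm
end

section
/- Suppose the complex parameters (U_X)_{X ∈ Γ^4} satisfy |U_X| < log 2 / (16 β L^{4d}) for all X ∈ Γ^4. Then the infinite series defining P((U_X)) converges absolutely and |P((U_X)) − 1| < 1. -/
open scoped Real BigOperators
open MeasureTheory

noncomputable section

/-- The dispersion relation `E_k`, with momentum `k = 2π m / L` parametrized by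
`m : Fin d → ZMod L`. -/
def disp (d L : ℕ) (t t' μ : ℝ) (k : Fin d → ZMod L) : ℝ :=
  -2 * t * (∑ j : Fin d, Real.cos (2 * Real.pi * ((k j).val : ℝ) / L))
    - 4 * t' * (if 2 ≤ d then (1 : ℝ) else 0) *
        (∑ j : Fin d, ∑ l : Fin d,
          if j < l then
            Real.cos (2 * Real.pi * ((k j).val : ℝ) / L) *
              Real.cos (2 * Real.pi * ((k l).val : ℝ) / L)
          else 0)
    - μ

/-- The inner product `⟨k, x⟩` of a momentum `k = 2π m / L` with a lattice site `x`. -/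
def phase (d L : ℕ) (k x : Fin d → ZMod L) : ℝ :=
  ∑ j : Fin d, (2 * Real.pi * ((k j).val : ℝ) / L) * ((x j).val : ℝ)

/-- The covariance `C(xσs, yτu)`.  Spins are represented by `Bool` (`true` = ↑). -/
def Cov (d L : ℕ) [NeZero L] (t t' μ β : ℝ)
    (x : Fin d → ZMod L) (σ : Bool) (s : ℝ)
    (y : Fin d → ZMod L) (τ : Bool) (u : ℝ) : ℂ :=
  ((if σ = τ then (1 : ℂ) else 0) / (L : ℂ) ^ d) *
    ∑ k : Fin d → ZMod L,
      Complex.exp (Complex.I * (phase d L k (y - x) : ℂ)) *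
        (Real.exp (-((u - s) * disp d L t t' μ k)) : ℂ) *
        ((if u - s ≤ 0 then 1 / (1 + Real.exp (β * disp d L t t' μ k))
            else -(1 / (1 + Real.exp (-(β * disp d L t t' μ k)))) : ℝ) : ℂ)

/-- Quadruples of lattice sites (elements of `Γ⁴`). -/
abbrev Quad (d L : ℕ) :=
  (Fin d → ZMod L) × (Fin d → ZMod L) × (Fin d → ZMod L) × (Fin d → ZMod L)

/-- The pair index `j ∈ {1,…,n}` to which the row/column index `i ∈ {1,…,2n}` belongs. -/
def halfIdx {n : ℕ} (i : Fin (2 * n)) : Fin n :=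
  ⟨i.val / 2, by have := i.isLt; omega⟩

/-- The `x`-coordinate attached to the row index `i`: `x_{2j-1}` resp. `x_{2j}`. -/
def rowx {d L n : ℕ} (X : Fin n → Quad d L) (i : Fin (2 * n)) : Fin d → ZMod L :=
  if i.val % 2 = 0 then (X (halfIdx i)).1 else (X (halfIdx i)).2.1

/-- The `y`-coordinate attached to the column index `i`: `y_{2j-1}` resp. `y_{2j}`. -/
def rowy {d L n : ℕ} (X : Fin n → Quad d L) (i : Fin (2 * n)) : Fin d → ZMod L :=
  if i.val % 2 = 0 then (X (halfIdx i)).2.2.1 else (X (halfIdx i)).2.2.2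

/-- The spin `σ_i` : `↑` (`true`) for odd `i` (1-indexed), `↓` for even `i`. -/
def rowspin {n : ℕ} (i : Fin (2 * n)) : Bool := decide (i.val % 2 = 0)

/-- `det( C(x_j σ_j s_j, y_k σ_k s_k) )_{1 ≤ j,k ≤ 2n}` with the constraint
`s_{2j} = s_{2j-1}` built in (`sv` gives one time per pair). -/
def detTerm (d L : ℕ) [NeZero L] (t t' μ β : ℝ) (n : ℕ)
    (X : Fin n → Quad d L) (sv : Fin n → ℝ) : ℂ :=
  Matrix.det (Matrix.of fun i j : Fin (2 * n) =>
    Cov d L t t' μ β (rowx X i) (rowspin i) (sv (halfIdx i))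
      (rowy X j) (rowspin j) (sv (halfIdx j)))

/-- The `n`-th term of the (continuum) perturbation series, with general complex
weights `w : Γ⁴ → ℂ` in place of `U_{x,y,z,w}`. -/
def coefTerm (d L : ℕ) [NeZero L] (t t' μ β : ℝ) (n : ℕ) (w : Quad d L → ℂ) : ℂ :=
  (1 / n.factorial : ℂ) *
    ∑ X : Fin n → Quad d L,
      (∏ j : Fin n, -w (X j)) *
        ∫ sv in (Set.univ.pi fun _ : Fin n => Set.Icc (0 : ℝ) β),
          detTerm d L t t' μ β n X sv

/-- The partition function series `P((U_X))`. -/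
def Pseries (d L : ℕ) [NeZero L] (t t' μ β : ℝ) (U : Quad d L → ℂ) : ℂ :=
  1 + ∑' n : ℕ, coefTerm d L t t' μ β (n + 1) U

/-- The `n`-th term of the discretized perturbation series with time mesh `1/h`
and `M = βh` points in `[0,β)`. -/
def coefTermD (d L : ℕ) [NeZero L] (t t' μ β h : ℝ) (M : ℕ) (n : ℕ)
    (w : Quad d L → ℂ) : ℂ :=
  (1 / n.factorial : ℂ) *
    ∑ X : Fin n → Quad d L, ∑ sv : Fin n → Fin M,
      (∏ j : Fin n, -(1 / (h : ℂ)) * w (X j)) *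
        detTerm d L t t' μ β n X fun j => (sv j : ℝ) / h

/-- The discretized partition function `P_h((U_X))`. -/
def PseriesD (d L : ℕ) [NeZero L] (t t' μ β h : ℝ) (M : ℕ) (U : Quad d L → ℂ) : ℂ :=
  1 + ∑ n ∈ Finset.Icc 1 (L ^ d * M), coefTermD d L t t' μ β h M n U

/-- The interaction weight `δ_{x,y} δ_{z,w} δ_{x,z} + λ_{x,y,z,w} + λ_{z,w,x,y}`
appearing in `G_n(λ)`. -/
def lamCoef (d L : ℕ) (lam : Quad d L → ℝ) (q : Quad d L) : ℂ :=
  (((if q.1 = q.2.1 ∧ q.2.2.1 = q.2.2.2 ∧ q.1 = q.2.2.1 then (1 : ℝ) else 0)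
      + lam q + lam (q.2.2.1, q.2.2.2, q.1, q.2.1) : ℝ) : ℂ)

/-- `G_n(λ)` (continuum). -/
def Gcont (d L : ℕ) [NeZero L] (t t' μ β : ℝ) (n : ℕ) (lam : Quad d L → ℝ) : ℂ :=
  coefTerm d L t t' μ β n (lamCoef d L lam)

/-- `G_{h,n}(λ)` (discretized). -/
def Gdisc (d L : ℕ) [NeZero L] (t t' μ β h : ℝ) (M : ℕ) (n : ℕ)
    (lam : Quad d L → ℝ) : ℂ :=
  coefTermD d L t t' μ β h M n (lamCoef d L lam)

/-- The logarithmic combination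
`∑_{j=1}^{n+1} ((−1)^{j−1}/j) ∑_{m₁+⋯+m_j=n+1, m_k ≥ 1} ∏_k G_{m_k}(λ)`. -/
def logComb {α : Type*} (G : ℕ → α → ℂ) (n : ℕ) (lam : α) : ℂ :=
  ∑ j ∈ Finset.Icc 1 (n + 1), ((-1 : ℂ)) ^ (j - 1) / (j : ℂ) *
    ∑ m ∈ (Finset.Nat.antidiagonalTuple j (n + 1)).filter fun m => ∀ k, 1 ≤ m k,
      ∏ k : Fin j, G (m k) lam

/-- The continuum perturbation coefficient `a_n`, as the derivative in the
direction of the parameter `λ_{X̃₁}` at `λ = 0`. -/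
def aCont (d L : ℕ) [NeZero L] (t t' μ β : ℝ) (X1 : Quad d L) (n : ℕ) : ℂ :=
  -(1 / (β : ℂ)) *
    deriv (fun ε : ℝ =>
      logComb (Gcont d L t t' μ β) n fun q => if q = X1 then ε else 0) 0

/-- The discretized perturbation coefficient `a_{h,n}`. -/
def aDisc (d L : ℕ) [NeZero L] (t t' μ β h : ℝ) (M : ℕ) (X1 : Quad d L) (n : ℕ) : ℂ :=
  -(1 / (β : ℂ)) *
    deriv (fun ε : ℝ =>
      logComb (Gdisc d L t t' μ β h M) n fun q => if q = X1 then ε else 0) 0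

/-- The discretized `L¹`-norm `D_h` of the covariance, where `M = βh`. -/
def Dh (d L : ℕ) [NeZero L] (t t' μ β h : ℝ) (M : ℕ) : ℝ :=
  (1 / h) *
    ∑ x : Fin d → ZMod L, ∑ m : Fin (2 * M),
      ‖Cov d L t t' μ β x true (-β + (m : ℝ) / h) 0 true 0‖

/-- The decay constant `D = ∫_{−β}^{β} ds ∑_{x∈Γ} |C(x↑s, 0↑0)|`. -/
def Dc (d L : ℕ) [NeZero L] (t t' μ β : ℝ) : ℝ :=
  ∫ s in (-β)..β,
    ∑ x : Fin d → ZMod L, ‖Cov d L t t' μ β x true s 0 true 0‖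

end

-- ===== auxiliary lemmas =====
section Aux
open scoped Real BigOperators
open MeasureTheory

/-- Hadamard's inequality (crude form): a complex `m × m` matrix with entries of
absolute value at most `1` has determinant of absolute value at most `√m ^ m`. -/
lemma hadamard_det {m : ℕ} (M : Matrix (Fin m) (Fin m) ℂ)
    (hM : ∀ i j, ‖M i j‖ ≤ 1) :
    ‖M.det‖ ≤ Real.sqrt m ^ m := by
  classical
  set E := EuclideanSpace ℂ (Fin m)
  have h : Module.finrank ℂ E = Fintype.card (Fin m) := by
    simp [E, finrank_euclideanSpace]
  set f : Fin m → E := fun i => (WithLp.equiv 2 _).symm (M i) with hf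
  have hfnorm : ∀ i, ‖f i‖ ≤ Real.sqrt m := by
    intro i
    rw [EuclideanSpace.norm_eq]
    apply Real.sqrt_le_sqrt
    calc ∑ j, ‖M i j‖ ^ 2 ≤ ∑ _j : Fin m, (1:ℝ) := by
          apply Finset.sum_le_sum
          intro j _
          have := hM i j
          nlinarith [norm_nonneg (M i j)]
      _ = m := by simp
  set b₀ := EuclideanSpace.basisFun (Fin m) ℂ
  set b := InnerProductSpace.gramSchmidtOrthonormalBasis h f with hb
  have hdet0 : b₀.toBasis.det f = M.det := by
    rw [Module.Basis.det_apply]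
    have : b₀.toBasis.toMatrix f = M.transpose := by
      ext i j
      simp [Module.Basis.toMatrix_apply, b₀, f, Matrix.transpose_apply]
    rw [this, Matrix.det_transpose]
  have hsplit : b₀.toBasis.toMatrix f = b₀.toBasis.toMatrix b.toBasis * b.toBasis.toMatrix f :=
    (Module.Basis.toMatrix_mul_toMatrix _ _ _).symm
  have hdet : ‖M.det‖ = ‖b.toBasis.det f‖ := by
    rw [← hdet0, Module.Basis.det_apply, Module.Basis.det_apply, hsplit, Matrix.det_mul, norm_mul,
      ← Module.Basis.det_apply, ← Module.Basis.det_apply]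
    rw [show ⇑b.toBasis = ⇑b from b.coe_toBasis, b₀.det_to_matrix_orthonormalBasis b, one_mul]
  have hgs : b.toBasis.det f = ∏ i, inner ℂ (b i) (f i) := InnerProductSpace.gramSchmidtOrthonormalBasis_det h f
  rw [hdet, hgs, norm_prod]
  calc ∏ i, ‖(inner ℂ (b i) (f i) : ℂ)‖ ≤ ∏ i : Fin m, Real.sqrt m := by
        apply Finset.prod_le_prod
        · intro i _; exact norm_nonneg _
        · intro i _
          calc ‖(inner ℂ (b i) (f i) : ℂ)‖ ≤ ‖b i‖ * ‖f i‖ := norm_inner_le_norm _ _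
            _ = ‖f i‖ := by rw [b.orthonormal.1 i, one_mul]
            _ ≤ Real.sqrt m := hfnorm i
    _ = Real.sqrt m ^ m := by simp

lemma exp_aux {β a E : ℝ} (ha : 0 ≤ a) (hab : a ≤ β) :
    Real.exp (a * E) ≤ 1 + Real.exp (β * E) := by
  rcases le_total E 0 with hE | hE
  · have h1 : a * E ≤ 0 := mul_nonpos_of_nonneg_of_nonpos ha hE
    have := Real.exp_le_one_iff.mpr h1
    have := Real.exp_pos (β * E)
    linarith
  · have h1 : a * E ≤ β * E := mul_le_mul_of_nonneg_right hab hE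
    have := Real.exp_le_exp.mpr h1
    linarith

lemma cov_term_abs_le_one (β : ℝ) (E : ℝ) {s u : ℝ}
    (hs : s ∈ Set.Icc 0 β) (hu : u ∈ Set.Icc 0 β) :
    Real.exp (-((u - s) * E)) *
      |if u - s ≤ 0 then 1 / (1 + Real.exp (β * E))
        else -(1 / (1 + Real.exp (-(β * E))))| ≤ 1 := by
  obtain ⟨hs0, hsb⟩ := hs
  obtain ⟨hu0, hub⟩ := hu
  split_ifs with h
  · have hd : 0 < 1 + Real.exp (β * E) := by positivity
    rw [abs_of_nonneg (by positivity)]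
    rw [mul_one_div, div_le_one hd]
    have : -((u - s) * E) = (s - u) * E := by ring
    rw [this]
    exact exp_aux (by linarith) (by linarith)
  · have hd : 0 < 1 + Real.exp (-(β * E)) := by positivity
    rw [abs_neg, abs_of_nonneg (by positivity)]
    rw [mul_one_div, div_le_one hd]
    have h1 : -((u - s) * E) = (u - s) * (-E) := by ring
    have h2 : -(β * E) = β * (-E) := by ring
    rw [h1, h2]
    exact exp_aux (by linarith) (by linarith)

lemma cov_abs_le_one (d L : ℕ) [NeZero L] (t t' μ β : ℝ)
    (x : Fin d → ZMod L) (σ : Bool) {s : ℝ} (y : Fin d → ZMod L) (τ : Bool) {u : ℝ}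
    (hs : s ∈ Set.Icc 0 β) (hu : u ∈ Set.Icc 0 β) :
    ‖Cov d L t t' μ β x σ s y τ u‖ ≤ 1 := by
  have hL : (0:ℝ) < (L:ℝ) ^ d := by
    have : (0:ℝ) < (L:ℝ) := by exact_mod_cast Nat.pos_of_ne_zero (NeZero.ne L)
    positivity
  rw [Cov, norm_mul]
  have h1 : ‖(if σ = τ then (1 : ℂ) else 0) / (L : ℂ) ^ d‖ ≤ 1 / (L:ℝ)^d := by
    rw [norm_div]
    gcongr
    · split_ifs <;> simp
    · rw [show ((L:ℂ)^d) = ((((L:ℝ)^d : ℝ)) : ℂ) by push_cast; ring]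
      rw [Complex.norm_real, Real.norm_eq_abs, abs_of_pos hL]
  have h2 : ‖∑ k : Fin d → ZMod L,
      Complex.exp (Complex.I * (phase d L k (y - x) : ℂ)) *
        (Real.exp (-((u - s) * disp d L t t' μ k)) : ℂ) *
        ((if u - s ≤ 0 then 1 / (1 + Real.exp (β * disp d L t t' μ k))
            else -(1 / (1 + Real.exp (-(β * disp d L t t' μ k)))) : ℝ) : ℂ)‖ ≤ (L:ℝ)^d := by
    calc ‖_‖ ≤ ∑ k : Fin d → ZMod L, ‖(
        Complex.exp (Complex.I * (phase d L k (y - x) : ℂ)) *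
        (Real.exp (-((u - s) * disp d L t t' μ k)) : ℂ) *
        ((if u - s ≤ 0 then 1 / (1 + Real.exp (β * disp d L t t' μ k))
            else -(1 / (1 + Real.exp (-(β * disp d L t t' μ k)))) : ℝ) : ℂ))‖ :=
          norm_sum_le _ _
      _ ≤ ∑ _k : Fin d → ZMod L, (1:ℝ) := by
          apply Finset.sum_le_sum
          intro k _
          rw [norm_mul, norm_mul, Complex.norm_exp, Complex.norm_real, Complex.norm_real, Real.norm_eq_abs, Real.norm_eq_abs]
          have : (Complex.I * (phase d L k (y - x) : ℂ)).re = 0 := by simp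
          rw [this, Real.exp_zero, one_mul, abs_of_pos (Real.exp_pos _)]
          exact cov_term_abs_le_one β _ hs hu
      _ = ((L:ℝ))^d := by
          rw [Finset.sum_const, Finset.card_univ]
          simp [Fintype.card_fun, mul_comm]
  calc ‖_‖ * ‖_‖ ≤ (1/(L:ℝ)^d) * (L:ℝ)^d := by
        apply mul_le_mul h1 h2 (norm_nonneg _) (by positivity)
    _ = 1 := by field_simp

lemma cov_measurable (d L : ℕ) [NeZero L] (t t' μ β : ℝ)
    (x : Fin d → ZMod L) (σ : Bool) (y : Fin d → ZMod L) (τ : Bool) :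
    Measurable (fun p : ℝ × ℝ => Cov d L t t' μ β x σ p.1 y τ p.2) := by
  unfold Cov
  apply Measurable.const_mul
  apply Finset.measurable_sum
  intro k _
  apply Measurable.mul
  · apply Measurable.mul
    · exact measurable_const
    · apply Complex.measurable_ofReal.comp
      apply Real.measurable_exp.comp
      exact ((measurable_snd.sub measurable_fst).mul_const _).neg
  · apply Complex.measurable_ofReal.comp
    have hsub : Measurable fun p : ℝ × ℝ => p.2 - p.1 := measurable_snd.sub measurable_fst
    exact Measurable.ite (measurableSet_le hsub measurable_const)
      measurable_const measurable_const

lemma detTerm_measurable (d L : ℕ) [NeZero L] (t t' μ β : ℝ) (n : ℕ)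
    (X : Fin n → Quad d L) :
    Measurable (fun sv : Fin n → ℝ => detTerm d L t t' μ β n X sv) := by
  unfold detTerm
  simp only [Matrix.det_apply']
  apply Finset.measurable_sum
  intro p _
  apply Measurable.const_mul
  apply Finset.measurable_prod
  intro i _
  have : (fun sv : Fin n → ℝ =>
      (Matrix.of fun i j : Fin (2 * n) =>
        Cov d L t t' μ β (rowx X i) (rowspin i) (sv (halfIdx i))
          (rowy X j) (rowspin j) (sv (halfIdx j))) (p i) i) =
      (fun q : ℝ × ℝ => Cov d L t t' μ β (rowx X (p i)) (rowspin (p i)) q.1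
        (rowy X i) (rowspin i) q.2) ∘
        (fun sv : Fin n → ℝ => (sv (halfIdx (p i)), sv (halfIdx i))) := rfl
  rw [this]
  exact (cov_measurable d L t t' μ β _ _ _ _).comp
    ((measurable_pi_apply _).prodMk (measurable_pi_apply _))

lemma detTerm_abs_le (d L : ℕ) [NeZero L] (t t' μ β : ℝ) (n : ℕ)
    (X : Fin n → Quad d L) (sv : Fin n → ℝ)
    (hsv : ∀ j, sv j ∈ Set.Icc 0 β) :
    ‖detTerm d L t t' μ β n X sv‖ ≤ ((2 * n : ℕ) : ℝ) ^ n := by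
  have h := hadamard_det (m := 2 * n)
    (Matrix.of fun i j : Fin (2 * n) =>
      Cov d L t t' μ β (rowx X i) (rowspin i) (sv (halfIdx i))
        (rowy X j) (rowspin j) (sv (halfIdx j)))
    (fun i j => cov_abs_le_one d L t t' μ β _ _ _ _ (hsv _) (hsv _))
  unfold detTerm
  calc ‖_‖ ≤ Real.sqrt ((2 * n : ℕ)) ^ (2 * n) := h
    _ = ((2 * n : ℕ) : ℝ) ^ n := by
        rw [pow_mul, Real.sq_sqrt (by positivity)]

lemma factorial_aux (n : ℕ) : ((n : ℝ)) ^ n ≤ Real.exp 1 ^ n * n.factorial := by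
  have h := Real.sum_le_exp_of_nonneg (x := (n:ℝ)) (by positivity) (n + 1)
  have hterm : ((n:ℝ)) ^ n / n.factorial ≤ ∑ i ∈ Finset.range (n+1), (n:ℝ) ^ i / i.factorial := by
    exact Finset.single_le_sum (f := fun i => (n:ℝ) ^ i / (i.factorial : ℝ))
      (fun i _ => by positivity) (Finset.self_mem_range_succ n)
  have h2 : ((n:ℝ)) ^ n / n.factorial ≤ Real.exp n := le_trans hterm h
  have h3 : Real.exp (n:ℝ) = Real.exp 1 ^ n := by
    rw [← Real.exp_nat_mul]; norm_num
  have hfac : (0:ℝ) < n.factorial := by positivity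
  rw [div_le_iff₀ hfac] at h2
  rw [h3] at h2
  exact h2

end Aux


section MainAux
open scoped Real BigOperators
open MeasureTheory

lemma integral_detTerm_bound (d L : ℕ) [NeZero L] (t t' μ β : ℝ) (hβ : 0 < β)
    (n : ℕ) (X : Fin n → Quad d L) :
    ‖∫ sv in (Set.univ.pi fun _ : Fin n => Set.Icc (0 : ℝ) β),
        detTerm d L t t' μ β n X sv‖ ≤ ((2 * n : ℕ) : ℝ) ^ n * β ^ n := by
  set S := Set.univ.pi fun _ : Fin n => Set.Icc (0 : ℝ) β with hSdef
  have hvol : volume S = (ENNReal.ofReal β) ^ n := by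
    rw [hSdef, volume_pi_pi]
    simp [Real.volume_Icc]
  have hS : volume S < ⊤ := by
    rw [hvol]
    exact ENNReal.pow_lt_top ENNReal.ofReal_lt_top
  have hC : ∀ sv ∈ S, ‖detTerm d L t t' μ β n X sv‖ ≤ ((2 * n : ℕ) : ℝ) ^ n := by
    intro sv hsv
    apply detTerm_abs_le d L t t' μ β n X sv
    intro j
    exact hsv j (Set.mem_univ j)
  have hmeas : AEStronglyMeasurable (fun sv => detTerm d L t t' μ β n X sv)
      (volume.restrict S) :=
    (detTerm_measurable d L t t' μ β n X).aestronglyMeasurable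
  calc ‖∫ sv in S, detTerm d L t t' μ β n X sv‖
      ≤ ((2 * n : ℕ) : ℝ) ^ n * (volume S).toReal :=
        norm_setIntegral_le_of_norm_le_const hS hC
    _ = ((2 * n : ℕ) : ℝ) ^ n * β ^ n := by
        rw [hvol, ENNReal.toReal_pow, ENNReal.toReal_ofReal hβ.le]

lemma card_quad (d L : ℕ) [NeZero L] :
    (Fintype.card (Quad d L) : ℝ) = (L : ℝ) ^ (4 * d) := by
  have h1 : Fintype.card (Fin d → ZMod L) = L ^ d := by
    simp [Fintype.card_fun, ZMod.card]
  have : Fintype.card (Quad d L) = L ^ d * (L ^ d * (L ^ d * L ^ d)) := by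
    simp [Quad, Fintype.card_prod, h1]
  rw [this]
  push_cast
  ring

lemma coefTerm_abs_le (d L : ℕ) [NeZero L] (t t' μ β : ℝ) (hβ : 0 < β)
    (w : Quad d L → ℂ) (u₀ : ℝ) (hu₀ : 0 ≤ u₀)
    (hw : ∀ X : Quad d L, ‖w X‖ ≤ u₀) (n : ℕ) :
    ‖coefTerm d L t t' μ β n w‖ ≤
      (1 / n.factorial) * ((L : ℝ) ^ (4 * d)) ^ n * u₀ ^ n * β ^ n *
        ((2 * n : ℕ) : ℝ) ^ n := by
  unfold coefTerm
  rw [norm_mul]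
  have h1 : ‖1 / (n.factorial : ℂ)‖ = 1 / (n.factorial : ℝ) := by
    rw [norm_div, norm_one, Complex.norm_natCast]
  rw [h1]
  have h2 : ‖∑ X : Fin n → Quad d L,
      (∏ j : Fin n, -w (X j)) *
        ∫ sv in (Set.univ.pi fun _ : Fin n => Set.Icc (0 : ℝ) β),
          detTerm d L t t' μ β n X sv‖ ≤
      ((L : ℝ) ^ (4 * d)) ^ n * (u₀ ^ n * (((2 * n : ℕ) : ℝ) ^ n * β ^ n)) := by
    calc ‖_‖ ≤ ∑ X : Fin n → Quad d L, ‖(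
          (∏ j : Fin n, -w (X j)) *
            ∫ sv in (Set.univ.pi fun _ : Fin n => Set.Icc (0 : ℝ) β),
              detTerm d L t t' μ β n X sv)‖ := norm_sum_le _ _
      _ ≤ ∑ _X : Fin n → Quad d L, u₀ ^ n * (((2 * n : ℕ) : ℝ) ^ n * β ^ n) := by
          apply Finset.sum_le_sum
          intro X _
          rw [norm_mul]
          apply mul_le_mul _ _ (norm_nonneg _) (by positivity)
          · rw [norm_prod]
            calc ∏ j : Fin n, ‖(-w (X j))‖
                ≤ ∏ _j : Fin n, u₀ := by
                  apply Finset.prod_le_prod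
                  · intro j _; exact norm_nonneg _
                  · intro j _; rw [norm_neg]; exact hw _
              _ = u₀ ^ n := by simp
          · exact integral_detTerm_bound d L t t' μ β hβ n X
      _ = ((L : ℝ) ^ (4 * d)) ^ n * (u₀ ^ n * (((2 * n : ℕ) : ℝ) ^ n * β ^ n)) := by
          rw [Finset.sum_const, Finset.card_univ, nsmul_eq_mul, Fintype.card_fun]
          push_cast [card_quad d L, Fintype.card_fin]
          ring
  calc (1 / (n.factorial : ℝ)) * ‖_‖
      ≤ (1 / (n.factorial : ℝ)) *
          (((L : ℝ) ^ (4 * d)) ^ n * (u₀ ^ n * (((2 * n : ℕ) : ℝ) ^ n * β ^ n))) := by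
        apply mul_le_mul_of_nonneg_left h2 (by positivity)
    _ = (1 / n.factorial) * ((L : ℝ) ^ (4 * d)) ^ n * u₀ ^ n * β ^ n *
        ((2 * n : ℕ) : ℝ) ^ n := by ring

end MainAux


/-- If `|U_X| < log 2/(16 β L^{4d})` for all `X ∈ Γ⁴`, then the series defining
`P((U_X))` converges absolutely and `|P((U_X)) − 1| < 1`. -/
theorem partition_series_bound (d L : ℕ) [NeZero L] (t t' μ β : ℝ) (hβ : 0 < β)
    (U : Quad d L → ℂ)
    (hU : ∀ X : Quad d L,
      ‖U X‖ < Real.log 2 / (16 * β * (L : ℝ) ^ (4 * d))) :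
    (Summable fun n : ℕ => ‖coefTerm d L t t' μ β (n + 1) U‖) ∧
      ‖Pseries d L t t' μ β U - 1‖ < 1 := by
  set A := (L : ℝ) ^ (4 * d) with hA
  have hL : (0:ℝ) < (L:ℝ) := by exact_mod_cast Nat.pos_of_ne_zero (NeZero.ne L)
  have hApos : 0 < A := by positivity
  have hlog : 0 < Real.log 2 := Real.log_pos one_lt_two
  set u₀ := Real.log 2 / (16 * β * A) with hu₀
  have hu₀pos : 0 < u₀ := div_pos hlog (by positivity)
  have hw : ∀ X : Quad d L, ‖U X‖ ≤ u₀ := fun X => (hU X).le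
  set r := Real.exp 1 * Real.log 2 / 8 with hr
  have hrpos : 0 < r := by positivity
  have hrhalf : r < 1/2 := by
    have h1 := Real.exp_one_lt_d9
    have h2 := Real.log_two_lt_d9
    have h3 := Real.exp_pos 1
    rw [hr]
    nlinarith
  have hr1 : r < 1 := by linarith
  have hbound : ∀ n : ℕ, ‖coefTerm d L t t' μ β n U‖ ≤ r ^ n := by
    intro n
    have h := coefTerm_abs_le d L t t' μ β hβ U u₀ hu₀pos.le hw n
    refine h.trans ?_
    have key : A * u₀ * β = Real.log 2 / 16 := by
      rw [hu₀]; field_simp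
    have hfac : (0:ℝ) < n.factorial := by positivity
    calc (1 / (n.factorial:ℝ)) * A ^ n * u₀ ^ n * β ^ n * ((2*n : ℕ):ℝ) ^ n
        = (1 / n.factorial) * (A * u₀ * β) ^ n * ((2:ℝ) ^ n * ((n:ℝ)) ^ n) := by
          push_cast; ring
      _ ≤ (1 / n.factorial) * (Real.log 2 / 16) ^ n *
            ((2:ℝ) ^ n * (Real.exp 1 ^ n * n.factorial)) := by
          rw [key]
          gcongr
          exact factorial_aux n
      _ = ((Real.log 2 / 16) * (2 * Real.exp 1)) ^ n *
            ((n.factorial:ℝ) / n.factorial) := by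
          rw [mul_pow, mul_pow]; ring
      _ = r ^ n := by
          rw [div_self (ne_of_gt hfac), mul_one]
          congr 1
          rw [hr]; ring
  have hsumgeo : Summable (fun n : ℕ => r ^ (n+1)) := by
    have hg : Summable (fun n : ℕ => r ^ n) := summable_geometric_of_lt_one hrpos.le hr1
    exact (hg.mul_left r).congr (fun n => by rw [← pow_succ'])
  have hsum : Summable fun n : ℕ => ‖coefTerm d L t t' μ β (n + 1) U‖ :=
    Summable.of_nonneg_of_le (fun n => norm_nonneg _) (fun n => hbound (n+1)) hsumgeo
  refine ⟨hsum, ?_⟩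
  have hP : Pseries d L t t' μ β U - 1 = ∑' n : ℕ, coefTerm d L t t' μ β (n+1) U := by
    rw [Pseries]; ring
  have hsum' : Summable fun n : ℕ => ‖coefTerm d L t t' μ β (n + 1) U‖ := by
    simpa using hsum
  calc ‖Pseries d L t t' μ β U - 1‖
      = ‖∑' n : ℕ, coefTerm d L t t' μ β (n+1) U‖ := by
        rw [hP]
    _ ≤ ∑' n : ℕ, ‖coefTerm d L t t' μ β (n+1) U‖ := norm_tsum_le_tsum_norm hsum'
    _ ≤ ∑' n : ℕ, r ^ (n+1) := by
        apply Summable.tsum_le_tsum _ hsum' hsumgeo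
        intro n
        exact hbound (n+1)
    _ = r * (1 - r)⁻¹ := by
        rw [tsum_congr (fun n => (pow_succ' r n : r ^ (n+1) = r * r ^ n)),
          tsum_mul_left, tsum_geometric_of_lt_one hrpos.le hr1]
    _ < 1 := by
        rw [← div_eq_mul_inv, div_lt_one (by linarith)]
        linarith
end

section
/- For every n ∈ ℕ ∪ {0} and every fixed x₁, x₂, y₁, y₂ ∈ Γ, the discretized coefficients converge to the continuum coefficients: lim_{h → ∞, βh ∈ ℕ} a_{h,n} = a_n. -/
open scoped Real BigOperators
open MeasureTheory

noncomputable section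
namespace PTaux

open Filter

variable {d L : ℕ} [NeZero L] {t t' μ β : ℝ}

/-- bound for the covariance. -/
lemma Cov_abs_le (x y : Fin d → ZMod L) (σ τ : Bool) {s u : ℝ} (h : |u - s| ≤ β) :
    ‖Cov d L t t' μ β x σ s y τ u‖
      ≤ (1 / (L : ℝ) ^ d) * ∑ k : Fin d → ZMod L, Real.exp (β * |disp d L t t' μ k|) := by
  unfold Cov
  rw [norm_mul]
  have hL : (0:ℝ) < (L:ℝ) ^ d := by
    have : (0:ℝ) < (L:ℝ) := by exact_mod_cast Nat.pos_of_ne_zero (NeZero.ne L)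
    positivity
  have hA : ‖(if σ = τ then (1:ℂ) else 0) / (L:ℂ)^d‖ ≤ 1 / (L:ℝ)^d := by
    rw [norm_div, norm_pow, Complex.norm_natCast]
    gcongr
    split_ifs <;> simp
  have hS : ‖(∑ k : Fin d → ZMod L,
        Complex.exp (Complex.I * (phase d L k (y - x) : ℂ)) *
          (Real.exp (-((u - s) * disp d L t t' μ k)) : ℂ) *
          ((if u - s ≤ 0 then 1 / (1 + Real.exp (β * disp d L t t' μ k))
              else -(1 / (1 + Real.exp (-(β * disp d L t t' μ k)))) : ℝ) : ℂ))‖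
      ≤ ∑ k : Fin d → ZMod L, Real.exp (β * |disp d L t t' μ k|) := by
    refine le_trans (norm_sum_le _ _) (Finset.sum_le_sum fun k _ => ?_)
    rw [norm_mul, norm_mul]
    have e1 : ‖Complex.exp (Complex.I * (phase d L k (y - x) : ℂ))‖ = 1 := by
      rw [Complex.norm_exp]
      simp [Complex.mul_re]
    have e2 : ‖((Real.exp (-((u - s) * disp d L t t' μ k)) : ℝ) : ℂ)‖
        ≤ Real.exp (β * |disp d L t t' μ k|) := by
      rw [Complex.norm_real, Real.norm_eq_abs, abs_of_pos (Real.exp_pos _), Real.exp_le_exp]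
      calc -((u - s) * disp d L t t' μ k) ≤ |(u - s) * disp d L t t' μ k| := neg_le_abs _
        _ = |u - s| * |disp d L t t' μ k| := abs_mul _ _
        _ ≤ β * |disp d L t t' μ k| := mul_le_mul_of_nonneg_right h (abs_nonneg _)
    have e3 : ‖(((if u - s ≤ 0 then 1 / (1 + Real.exp (β * disp d L t t' μ k))
        else -(1 / (1 + Real.exp (-(β * disp d L t t' μ k)))) : ℝ) : ℂ))‖ ≤ 1 := by
      rw [Complex.norm_real, Real.norm_eq_abs]
      split_ifs with hc
      · rw [abs_of_nonneg (by positivity), div_le_one (by positivity)]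
        nlinarith [Real.exp_pos (β * disp d L t t' μ k)]
      · rw [abs_neg, abs_of_nonneg (by positivity), div_le_one (by positivity)]
        nlinarith [Real.exp_pos (-(β * disp d L t t' μ k))]
    calc ‖_‖ * ‖_‖ * ‖_‖
        ≤ 1 * Real.exp (β * |disp d L t t' μ k|) * 1 := by
          exact mul_le_mul (mul_le_mul e1.le e2 (norm_nonneg _) zero_le_one) e3
            (norm_nonneg _) (by positivity)
      _ = Real.exp (β * |disp d L t t' μ k|) := by ring
  calc ‖_‖ * ‖_‖
      ≤ (1 / (L:ℝ)^d) * ∑ k : Fin d → ZMod L, Real.exp (β * |disp d L t t' μ k|) :=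
        mul_le_mul hA hS (norm_nonneg _) (by positivity)

/-- The uniform bound constant on the cube. -/
def bnd (d L : ℕ) [NeZero L] (t t' μ β : ℝ) (n : ℕ) : ℝ :=
  (2 * n).factorial *
    ((1 / (L : ℝ) ^ d) * ∑ k : Fin d → ZMod L, Real.exp (β * |disp d L t t' μ k|)) ^ (2 * n)

lemma detTerm_abs_le (n : ℕ) (X : Fin n → Quad d L) {sv : Fin n → ℝ}
    (hsv : ∀ j, sv j ∈ Set.Icc (0:ℝ) β) :
    ‖detTerm d L t t' μ β n X sv‖ ≤ bnd d L t t' μ β n := by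
  unfold detTerm bnd
  have hx : ∀ i j : Fin (2 * n), ‖(Matrix.of fun i j : Fin (2 * n) =>
      Cov d L t t' μ β (rowx X i) (rowspin i) (sv (halfIdx i))
        (rowy X j) (rowspin j) (sv (halfIdx j))) i j‖
      ≤ (1 / (L : ℝ) ^ d) * ∑ k : Fin d → ZMod L, Real.exp (β * |disp d L t t' μ k|) := by
    intro i j
    rw [Matrix.of_apply]
    apply Cov_abs_le
    have h1 := hsv (halfIdx i); have h2 := hsv (halfIdx j)
    rw [Set.mem_Icc] at h1 h2
    rw [abs_le]
    constructor <;> linarith [h1.1, h1.2, h2.1, h2.2]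
  have := Matrix.det_le (abv := IsAbsoluteValue.toAbsoluteValue (norm : ℂ → ℝ)) hx
  simpa [Fintype.card_fin, nsmul_eq_mul] using this

lemma measurable_detTerm (n : ℕ) (X : Fin n → Quad d L) :
    Measurable fun sv : Fin n → ℝ => detTerm d L t t' μ β n X sv := by
  unfold detTerm
  simp only [Matrix.det_apply']
  refine Finset.measurable_sum _ fun σ _ => Measurable.const_mul ?_ _
  refine Finset.measurable_prod _ fun i _ => ?_
  simp only [Matrix.of_apply]
  unfold Cov
  set a := halfIdx (σ i) with ha
  set b := halfIdx i with hb
  refine Measurable.const_mul (Finset.measurable_sum _ fun k _ => ?_) _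
  refine Measurable.mul (Measurable.mul measurable_const ?_) ?_
  · have : Continuous fun sv : Fin n → ℝ =>
        ((Real.exp (-((sv b - sv a) * disp d L t t' μ k)) : ℝ) : ℂ) := by fun_prop
    exact this.measurable
  · refine Complex.measurable_ofReal.comp (Measurable.ite ?_ measurable_const measurable_const)
    exact measurableSet_le ((measurable_pi_apply b).sub (measurable_pi_apply a)) measurable_const

lemma continuousAt_cov (x y : Fin d → ZMod L) (σ τ : Bool) {n : ℕ} (a b : Fin n)
    {sv₀ : Fin n → ℝ} (hab : a = b ∨ sv₀ a ≠ sv₀ b) :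
    ContinuousAt (fun sv : Fin n → ℝ => Cov d L t t' μ β x σ (sv a) y τ (sv b)) sv₀ := by
  have hbranch : ∀ r : (Fin d → ZMod L) → ℝ, Continuous fun sv : Fin n → ℝ =>
      ((if σ = τ then (1:ℂ) else 0) / (L:ℂ)^d) *
      ∑ k : Fin d → ZMod L, Complex.exp (Complex.I * (phase d L k (y - x) : ℂ)) *
        ((Real.exp (-((sv b - sv a) * disp d L t t' μ k)) : ℝ) : ℂ) * ((r k : ℝ) : ℂ) := by
    intro r
    fun_prop
  rcases hab with rfl | hne
  · refine ((hbranch fun k => 1 / (1 + Real.exp (β * disp d L t t' μ k))).continuousAt).congr ?_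
    refine Filter.Eventually.of_forall fun sv => ?_
    unfold Cov
    simp
  · rcases lt_or_gt_of_ne hne with hlt | hgt
    · -- sv₀ a < sv₀ b : condition `sv b - sv a ≤ 0` is eventually false
      refine ((hbranch fun k => -(1 / (1 + Real.exp (-(β * disp d L t t' μ k))))).continuousAt).congr ?_
      have hmem : {sv : Fin n → ℝ | sv a < sv b} ∈ nhds sv₀ :=
        (isOpen_lt (continuous_apply a) (continuous_apply b)).mem_nhds hlt
      filter_upwards [hmem] with sv hsv
      unfold Cov
      simp only [if_neg (show ¬(sv b - sv a ≤ 0) by intro hcon; linarith)]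
    · refine ((hbranch fun k => 1 / (1 + Real.exp (β * disp d L t t' μ k))).continuousAt).congr ?_
      have hmem : {sv : Fin n → ℝ | sv b < sv a} ∈ nhds sv₀ :=
        (isOpen_lt (continuous_apply b) (continuous_apply a)).mem_nhds hgt
      filter_upwards [hmem] with sv hsv
      unfold Cov
      simp only [if_pos (show sv b - sv a ≤ 0 by linarith)]

lemma continuousAt_detTerm (n : ℕ) (X : Fin n → Quad d L) {sv₀ : Fin n → ℝ}
    (hinj : Function.Injective sv₀) :
    ContinuousAt (fun sv : Fin n → ℝ => detTerm d L t t' μ β n X sv) sv₀ := by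
  unfold detTerm
  have hdet : Continuous fun A : Matrix (Fin (2*n)) (Fin (2*n)) ℂ => A.det :=
    Continuous.matrix_det continuous_id
  refine hdet.continuousAt.comp ?_
  apply continuousAt_pi.2
  intro i
  rw [continuousAt_pi]
  intro j
  simp only [Matrix.of_apply]
  refine continuousAt_cov _ _ _ _ (halfIdx i) (halfIdx j) ?_
  rcases eq_or_ne (halfIdx i) (halfIdx j) with h | h
  · exact Or.inl h
  · exact Or.inr fun hc => h (hinj hc)

end PTaux

end

noncomputable section
namespace PTaux
open Filter Topology

variable {d L : ℕ} [NeZero L] {t t' μ β : ℝ}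

def intC (d L : ℕ) [NeZero L] (t t' μ β : ℝ) (n : ℕ) (X : Fin n → Quad d L) : ℂ :=
  ∫ sv in (Set.univ.pi fun _ : Fin n => Set.Icc (0 : ℝ) β), detTerm d L t t' μ β n X sv

def sumC (d L : ℕ) [NeZero L] (t t' μ β : ℝ) (h : ℝ) (M : ℕ) (n : ℕ)
    (X : Fin n → Quad d L) : ℂ :=
  (1 / (h : ℂ)) ^ n * ∑ sv : Fin n → Fin M, detTerm d L t t' μ β n X fun j => (sv j : ℝ) / h

lemma mem_Ico_floor {c : ℝ} (hc : 0 < c) (k : ℕ) (x : ℝ) :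
    x ∈ Set.Ico ((k : ℝ) * c) (((k : ℝ) + 1) * c) ↔ 0 ≤ x ∧ ⌊x / c⌋₊ = k := by
  constructor
  · rintro ⟨h1, h2⟩
    have hx : (0:ℝ) ≤ x := le_trans (by positivity) h1
    refine ⟨hx, ?_⟩
    rw [Nat.floor_eq_iff (div_nonneg hx hc.le)]
    refine ⟨(le_div_iff₀ hc).2 h1, ?_⟩
    rw [div_lt_iff₀ hc]
    exact h2
  · rintro ⟨hx, rfl⟩
    constructor
    · exact (le_div_iff₀ hc).1 (Nat.floor_le (div_nonneg hx hc.le))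
    · have h2 : x / c < ⌊x / c⌋₊ + 1 := Nat.lt_floor_add_one _
      calc x = (x / c) * c := (div_mul_cancel₀ x hc.ne').symm
        _ < ((⌊x / c⌋₊ : ℝ) + 1) * c := mul_lt_mul_of_pos_right h2 hc

def gridPt (β : ℝ) (M : ℕ) {n : ℕ} (s : Fin n → ℝ) : Fin n → ℝ :=
  fun j => (⌊s j / (β / M)⌋₊ : ℝ) * (β / M)

def cellOf (β : ℝ) (M : ℕ) {n : ℕ} (sv : Fin n → Fin M) : Set (Fin n → ℝ) :=
  Set.univ.pi fun j => Set.Ico ((sv j : ℝ) * (β / M)) (((sv j : ℝ) + 1) * (β / M))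

lemma measurable_gridPt (β : ℝ) (M : ℕ) {n : ℕ} : Measurable (gridPt β M (n := n)) := by
  refine measurable_pi_lambda _ fun j => ?_
  have m1 : Measurable fun s : Fin n → ℝ => ⌊s j / (β / M)⌋₊ :=
    Nat.measurable_floor.comp ((measurable_pi_apply j).div_const _)
  exact (measurable_from_top.comp m1).mul_const _

lemma volume_not_injective_eq_zero (n : ℕ) :
    volume {s : Fin n → ℝ | ¬ Function.Injective s} = 0 := by
  have hplane : ∀ a b : Fin n, a ≠ b → volume {s : Fin n → ℝ | s a = s b} = 0 := by
    intro a b hab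
    have hker : {s : Fin n → ℝ | s a = s b} =
        (LinearMap.ker ((LinearMap.proj a : (Fin n → ℝ) →ₗ[ℝ] ℝ) - LinearMap.proj b) :
          Submodule ℝ (Fin n → ℝ)) := by
      ext s
      simp [LinearMap.mem_ker, sub_eq_zero]
    rw [hker]
    refine Measure.addHaar_submodule _ _ ?_
    rw [Ne, Submodule.eq_top_iff']
    push_neg
    refine ⟨Pi.single a 1, ?_⟩
    simp [LinearMap.mem_ker, sub_eq_zero, Pi.single_apply, Ne.symm hab]
  have hsub : {s : Fin n → ℝ | ¬ Function.Injective s} ⊆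
      ⋃ a : Fin n, ⋃ b : Fin n, ⋃ _ : a ≠ b, {s : Fin n → ℝ | s a = s b} := by
    intro s hs
    simp only [Set.mem_setOf_eq, Function.Injective] at hs
    push_neg at hs
    obtain ⟨a, b, hab, hne⟩ := hs
    exact Set.mem_iUnion.2 ⟨a, Set.mem_iUnion.2 ⟨b, Set.mem_iUnion.2 ⟨hne, hab⟩⟩⟩
  refine measure_mono_null hsub ?_
  exact measure_iUnion_null fun a => measure_iUnion_null fun b =>
    measure_iUnion_null fun hab => hplane a b hab

end PTaux

namespace PTaux
open Filter Topology

variable {d L : ℕ} [NeZero L] {t t' μ β : ℝ}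

lemma tendsto_sumC (hβ : 0 < β) (n : ℕ) (X : Fin n → Quad d L) :
    Tendsto (fun M : ℕ => sumC d L t t' μ β ((M : ℝ) / β) M n X) atTop
      (𝓝 (intC d L t t' μ β n X)) := by
  set F : (Fin n → ℝ) → ℂ := detTerm d L t t' μ β n X with hF
  have hmeas : Measurable F := measurable_detTerm n X
  set pIco : Set (Fin n → ℝ) := Set.univ.pi fun _ : Fin n => Set.Ico (0:ℝ) β with hpIco
  have hpIcoMeas : MeasurableSet pIco := MeasurableSet.univ_pi fun _ => measurableSet_Ico
  have hvolIco : volume pIco = ENNReal.ofReal β ^ n := by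
    rw [hpIco, volume_pi_pi]
    simp [Real.volume_Ico]
  -- grid points lie in the cube
  have hgmem : ∀ (M : ℕ) (s : Fin n → ℝ), s ∈ pIco → ∀ j, gridPt β M s j ∈ Set.Icc (0:ℝ) β := by
    intro M s hs j
    have hsj : s j ∈ Set.Ico (0:ℝ) β := hs j (Set.mem_univ j)
    rcases Nat.eq_zero_or_pos M with rfl | hM
    · have h0 : gridPt β 0 s j = 0 := by simp [gridPt]
      rw [h0]
      exact Set.mem_Icc.2 ⟨le_rfl, hβ.le⟩
    · have hMR : (0:ℝ) < (M:ℝ) := by exact_mod_cast hM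
      have hc : 0 < β / (M:ℝ) := div_pos hβ hMR
      refine Set.mem_Icc.2 ⟨by unfold gridPt; positivity, ?_⟩
      show (⌊s j / (β / (M:ℝ))⌋₊ : ℝ) * (β / (M:ℝ)) ≤ β
      calc (⌊s j / (β/(M:ℝ))⌋₊ : ℝ) * (β/(M:ℝ))
          ≤ (s j / (β/(M:ℝ))) * (β/(M:ℝ)) :=
            mul_le_mul_of_nonneg_right (Nat.floor_le (div_nonneg hsj.1 hc.le)) hc.le
        _ = s j := div_mul_cancel₀ _ hc.ne'
        _ ≤ β := hsj.2.le
  -- pointwise convergence at injective points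
  have hptwise : ∀ s : Fin n → ℝ, s ∈ pIco → Function.Injective s →
      Tendsto (fun M : ℕ => F (gridPt β M s)) atTop (𝓝 (F s)) := by
    intro s hs hinj
    refine ((continuousAt_detTerm n X hinj).tendsto).comp ?_
    rw [tendsto_pi_nhds]
    intro j
    have hsj : s j ∈ Set.Ico (0:ℝ) β := hs j (Set.mem_univ j)
    have hub : ∀ᶠ M : ℕ in atTop, gridPt β M s j ≤ s j := by
      filter_upwards [eventually_ge_atTop 1] with M hM
      have hMR : (0:ℝ) < (M:ℝ) := by exact_mod_cast hM
      have hc : 0 < β / (M:ℝ) := div_pos hβ hMR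
      show (⌊s j / (β / (M:ℝ))⌋₊ : ℝ) * (β / (M:ℝ)) ≤ s j
      calc (⌊s j / (β/(M:ℝ))⌋₊ : ℝ) * (β/(M:ℝ))
          ≤ (s j / (β/(M:ℝ))) * (β/(M:ℝ)) :=
            mul_le_mul_of_nonneg_right (Nat.floor_le (div_nonneg hsj.1 hc.le)) hc.le
        _ = s j := div_mul_cancel₀ _ hc.ne'
    have hlb : ∀ᶠ M : ℕ in atTop, s j - β / (M:ℝ) ≤ gridPt β M s j := by
      filter_upwards [eventually_ge_atTop 1] with M hM
      have hMR : (0:ℝ) < (M:ℝ) := by exact_mod_cast hM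
      have hc : 0 < β / (M:ℝ) := div_pos hβ hMR
      have h2 : s j / (β/(M:ℝ)) < ⌊s j / (β/(M:ℝ))⌋₊ + 1 := Nat.lt_floor_add_one _
      have h3 := mul_lt_mul_of_pos_right h2 hc
      rw [div_mul_cancel₀ _ hc.ne'] at h3
      show s j - β / (M:ℝ) ≤ (⌊s j / (β / (M:ℝ))⌋₊ : ℝ) * (β / (M:ℝ))
      nlinarith [h3]
    have hlimlb : Tendsto (fun M : ℕ => s j - β / (M:ℝ)) atTop (𝓝 (s j)) := by
      simpa using tendsto_const_nhds.sub (tendsto_const_div_atTop_nhds_zero_nat β)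
    exact tendsto_of_tendsto_of_tendsto_of_le_of_le' hlimlb tendsto_const_nhds hlb hub
  -- dominated convergence
  have hdom : Tendsto (fun M : ℕ => ∫ s in pIco, F (gridPt β M s)) atTop
      (𝓝 (∫ s in pIco, F s)) := by
    refine tendsto_integral_of_dominated_convergence (fun _ => bnd d L t t' μ β n)
      (fun M => ((hmeas.comp (measurable_gridPt β M)).aestronglyMeasurable)) ?_ ?_ ?_
    · refine integrableOn_const ?_
      rw [hvolIco]
      exact (ENNReal.pow_lt_top ENNReal.ofReal_lt_top).ne
    · intro M
      filter_upwards [ae_restrict_mem hpIcoMeas] with s hs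
      exact detTerm_abs_le n X (hgmem M s hs)
    · have h1 : ∀ᵐ s : Fin n → ℝ, Function.Injective s := by
        rw [MeasureTheory.ae_iff]
        exact volume_not_injective_eq_zero n
      filter_upwards [ae_restrict_mem hpIcoMeas, ae_restrict_of_ae h1] with s hs hinj
      exact hptwise s hs hinj
  -- identify the limit
  have hlimEq : (∫ s in pIco, F s) = intC d L t t' μ β n X := by
    have hae := MeasureTheory.Measure.pi_Ico_ae_eq_pi_Icc
      (μ := fun _ : Fin n => (volume : Measure ℝ)) (s := Set.univ)
      (f := fun _ => (0:ℝ)) (g := fun _ => β)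
    rw [← MeasureTheory.volume_pi] at hae
    exact setIntegral_congr_set hae
  -- Riemann sum identity
  have hriem : ∀ᶠ M : ℕ in atTop,
      (∫ s in pIco, F (gridPt β M s)) = sumC d L t t' μ β ((M:ℝ)/β) M n X := by
    filter_upwards [eventually_ge_atTop 1] with M hM
    have hMR : (0:ℝ) < (M:ℝ) := by exact_mod_cast hM
    have hc : 0 < β / (M:ℝ) := div_pos hβ hMR
    have hcellMeas : ∀ sv : Fin n → Fin M, MeasurableSet (cellOf β M sv) :=
      fun sv => MeasurableSet.univ_pi fun j => measurableSet_Ico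
    have hcover : pIco = ⋃ sv ∈ (Finset.univ : Finset (Fin n → Fin M)), cellOf β M sv := by
      ext s
      simp only [Set.mem_iUnion, Finset.mem_univ, exists_true_left]
      constructor
      · intro hs
        have hsj : ∀ j, s j ∈ Set.Ico (0:ℝ) β := fun j => hs j (Set.mem_univ j)
        have hflt : ∀ j, ⌊s j / (β/(M:ℝ))⌋₊ < M := by
          intro j
          rw [Nat.floor_lt (div_nonneg (hsj j).1 hc.le), div_lt_iff₀ hc]
          calc s j < β := (hsj j).2
            _ = (M:ℝ) * (β / (M:ℝ)) := by field_simp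
        refine ⟨fun j => ⟨⌊s j / (β/(M:ℝ))⌋₊, hflt j⟩, ?_⟩
        intro j _
        exact (mem_Ico_floor hc _ _).2 ⟨(hsj j).1, rfl⟩
      · rintro ⟨sv, hsv⟩
        intro j _
        have h1 := hsv j (Set.mem_univ j)
        constructor
        · exact le_trans (by positivity) h1.1
        · calc s j < ((sv j : ℝ) + 1) * (β/(M:ℝ)) := h1.2
            _ ≤ (M:ℝ) * (β/(M:ℝ)) := by
                have h2 : ((sv j : ℕ) : ℕ) + 1 ≤ M := (sv j).isLt
                have h3 : ((sv j : ℝ) + 1) ≤ (M:ℝ) := by exact_mod_cast h2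
                exact mul_le_mul_of_nonneg_right h3 hc.le
            _ = β := by field_simp
    have hdisj : Set.Pairwise (↑(Finset.univ : Finset (Fin n → Fin M)) : Set (Fin n → Fin M))
        (Function.onFun Disjoint fun sv => cellOf β M sv) := by
      intro sv _ sv' _ hne
      refine Set.disjoint_left.2 fun s hs hs' => hne ?_
      funext j
      have h1 := (mem_Ico_floor hc (sv j) (s j)).1 (hs j (Set.mem_univ j))
      have h2 := (mem_Ico_floor hc (sv' j) (s j)).1 (hs' j (Set.mem_univ j))
      exact Fin.ext (h1.2.symm.trans h2.2)
    have hvolcell : ∀ sv : Fin n → Fin M,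
        volume (cellOf β M sv) = ENNReal.ofReal (β/(M:ℝ)) ^ n := by
      intro sv
      unfold cellOf
      rw [volume_pi_pi]
      have he : ∀ j : Fin n, volume (Set.Ico ((sv j : ℝ) * (β/(M:ℝ)))
          (((sv j : ℝ) + 1) * (β/(M:ℝ)))) = ENNReal.ofReal (β/(M:ℝ)) := by
        intro j
        rw [Real.volume_Ico]
        congr 1
        ring
      simp [he]
    have hgconst : ∀ (sv : Fin n → Fin M) (s : Fin n → ℝ), s ∈ cellOf β M sv →
        gridPt β M s = fun j => (sv j : ℝ) * (β/(M:ℝ)) := by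
      intro sv s hs
      funext j
      have h1 := (mem_Ico_floor hc (sv j) (s j)).1 (hs j (Set.mem_univ j))
      show (⌊s j / (β / (M:ℝ))⌋₊ : ℝ) * (β / (M:ℝ)) = (sv j : ℝ) * (β/(M:ℝ))
      rw [h1.2]
    have hintcell : ∀ sv : Fin n → Fin M,
        (∫ s in cellOf β M sv, F (gridPt β M s)) =
          ((β/(M:ℝ))^n : ℝ) • F (fun j => (sv j : ℝ) * (β/(M:ℝ))) := by
      intro sv
      calc (∫ s in cellOf β M sv, F (gridPt β M s))
          = ∫ _s in cellOf β M sv, F (fun j => (sv j : ℝ) * (β/(M:ℝ))) :=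
            setIntegral_congr_fun (hcellMeas sv) (fun s hs => by rw [hgconst sv s hs])
        _ = ((β/(M:ℝ))^n : ℝ) • F (fun j => (sv j : ℝ) * (β/(M:ℝ))) := by
            rw [setIntegral_const, measureReal_def, hvolcell]
            congr 1
            rw [ENNReal.toReal_pow, ENNReal.toReal_ofReal hc.le]
    have hintegrable : ∀ sv : Fin n → Fin M,
        IntegrableOn (fun s => F (gridPt β M s)) (cellOf β M sv) volume := by
      intro sv
      have hfin : volume (cellOf β M sv) < ⊤ := by
        rw [hvolcell]
        exact ENNReal.pow_lt_top ENNReal.ofReal_lt_top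
      have hconst : IntegrableOn (fun _ : Fin n → ℝ => F (fun j => (sv j : ℝ) * (β/(M:ℝ))))
          (cellOf β M sv) volume := integrableOn_const hfin.ne
      refine hconst.congr_fun ?_ (hcellMeas sv)
      intro s hs
      show F (fun j => (sv j : ℝ) * (β/(M:ℝ))) = F (gridPt β M s)
      rw [hgconst sv s hs]
    calc (∫ s in pIco, F (gridPt β M s))
        = ∑ sv : Fin n → Fin M, ∫ s in cellOf β M sv, F (gridPt β M s) := by
          rw [hcover]
          exact integral_biUnion_finset Finset.univ (fun sv _ => hcellMeas sv) hdisj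
            (fun sv _ => hintegrable sv)
      _ = ∑ sv : Fin n → Fin M, ((β/(M:ℝ))^n : ℝ) • F (fun j => (sv j : ℝ) * (β/(M:ℝ))) :=
          Finset.sum_congr rfl fun sv _ => hintcell sv
      _ = sumC d L t t' μ β ((M:ℝ)/β) M n X := by
          unfold sumC
          rw [Finset.mul_sum]
          refine Finset.sum_congr rfl fun sv _ => ?_
          rw [Complex.real_smul]
          congr 1
          · push_cast
            rw [one_div, inv_div]
          · congr 1
            funext j
            rw [div_div_eq_mul_div, mul_div_assoc]
  rw [← hlimEq]
  exact hdom.congr' hriem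

end PTaux

end

noncomputable section
namespace PTaux
open Filter Topology

variable (d L : ℕ) [NeZero L] (t t' μ β : ℝ)

def genCoef (n : ℕ) (c : (Fin n → Quad d L) → ℂ) (w : Quad d L → ℂ) : ℂ :=
  (1 / n.factorial : ℂ) * ∑ X : Fin n → Quad d L, (∏ j : Fin n, -w (X j)) * c X

def Afun (q : Quad d L) : ℂ :=
  if q.1 = q.2.1 ∧ q.2.2.1 = q.2.2.2 ∧ q.1 = q.2.2.1 then 1 else 0

def Bfun (X1 : Quad d L) (q : Quad d L) : ℂ :=
  (if q = X1 then 1 else 0) + (if (q.2.2.1, q.2.2.2, q.1, q.2.1) = X1 then 1 else 0)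

lemma lamCoef_dir (X1 : Quad d L) (ε : ℝ) (q : Quad d L) :
    lamCoef d L (fun q' => if q' = X1 then ε else 0) q
      = Afun d L q + (ε : ℂ) * Bfun d L X1 q := by
  unfold lamCoef Afun Bfun
  push_cast
  simp only [apply_ite Complex.ofReal, Complex.ofReal_zero, Complex.ofReal_one]
  split_ifs <;> ring

lemma coefTerm_eq (n : ℕ) (w : Quad d L → ℂ) :
    coefTerm d L t t' μ β n w = genCoef d L n (intC d L t t' μ β n) w := rfl

lemma coefTermD_eq (h : ℝ) (M : ℕ) (n : ℕ) (w : Quad d L → ℂ) :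
    coefTermD d L t t' μ β h M n w = genCoef d L n (sumC d L t t' μ β h M n) w := by
  unfold coefTermD genCoef sumC
  congr 1
  refine Finset.sum_congr rfl fun X _ => ?_
  have hp : (∏ j : Fin n, -(1 / (h : ℂ)) * w (X j))
      = (1 / (h : ℂ)) ^ n * ∏ j : Fin n, -w (X j) := by
    calc (∏ j : Fin n, -(1 / (h : ℂ)) * w (X j))
        = ∏ j : Fin n, (1 / (h : ℂ)) * -w (X j) := Finset.prod_congr rfl fun j _ => by ring
      _ = (∏ _j : Fin n, (1 / (h : ℂ))) * ∏ j : Fin n, -w (X j) := Finset.prod_mul_distrib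
      _ = (1 / (h : ℂ)) ^ n * ∏ j : Fin n, -w (X j) := by
          rw [Finset.prod_const, Finset.card_univ, Fintype.card_fin]
  simp only [hp]
  rw [← Finset.mul_sum]
  ring

def dGen (X1 : Quad d L) (n : ℕ) (c : (Fin n → Quad d L) → ℂ) : ℂ :=
  (1 / n.factorial : ℂ) * ∑ X : Fin n → Quad d L,
    (∑ k : Fin n, (∏ j ∈ Finset.univ.erase k, -Afun d L (X j)) * -Bfun d L X1 (X k)) * c X

lemma hasDerivAt_genCoef (X1 : Quad d L) (n : ℕ) (c : (Fin n → Quad d L) → ℂ) :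
    HasDerivAt (fun ε : ℝ => genCoef d L n c fun q => Afun d L q + (ε : ℂ) * Bfun d L X1 q)
      (dGen d L X1 n c) 0 := by
  unfold genCoef dGen
  refine HasDerivAt.const_mul _ (HasDerivAt.fun_sum fun X _ => ?_)
  have h0 : HasDerivAt (fun ε : ℝ => (ε : ℂ)) 1 0 := by
    simpa using (hasDerivAt_id (0:ℝ)).ofReal_comp
  have hfac : ∀ j ∈ (Finset.univ : Finset (Fin n)), HasDerivAt
      (fun ε : ℝ => -(Afun d L (X j) + (ε : ℂ) * Bfun d L X1 (X j)))
      (-Bfun d L X1 (X j)) 0 := by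
    intro j _
    have h1 := ((h0.mul_const (Bfun d L X1 (X j))).const_add (Afun d L (X j))).fun_neg
    simpa using h1
  have h2 := (HasDerivAt.fun_finsetProd hfac).mul_const (c X)
  simpa [smul_eq_mul] using h2

def DLog (X1 : Quad d L) (n : ℕ) (c : (m : ℕ) → (Fin m → Quad d L) → ℂ) : ℂ :=
  ∑ j ∈ Finset.Icc 1 (n + 1), (-1 : ℂ) ^ (j - 1) / (j : ℂ) *
    ∑ m ∈ (Finset.Nat.antidiagonalTuple j (n + 1)).filter fun m => ∀ k, 1 ≤ m k,
      ∑ k : Fin j, (∏ k' ∈ Finset.univ.erase k,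
        genCoef d L (m k') (c (m k')) (Afun d L)) * dGen d L X1 (m k) (c (m k))

lemma hasDerivAt_logComb (X1 : Quad d L) (n : ℕ) (c : (m : ℕ) → (Fin m → Quad d L) → ℂ) :
    HasDerivAt (fun ε : ℝ =>
      logComb (fun m lam => genCoef d L m (c m) (lamCoef d L lam)) n
        fun q => if q = X1 then ε else 0)
      (DLog d L X1 n c) 0 := by
  have hw : ∀ ε : ℝ, (lamCoef d L fun q' => if q' = X1 then ε else 0)
      = fun q => Afun d L q + (ε : ℂ) * Bfun d L X1 q :=
    fun ε => funext fun q => lamCoef_dir d L X1 ε q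
  unfold logComb DLog
  simp only [hw]
  refine HasDerivAt.fun_sum fun j _ => HasDerivAt.const_mul _ (HasDerivAt.fun_sum fun m _ => ?_)
  have h2 := HasDerivAt.fun_finsetProd (u := (Finset.univ : Finset (Fin j)))
    (f := fun k (ε : ℝ) => genCoef d L (m k) (c (m k)) fun q => Afun d L q + (ε : ℂ) * Bfun d L X1 q)
    (f' := fun k => dGen d L X1 (m k) (c (m k)))
    (fun k _ => hasDerivAt_genCoef d L X1 (m k) (c (m k)))
  simpa [smul_eq_mul] using h2

lemma Gcont_eq : Gcont d L t t' μ β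
    = fun m lam => genCoef d L m (intC d L t t' μ β m) (lamCoef d L lam) := rfl

lemma Gdisc_eq (h : ℝ) (M : ℕ) : Gdisc d L t t' μ β h M
    = fun m lam => genCoef d L m (sumC d L t t' μ β h M m) (lamCoef d L lam) := by
  funext m lam
  exact coefTermD_eq d L t t' μ β h M m (lamCoef d L lam)

lemma aCont_eq (X1 : Quad d L) (n : ℕ) :
    aCont d L t t' μ β X1 n = -(1 / (β : ℂ)) * DLog d L X1 n (intC d L t t' μ β) := by
  unfold aCont
  rw [Gcont_eq d L t t' μ β, (hasDerivAt_logComb d L X1 n (intC d L t t' μ β)).deriv]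

lemma aDisc_eq (h : ℝ) (M : ℕ) (X1 : Quad d L) (n : ℕ) :
    aDisc d L t t' μ β h M X1 n
      = -(1 / (β : ℂ)) * DLog d L X1 n (sumC d L t t' μ β h M) := by
  unfold aDisc
  rw [Gdisc_eq d L t t' μ β h M, (hasDerivAt_logComb d L X1 n (sumC d L t t' μ β h M)).deriv]

lemma tendsto_genCoef (hβ : 0 < β) (m : ℕ) (w : Quad d L → ℂ) :
    Tendsto (fun M : ℕ => genCoef d L m (sumC d L t t' μ β ((M:ℝ)/β) M m) w) atTop
      (𝓝 (genCoef d L m (intC d L t t' μ β m) w)) := by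
  unfold genCoef
  exact Filter.Tendsto.const_mul _ (tendsto_finset_sum _ fun X _ =>
    Filter.Tendsto.const_mul _ (tendsto_sumC hβ m X))

lemma tendsto_dGen (hβ : 0 < β) (X1 : Quad d L) (m : ℕ) :
    Tendsto (fun M : ℕ => dGen d L X1 m (sumC d L t t' μ β ((M:ℝ)/β) M m)) atTop
      (𝓝 (dGen d L X1 m (intC d L t t' μ β m))) := by
  unfold dGen
  exact Filter.Tendsto.const_mul _ (tendsto_finset_sum _ fun X _ =>
    Filter.Tendsto.const_mul _ (tendsto_sumC hβ m X))

lemma tendsto_DLog (hβ : 0 < β) (X1 : Quad d L) (n : ℕ) :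
    Tendsto (fun M : ℕ => DLog d L X1 n (sumC d L t t' μ β ((M:ℝ)/β) M)) atTop
      (𝓝 (DLog d L X1 n (intC d L t t' μ β))) := by
  unfold DLog
  refine tendsto_finset_sum _ fun j _ => Filter.Tendsto.const_mul _ ?_
  refine tendsto_finset_sum _ fun m _ => tendsto_finset_sum _ fun k _ =>
    Filter.Tendsto.mul ?_ ?_
  · exact tendsto_finset_prod _ fun k' _ => tendsto_genCoef d L t t' μ β hβ (m k') (Afun d L)
  · exact tendsto_dGen d L t t' μ β hβ X1 (m k)

end PTaux
end


/-- Convergence of the discretized coefficients to the continuum ones: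
`a_{h,n} → a_n` as `h → ∞` along `βh = M ∈ ℕ` (so `h = M/β`, `M → ∞`). -/
theorem discretized_coefficients_tendsto (d L : ℕ) [NeZero L] (t t' μ β : ℝ)
    (hβ : 0 < β) (x1 x2 y1 y2 : Fin d → ZMod L) (n : ℕ) :
    Filter.Tendsto
      (fun M : ℕ => aDisc d L t t' μ β ((M : ℝ) / β) M (x1, x2, y1, y2) n)
      Filter.atTop (nhds (aCont d L t t' μ β (x1, x2, y1, y2) n)) := by
  have h1 : ∀ M : ℕ, aDisc d L t t' μ β ((M : ℝ) / β) M (x1, x2, y1, y2) n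
      = -(1 / (β : ℂ)) *
        PTaux.DLog d L (x1, x2, y1, y2) n (PTaux.sumC d L t t' μ β ((M:ℝ)/β) M) :=
    fun M => PTaux.aDisc_eq d L t t' μ β ((M:ℝ)/β) M _ n
  rw [PTaux.aCont_eq d L t t' μ β (x1, x2, y1, y2) n]
  simp only [h1]
  exact Filter.Tendsto.const_mul _ (PTaux.tendsto_DLog d L t t' μ β hβ (x1, x2, y1, y2) n)
end

section
/- The power series f(x) := ∑_{n=0}^∞ (4/(3n+4)) · binom(3n+4, n) · x^n has radius of convergence 4/27; moreover f converges at x = 4/27 and f(4/27) = 81/16. -/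
open Filter Finset

noncomputable def Bc (n r : ℕ) : ℝ :=
  (r : ℝ) / (3 * (n : ℝ) + r) * ((3 * n + r).choose n : ℝ)

lemma Bc_nonneg (n r : ℕ) : 0 ≤ Bc n r := by unfold Bc; positivity

lemma Bc_rec (n r : ℕ) : Bc (n + 1) (r + 1) = Bc (n + 1) r + Bc n (r + 3) := by
  have hp : (3 * (n + 1) + (r + 1)).choose (n + 1)
      = (3 * n + r + 3).choose n + (3 * n + r + 3).choose (n + 1) := by
    rw [show 3 * (n + 1) + (r + 1) = (3 * n + r + 3) + 1 by omega]
    exact Nat.choose_succ_succ _ _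
  have habs : ((3 * n + r + 3).choose (n + 1)) * (n + 1)
      = ((3 * n + r + 3).choose n) * (2 * n + r + 3) := by
    rw [Nat.choose_succ_right_eq]; congr 1; omega
  have habs' : ((3 * n + r + 3).choose (n + 1) : ℝ) * ((n : ℝ) + 1)
      = ((3 * n + r + 3).choose n : ℝ) * (2 * (n : ℝ) + r + 3) := by
    exact_mod_cast habs
  unfold Bc
  rw [show 3 * (n + 1) + r = 3 * n + r + 3 by omega,
    show 3 * n + (r + 3) = 3 * n + r + 3 by omega, hp]
  push_cast
  have d1 : (3 * ((n : ℝ) + 1) + ((r : ℝ) + 1)) ≠ 0 := by positivity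
  have d2 : (3 * ((n : ℝ) + 1) + (r : ℝ)) ≠ 0 := by positivity
  have d3 : (3 * (n : ℝ) + ((r : ℝ) + 3)) ≠ 0 := by positivity
  field_simp
  linear_combination (3*(3*(n:ℝ)+(r:ℝ)+3)) * habs'

noncomputable def wt (r n : ℕ) : ℝ := Bc n r * (1/3 : ℝ) ^ n * (2/3 : ℝ) ^ (2 * n + r)

lemma wt_nonneg (r n : ℕ) : 0 ≤ wt r n := by
  unfold wt; have := Bc_nonneg n r; positivity

lemma wt_zero (n : ℕ) : wt 0 n = 0 := by simp [wt, Bc]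

lemma wt_zero_n (r : ℕ) : wt (r + 1) 0 = (2/3 : ℝ) ^ (r + 1) := by
  have h : ((r : ℝ) + 1) ≠ 0 := by positivity
  simp [wt, Bc]
  field_simp
  exact h

lemma wt_rec (r n : ℕ) : wt (r + 1) (n + 1) = 2/3 * wt r (n + 1) + 1/3 * wt (r + 3) n := by
  unfold wt
  rw [show 2 * (n + 1) + (r + 1) = (2 * n + r) + 3 by omega,
    show 2 * (n + 1) + r = (2 * n + r) + 2 by omega,
    show 2 * n + (r + 3) = (2 * n + r) + 3 by omega, Bc_rec]
  ring

lemma PS_le_one : ∀ N r : ℕ, ∑ n ∈ Finset.range N, wt r n ≤ 1 := by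
  intro N
  induction N with
  | zero => intro r; simp
  | succ N ihN =>
    intro r
    induction r with
    | zero => simp [wt_zero]
    | succ r ihr =>
      rw [Finset.sum_range_succ']
      simp only [wt_rec]
      rw [Finset.sum_add_distrib, ← Finset.mul_sum, ← Finset.mul_sum, wt_zero_n]
      have h3 : ∑ i ∈ Finset.range N, wt (r + 3) i ≤ 1 := ihN (r + 3)
      rcases Nat.eq_zero_or_pos r with hr | hr
      · subst hr
        have hz : ∑ i ∈ Finset.range N, wt 0 (i + 1) = 0 := by simp [wt_zero]
        rw [hz]
        norm_num
        linarith
      · obtain ⟨k, rfl⟩ := Nat.exists_eq_succ_of_ne_zero hr.ne'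
        have h1 : ∑ i ∈ Finset.range (N + 1), wt (k + 1) i ≤ 1 := ihr
        rw [Finset.sum_range_succ', wt_zero_n] at h1
        have hps : (2/3 : ℝ) ^ (k + 1 + 1) = 2/3 * (2/3 : ℝ) ^ (k + 1) := by ring
        simp only [Nat.succ_eq_add_one]
        nlinarith [pow_nonneg (by norm_num : (0:ℝ) ≤ 2/3) (k + 1)]

lemma wt_summable (r : ℕ) : Summable (wt r) :=
  summable_of_sum_range_le (wt_nonneg r) (fun N => PS_le_one N r)

noncomputable def W (r : ℕ) : ℝ := ∑' n, wt r n

lemma W_nonneg (r : ℕ) : 0 ≤ W r := tsum_nonneg (wt_nonneg r)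

lemma W_le_one (r : ℕ) : W r ≤ 1 :=
  Summable.tsum_le_of_sum_range_le (wt_summable r) (fun N => PS_le_one N r)

lemma W_zero : W 0 = 0 := by
  have : wt 0 = fun _ => (0:ℝ) := funext wt_zero
  rw [W, this, tsum_zero]

lemma W_rec (r : ℕ) :
    W (r + 1) = (2/3 : ℝ) ^ (r + 1) + 2/3 * (W r - wt r 0) + 1/3 * W (r + 3) := by
  have h1 : W (r + 1) = wt (r + 1) 0 + ∑' n, wt (r + 1) (n + 1) :=
    Summable.tsum_eq_zero_add (wt_summable (r + 1))
  have hs1 : Summable (fun n => wt r (n + 1)) := (summable_nat_add_iff 1).2 (wt_summable r)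
  have h2 : ∑' n, wt (r + 1) (n + 1)
      = 2/3 * (∑' n, wt r (n + 1)) + 1/3 * W (r + 3) := by
    rw [show (fun n => wt (r+1) (n+1)) = fun n => 2/3 * wt r (n+1) + 1/3 * wt (r+3) n from
      funext fun n => wt_rec r n]
    rw [Summable.tsum_add (hs1.mul_left _) ((wt_summable (r + 3)).mul_left _),
      tsum_mul_left, tsum_mul_left]
    rfl
  have h4 : ∑' n, wt r (n + 1) = W r - wt r 0 := by
    have h := Summable.tsum_eq_zero_add (wt_summable r)
    rw [W]; linarith [h]
  rw [h1, h2, h4, wt_zero_n]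
  ring

noncomputable def Y (r : ℕ) : ℝ := if r = 0 then 1 else W r

lemma Y_zero : Y 0 = 1 := by simp [Y]

lemma Y_succ (r : ℕ) : Y (r + 1) = W (r + 1) := by simp [Y]

lemma Y_nonneg (r : ℕ) : 0 ≤ Y r := by
  unfold Y; split
  · norm_num
  · exact W_nonneg r

lemma Y_le_one (r : ℕ) : Y r ≤ 1 := by
  unfold Y; split
  · norm_num
  · exact W_le_one r

lemma Y_rec (r : ℕ) : Y (r + 3) = 3 * Y (r + 1) - 2 * Y r := by
  rcases r with _ | r
  · have h := W_rec 0
    rw [W_zero] at h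
    have hwt : wt 0 0 = 0 := wt_zero 0
    rw [hwt] at h
    show Y 3 = 3 * Y 1 - 2 * Y 0
    have e3 : Y 3 = W 3 := by simp [Y]
    have e1 : Y 1 = W 1 := by simp [Y]
    rw [e3, e1, Y_zero]
    norm_num at h
    linarith
  · have h := W_rec (r + 1)
    rw [wt_zero_n r] at h
    show Y (r + 4) = 3 * Y (r + 2) - 2 * Y (r + 1)
    rw [show r + 4 = (r + 3) + 1 from rfl, Y_succ, Y_succ, Y_succ]
    have hps : (2/3 : ℝ) ^ (r + 1 + 1) = 2/3 * (2/3 : ℝ) ^ (r + 1) := by ring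
    have : r + 1 + 3 = r + 4 := by omega
    rw [this] at h
    linarith [h]

lemma Y_eq_one : ∀ r, Y r = 1 := by
  -- second difference w
  have hwrec : ∀ m, (Y (m + 3) - 2 * Y (m + 2) + Y (m + 1))
      = (-2) * (Y (m + 2) - 2 * Y (m + 1) + Y m) := by
    intro m
    have h := Y_rec m
    linarith
  set w : ℕ → ℝ := fun m => Y (m + 2) - 2 * Y (m + 1) + Y m with hw
  have hwpow : ∀ m, w m = (-2 : ℝ) ^ m * w 0 := by
    intro m
    induction m with
    | zero => simp
    | succ m ih =>
      have : w (m + 1) = (-2) * w m := hwrec m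
      rw [this, ih]; ring
  have hbd : ∀ m, |w m| ≤ 4 := by
    intro m
    have hwm : w m = Y (m + 2) - 2 * Y (m + 1) + Y m := rfl
    rw [abs_le, hwm]
    constructor <;>
      nlinarith [Y_nonneg m, Y_le_one m, Y_nonneg (m+1), Y_le_one (m+1),
        Y_nonneg (m+2), Y_le_one (m+2)]
  have hw0 : w 0 = 0 := by
    by_contra h
    have habs : 0 < |w 0| := abs_pos.mpr h
    obtain ⟨m, hm⟩ := pow_unbounded_of_one_lt (4 / |w 0|) (by norm_num : (1:ℝ) < 2)
    have h1 : |w m| = 2 ^ m * |w 0| := by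
      rw [hwpow m, abs_mul, abs_pow, abs_neg, abs_two]
    have h2 : 4 < 2 ^ m * |w 0| := by
      rw [div_lt_iff₀ habs] at hm
      linarith
    linarith [hbd m, h1 ▸ hbd m]
  have hwall : ∀ m, w m = 0 := by
    intro m; rw [hwpow m, hw0]; ring
  -- first difference is constant
  have hv : ∀ m, Y (m + 1) - Y m = Y 1 - Y 0 := by
    intro m
    induction m with
    | zero => rfl
    | succ m ih =>
      have := hwall m
      simp only [hw] at this
      linarith
  have hY : ∀ m, Y m = 1 + m * (Y 1 - 1) := by
    intro m
    induction m with
    | zero => simp [Y_zero]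
    | succ m ih =>
      have := hv m
      rw [Y_zero] at this
      push_cast
      linarith
  have hv0 : Y 1 - 1 = 0 := by
    rcases lt_trichotomy (Y 1 - 1) 0 with h | h | h
    · exfalso
      obtain ⟨m, hm⟩ := exists_nat_gt (1 / (1 - Y 1))
      have hpos : 0 < 1 - Y 1 := by linarith
      rw [div_lt_iff₀ hpos] at hm
      have := hY m
      have := Y_nonneg m
      nlinarith
    · exact h
    · linarith [Y_le_one 1, hY 1]
  intro r
  rw [hY r, hv0]; ring

lemma W_four : W 4 = 1 := by
  have := Y_eq_one 4
  rwa [show (4:ℕ) = 3 + 1 from rfl, Y_succ] at this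

lemma wt_four (n : ℕ) : wt 4 n = 16/81 * ((4/27 : ℝ) ^ n * Bc n 4) := by
  unfold wt
  have h1 : (1/3 : ℝ) ^ n * (2/3 : ℝ) ^ (2 * n + 4) = 16/81 * (4/27 : ℝ) ^ n := by
    rw [pow_add, pow_mul, ← mul_assoc, ← mul_pow]
    norm_num
    ring
  calc Bc n 4 * (1/3 : ℝ) ^ n * (2/3 : ℝ) ^ (2 * n + 4)
      = Bc n 4 * ((1/3 : ℝ) ^ n * (2/3 : ℝ) ^ (2 * n + 4)) := by ring
    _ = Bc n 4 * (16/81 * (4/27 : ℝ) ^ n) := by rw [h1]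
    _ = 16/81 * ((4/27 : ℝ) ^ n * Bc n 4) := by ring

lemma coeff_eq (n : ℕ) :
    4 / (3 * (n : ℝ) + 4) * ((3 * n + 4).choose n : ℝ) = Bc n 4 := by
  simp [Bc]

lemma coeff_nonneg (n : ℕ) : 0 ≤ 4 / (3 * (n : ℝ) + 4) * ((3 * n + 4).choose n : ℝ) := by
  positivity

lemma coeff_bd (n : ℕ) :
    4 / (3 * (n : ℝ) + 4) * ((3 * n + 4).choose n : ℝ) * (4/27 : ℝ) ^ n ≤ 81/16 := by
  have h1 : wt 4 n ≤ 1 := by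
    have h2 : wt 4 n ≤ ∑ i ∈ Finset.range (n + 1), wt 4 i :=
      Finset.single_le_sum (fun i _ => wt_nonneg 4 i) (Finset.self_mem_range_succ n)
    exact h2.trans (PS_le_one (n + 1) 4)
  rw [coeff_eq]
  rw [wt_four] at h1
  linarith

-- ratio identity for the choose numbers
lemma choose_ratio (n : ℕ) :
    ((3 * n + 7).choose (n + 1) : ℝ) * (((n:ℝ) + 1) * ((2 * n + 5) * (2 * n + 6)))
      = ((3 * n + 4).choose n : ℝ) * ((3 * (n:ℝ) + 5) * ((3 * n + 6) * (3 * n + 7))) := by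
  have h1 : (3 * n + 4).choose n * (3 * n + 5) = (3 * n + 5).choose n * (2 * n + 5) := by
    have := Nat.choose_mul_succ_eq (3 * n + 4) n
    rw [show 3 * n + 4 + 1 = 3 * n + 5 by omega, show 3 * n + 5 - n = 2 * n + 5 by omega] at this
    exact this
  have h2 : (3 * n + 5).choose n * (3 * n + 6) = (3 * n + 6).choose n * (2 * n + 6) := by
    have := Nat.choose_mul_succ_eq (3 * n + 5) n
    rw [show 3 * n + 5 + 1 = 3 * n + 6 by omega, show 3 * n + 6 - n = 2 * n + 6 by omega] at this
    exact this
  have h3 : (3 * n + 7) * (3 * n + 6).choose n = (3 * n + 7).choose (n + 1) * (n + 1) := by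
    have := Nat.add_one_mul_choose_eq (3 * n + 6) n
    rw [show 3 * n + 6 + 1 = 3 * n + 7 by omega] at this
    exact this
  have h1' : ((3 * n + 4).choose n : ℝ) * (3 * (n:ℝ) + 5)
      = ((3 * n + 5).choose n : ℝ) * (2 * (n:ℝ) + 5) := by exact_mod_cast h1
  have h2' : ((3 * n + 5).choose n : ℝ) * (3 * (n:ℝ) + 6)
      = ((3 * n + 6).choose n : ℝ) * (2 * (n:ℝ) + 6) := by exact_mod_cast h2
  have h3' : (3 * (n:ℝ) + 7) * ((3 * n + 6).choose n : ℝ)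
      = ((3 * n + 7).choose (n + 1) : ℝ) * ((n:ℝ) + 1) := by exact_mod_cast h3
  linear_combination (-((2*(n:ℝ)+5) * (2*(n:ℝ)+6))) * h3'
    - ((3*(n:ℝ)+7) * (2*(n:ℝ)+5)) * h2' - ((3*(n:ℝ)+6) * (3*(n:ℝ)+7)) * h1'

lemma lower_bd : ∀ n : ℕ, (1:ℝ) / ((n:ℝ) + 1) ^ 3 ≤ ((3 * n + 4).choose n : ℝ) * (4/27 : ℝ) ^ n := by
  intro n
  induction n with
  | zero => norm_num
  | succ n ih =>
    have hcr := choose_ratio n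
    set a : ℝ := ((3 * n + 4).choose n : ℝ) with ha
    set d : ℝ := ((3 * n + 7).choose (n + 1) : ℝ) with hd
    clear_value a d
    have hD : (0:ℝ) < ((n:ℝ) + 1) * ((2 * n + 5) * (2 * n + 6)) := by positivity
    have hidx : 3 * (n + 1) + 4 = 3 * n + 7 := by omega
    rw [hidx]
    -- X := d * (4/27)^(n+1)
    have hXD : d * (4/27 : ℝ) ^ (n + 1) * (((n:ℝ) + 1) * ((2 * n + 5) * (2 * n + 6)))
        = (a * (4/27 : ℝ) ^ n) * (4/27 * ((3 * (n:ℝ) + 5) * ((3 * n + 6) * (3 * n + 7)))) := by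
      rw [pow_succ]
      nlinarith [hcr, pow_pos (by norm_num : (0:ℝ) < 4/27) n]
    have hA : 1 ≤ (a * (4/27 : ℝ) ^ n) * ((n:ℝ) + 1) ^ 3 := by
      rw [div_le_iff₀ (by positivity : (0:ℝ) < ((n:ℝ) + 1) ^ 3)] at ih
      linarith
    have hpoly : (((n:ℝ) + 1) * ((2 * n + 5) * (2 * n + 6))) * ((n:ℝ) + 1) ^ 3
        ≤ (4/27 * ((3 * (n:ℝ) + 5) * ((3 * n + 6) * (3 * n + 7)))) * ((n:ℝ) + 2) ^ 3 := by
      have hn : (0:ℝ) ≤ (n:ℝ) := Nat.cast_nonneg n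
      nlinarith [hn, sq_nonneg (n:ℝ), pow_nonneg hn 3, pow_nonneg hn 4, pow_nonneg hn 5,
        pow_nonneg hn 6]
    -- conclude
    push_cast
    rw [div_le_iff₀ (by positivity : (0:ℝ) < ((n:ℝ) + 1 + 1) ^ 3)]
    have hc : (0:ℝ) < (((n:ℝ) + 1) * ((2 * n + 5) * (2 * n + 6))) * ((n:ℝ) + 1) ^ 3 := by
      positivity
    have hprod : (((n:ℝ) + 1) * ((2 * n + 5) * (2 * n + 6))) * ((n:ℝ) + 1) ^ 3
        ≤ ((a * (4/27 : ℝ) ^ n) * ((n:ℝ) + 1) ^ 3)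
          * ((4/27 * ((3 * (n:ℝ) + 5) * ((3 * n + 6) * (3 * n + 7)))) * ((n:ℝ) + 2) ^ 3) := by
      have := mul_le_mul hA hpoly (le_of_lt hc) (by positivity)
      calc (((n:ℝ) + 1) * ((2 * n + 5) * (2 * n + 6))) * ((n:ℝ) + 1) ^ 3
          = 1 * ((((n:ℝ) + 1) * ((2 * n + 5) * (2 * n + 6))) * ((n:ℝ) + 1) ^ 3) := by ring
        _ ≤ _ := this
    have heq : ((a * (4/27 : ℝ) ^ n) * ((n:ℝ) + 1) ^ 3)
          * ((4/27 * ((3 * (n:ℝ) + 5) * ((3 * n + 6) * (3 * n + 7)))) * ((n:ℝ) + 2) ^ 3)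
        = (d * (4/27 : ℝ) ^ (n + 1) * ((n:ℝ) + 1 + 1) ^ 3)
          * ((((n:ℝ) + 1) * ((2 * n + 5) * (2 * n + 6))) * ((n:ℝ) + 1) ^ 3) := by
      have e : ((n:ℝ) + 1 + 1) ^ 3 = ((n:ℝ) + 2) ^ 3 := by ring
      rw [e]
      linear_combination (-(((n:ℝ) + 1) ^ 3 * ((n:ℝ) + 2) ^ 3)) * hXD
    rw [heq] at hprod
    have e : ((n:ℝ) + 1 + 1) ^ 3 = ((n:ℝ) + 2) ^ 3 := by ring
    rw [e, ← hd]
    nlinarith [hprod, hc]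

/-- The power series `f(x) = ∑ (4/(3n+4))·binom(3n+4,n)·xⁿ` has radius of convergence
`4/27`; it converges at `x = 4/27` with sum `81/16`. -/
theorem radius_and_value_of_dominant_series :
    (∀ x : ℝ, |x| < 4 / 27 →
      Summable fun n : ℕ => 4 / (3 * (n : ℝ) + 4) * (Nat.choose (3 * n + 4) n : ℝ) * x ^ n) ∧
    (∀ x : ℝ, 4 / 27 < |x| →
      ¬ Summable fun n : ℕ => 4 / (3 * (n : ℝ) + 4) * (Nat.choose (3 * n + 4) n : ℝ) * x ^ n) ∧
    (Summable fun n : ℕ =>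
      4 / (3 * (n : ℝ) + 4) * (Nat.choose (3 * n + 4) n : ℝ) * (4 / 27 : ℝ) ^ n) ∧
    ∑' n : ℕ, 4 / (3 * (n : ℝ) + 4) * (Nat.choose (3 * n + 4) n : ℝ) * (4 / 27 : ℝ) ^ n
      = 81 / 16 := by
  have hfun : (fun n : ℕ => 4 / (3 * (n : ℝ) + 4) * (Nat.choose (3 * n + 4) n : ℝ) * (4 / 27 : ℝ) ^ n)
      = fun n => 81/16 * wt 4 n := by
    funext n
    rw [wt_four, ← coeff_eq]
    ring
  refine ⟨?_, ?_, ?_, ?_⟩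
  · -- |x| < 4/27 : summable
    intro x hx
    have hq0 : (0:ℝ) ≤ 27/4 * |x| := by positivity
    have hq1 : 27/4 * |x| < 1 := by nlinarith [abs_nonneg x]
    apply Summable.of_norm_bounded (g := fun n => 81/16 * (27/4 * |x|) ^ n)
      ((summable_geometric_of_lt_one hq0 hq1).mul_left _)
    intro n
    have hcb := coeff_bd n
    have hcn := coeff_nonneg n
    rw [Real.norm_eq_abs, abs_mul, abs_of_nonneg hcn, abs_pow]
    have hxe : |x| ^ n = (4/27 : ℝ) ^ n * (27/4 * |x|) ^ n := by
      rw [← mul_pow]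
      congr 1
      ring
    rw [hxe, ← mul_assoc]
    exact mul_le_mul_of_nonneg_right hcb (by positivity)
  · -- |x| > 4/27 : not summable
    intro x hx hs
    set q : ℝ := 27/4 * |x| with hqdef
    have hq1 : (1:ℝ) < q := by rw [hqdef]; nlinarith
    have hq0 : (0:ℝ) < q := lt_trans one_pos hq1
    have hrlt : ‖(1/q : ℝ)‖ < 1 := by
      rw [Real.norm_eq_abs, abs_of_pos (by positivity), div_lt_one hq0]
      exact hq1
    have htend : Filter.Tendsto (fun n : ℕ => (n:ℝ)^4 * (1/q)^n) Filter.atTop (nhds 0) :=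
      (summable_pow_mul_geometric_of_norm_lt_one 4 hrlt).tendsto_atTop_zero
    have htend2 : Filter.Tendsto (fun n : ℕ => ((n:ℝ)+1)^4 * (1/q)^(n+1)) Filter.atTop (nhds 0) := by
      have h := htend.comp (Filter.tendsto_add_atTop_nat 1)
      have : ((fun n : ℕ => (n:ℝ)^4 * (1/q)^n) ∘ (fun n => n + 1))
          = fun n : ℕ => ((n:ℝ)+1)^4 * (1/q)^(n+1) := by
        funext n
        simp only [Function.comp_apply]
        push_cast
        ring
      rwa [this] at h
    have htend3 : Filter.Tendsto (fun n : ℕ => ((n:ℝ)+1)^4 * (1/q)^n) Filter.atTop (nhds 0) := by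
      have h := htend2.const_mul q
      have he : (fun n : ℕ => q * (((n:ℝ)+1)^4 * (1/q)^(n+1)))
          = fun n : ℕ => ((n:ℝ)+1)^4 * (1/q)^n := by
        funext n
        field_simp
        ring_nf
        rw [mul_inv_cancel₀ hq0.ne', one_mul]
      rw [he] at h
      simpa using h
    have hev1 : ∀ᶠ n : ℕ in Filter.atTop, ((n:ℝ)+1)^4 * (1/q)^n < 1 := by
      have := htend3.eventually (gt_mem_nhds one_pos)
      simpa using this
    have hev2 : ∀ᶠ n : ℕ in Filter.atTop,
        |4 / (3 * (n : ℝ) + 4) * (Nat.choose (3 * n + 4) n : ℝ) * x ^ n| < 1 := by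
      have h0 := hs.tendsto_atTop_zero
      have habs := h0.abs
      rw [abs_zero] at habs
      have := habs.eventually (gt_mem_nhds one_pos)
      simpa using this
    obtain ⟨n, h1, h2⟩ := (hev1.and hev2).exists
    -- derive 1 ≤ |f n|
    have hqpow : (0:ℝ) < q ^ n := pow_pos hq0 n
    have hnp : (0:ℝ) < ((n:ℝ)+1) ^ 4 := by positivity
    have hq4 : ((n:ℝ)+1)^4 ≤ q ^ n := by
      have heq1 : ((n:ℝ)+1)^4 = (((n:ℝ)+1)^4 * (1/q)^n) * q ^ n := by
        rw [div_pow, one_pow]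
        field_simp
      calc ((n:ℝ)+1)^4 = (((n:ℝ)+1)^4 * (1/q)^n) * q ^ n := heq1
        _ ≤ 1 * q ^ n := mul_le_mul_of_nonneg_right (le_of_lt h1) (le_of_lt hqpow)
        _ = q ^ n := one_mul _
    have hlb := lower_bd n
    have h2' : (1:ℝ)/((n:ℝ)+1) ≤ 4 / (3 * (n:ℝ) + 4) := by
      rw [div_le_div_iff₀ (by positivity) (by positivity)]
      linarith
    have hxabs : |x| ^ n = (4/27 : ℝ) ^ n * q ^ n := by
      rw [hqdef, ← mul_pow]
      congr 1
      ring
    have hC0 : (0:ℝ) ≤ ((3 * n + 4).choose n : ℝ) * (4/27 : ℝ) ^ n := by positivity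
    have key : 1 ≤ 4 / (3 * (n:ℝ) + 4) * (((3 * n + 4).choose n : ℝ) * (4/27 : ℝ) ^ n) * q ^ n := by
      have step1 : (1:ℝ)/((n:ℝ)+1) * (1/((n:ℝ)+1)^3)
          ≤ 4 / (3 * (n:ℝ) + 4) * (((3 * n + 4).choose n : ℝ) * (4/27 : ℝ) ^ n) :=
        mul_le_mul h2' hlb (by positivity) (by positivity)
      have step2 : (1:ℝ)/((n:ℝ)+1) * (1/((n:ℝ)+1)^3) * q ^ n
          ≤ 4 / (3 * (n:ℝ) + 4) * (((3 * n + 4).choose n : ℝ) * (4/27 : ℝ) ^ n) * q ^ n :=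
        mul_le_mul_of_nonneg_right step1 (le_of_lt hqpow)
      have step3 : (1:ℝ) ≤ (1:ℝ)/((n:ℝ)+1) * (1/((n:ℝ)+1)^3) * q ^ n := by
        rw [show (1:ℝ)/((n:ℝ)+1) * (1/((n:ℝ)+1)^3) = 1/((n:ℝ)+1)^4 by
          field_simp]
        rw [div_mul_eq_mul_div, one_mul, le_div_iff₀ hnp]
        linarith
      linarith
    have hfabs : |4 / (3 * (n : ℝ) + 4) * (Nat.choose (3 * n + 4) n : ℝ) * x ^ n|
        = 4 / (3 * (n:ℝ) + 4) * (((3 * n + 4).choose n : ℝ) * (4/27 : ℝ) ^ n) * q ^ n := by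
      rw [abs_mul, abs_mul, abs_pow, abs_of_nonneg (by positivity : (0:ℝ) ≤ 4 / (3 * (n:ℝ) + 4)),
        abs_of_nonneg (Nat.cast_nonneg _), hxabs]
      ring
    rw [hfabs] at h2
    linarith
  · -- summable at 4/27
    rw [hfun]
    exact (wt_summable 4).mul_left _
  · -- value
    rw [hfun, tsum_mul_left, show ∑' n, wt 4 n = W 4 from rfl, W_four]
    norm_num
end

section
/- For every real x with 0 < x ≤ 4/27, the power series f(x) := ∑_{n=0}^∞ (4/(3n+4)) · binom(3n+4, n) · x^n converges and satisfies f(x) = (16/(9x²)) · cos⁴( ( arctan( √(4/(27x) − 1) ) + π ) / 3 ). -/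
def raney : ℕ → ℕ → ℕ
  | 0, 0 => 1
  | 0, _+1 => 0
  | _+1, 0 => 1
  | p+1, n+1 => raney p (n+1) + raney (p+3) n
  termination_by p n => (n, p)


theorem raney_choose : ∀ p n, (3*n+p) * raney p n = p * Nat.choose (3*n+p) n
  | 0, 0 => by simp [raney]
  | 0, n+1 => by simp [raney]
  | p+1, 0 => by simp [raney]
  | p+1, n+1 => by
    have h1 := raney_choose p (n+1)
    have h2 := raney_choose (p+3) n
    have hpas : Nat.choose (3*(n+1)+(p+1)) (n+1)
        = Nat.choose (3*n+p+3) n + Nat.choose (3*n+p+3) (n+1) := by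
      have : 3*(n+1)+(p+1) = (3*n+p+3)+1 := by ring
      rw [this, Nat.choose_succ_succ']
    have hr : Nat.choose (3*n+p+3) (n+1) * (n+1) = Nat.choose (3*n+p+3) n * (3*n+p+3 - n) :=
      Nat.choose_succ_right_eq _ _
    have hmn : 3*n+p+3 - n = 2*n+p+3 := by omega
    rw [hmn] at hr
    have hR : raney (p+1) (n+1) = raney p (n+1) + raney (p+3) n := by rw [raney]
    have h1' : (3*n+p+3) * raney p (n+1) = p * Nat.choose (3*n+p+3) (n+1) := by
      have : 3*(n+1)+p = 3*n+p+3 := by ring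
      rw [this] at h1; exact h1
    have h2' : (3*n+p+3) * raney (p+3) n = (p+3) * Nat.choose (3*n+p+3) n := by
      have : 3*n+(p+3) = 3*n+p+3 := by ring
      rw [this] at h2; exact h2
    rw [hR, hpas]
    zify at h1' h2' hr ⊢
    have key : ((3*n+p+3 : ℤ)) * ((n:ℤ)+1) * ((3*(n+1)+(p+1)) * (raney p (n+1) + raney (p+3) n))
        = ((3*n+p+3 : ℤ)) * ((n:ℤ)+1) * ((p+1) * (Nat.choose (3*n+p+3) n + Nat.choose (3*n+p+3) (n+1))) := by
      push_cast
      linear_combination (((3:ℤ)*n+p+4) * ((n:ℤ)+1)) * h1' + (((3:ℤ)*n+p+4) * ((n:ℤ)+1)) * h2' + ((((3:ℤ)*n+p+4)*p - ((p:ℤ)+1)*(3*n+p+3)) ) * hr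
    have hpos : ((3*n+p+3 : ℤ)) * ((n:ℤ)+1) ≠ 0 := by positivity
    have := mul_left_cancel₀ hpos key
    push_cast at this ⊢
    linarith [this]
  termination_by p n => (n, p)



theorem raney_zero : ∀ n, raney 0 n = if n = 0 then 1 else 0
  | 0 => by simp [raney]
  | n+1 => by simp [raney]

theorem raney_zero' : ∀ p, raney p 0 = 1
  | 0 => by simp [raney]
  | p+1 => by simp [raney]

theorem raney_conv : ∀ p q n, ∑ k ∈ Finset.range (n+1), raney p k * raney q (n-k) = raney (p+q) n
  | 0, q, n => by
    rw [Finset.sum_eq_single 0]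
    · simp [raney_zero, raney_zero']
    · intro k _ hk; simp [raney_zero, hk]
    · simp
  | p+1, q, 0 => by simp [raney_zero']
  | p+1, q, n+1 => by
    have step : ∀ k, raney (p+1) k * raney q (n+1-k)
        = raney p k * raney q (n+1-k) + (if k = 0 then 0 else raney (p+3) (k-1) * raney q (n+1-k)) := by
      intro k
      cases k with
      | zero => simp [raney_zero']
      | succ m => rw [raney]; simp [add_mul]
    rw [Finset.sum_congr rfl (fun k _ => step k), Finset.sum_add_distrib]
    rw [raney_conv p q (n+1)]
    have h2 : ∑ k ∈ Finset.range (n+2), (if k = 0 then 0 else raney (p+3) (k-1) * raney q (n+1-k))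
        = ∑ j ∈ Finset.range (n+1), raney (p+3) j * raney q (n-j) := by
      rw [Finset.sum_range_succ']
      simp
    rw [h2, raney_conv (p+3) q n]
    have : raney (p+q+1) (n+1) = raney (p+q) (n+1) + raney (p+q+3) n := by rw [raney]
    have e1 : p+1+q = p+q+1 := by ring
    have e2 : p+3+q = p+q+3 := by ring
    rw [e1, e2, this]
  termination_by p q n => (n, p)


theorem choose_step (n j : ℕ) :
    Nat.choose (3*n+j+1) n * (2*n+j+1) = Nat.choose (3*n+j) n * (3*n+j+1) := by
  have := Nat.choose_mul_succ_eq (3*n+j) n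
  have h : 3*n+j+1 - n = 2*n+j+1 := by omega
  rw [h] at this
  omega

theorem central3_sq (n : ℕ) : (Nat.choose (3*n) n)^2 * 16^n * (2*n+1) ≤ 729^n := by
  induction n with
  | zero => simp
  | succ n ih =>
    have h1 : Nat.choose (3*n+1) n * (2*n+1) = Nat.choose (3*n) n * (3*n+1) := by
      have := choose_step n 0; simpa using this
    have h2 : Nat.choose (3*n+2) n * (2*n+2) = Nat.choose (3*n+1) n * (3*n+2) := choose_step n 1
    have h3 : Nat.choose (3*n+3) n * (2*n+3) = Nat.choose (3*n+2) n * (3*n+3) := choose_step n 2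
    have h4 : Nat.choose (3*n+3) (n+1) * (n+1) = Nat.choose (3*n+3) n * (3*n+3 - n) :=
      Nat.choose_succ_right_eq _ _
    have hmn : 3*n+3 - n = 2*n+3 := by omega
    rw [hmn] at h4
    set C := Nat.choose (3*n) n with hC
    set C' := Nat.choose (3*(n+1)) (n+1) with hC'
    have hC'e : Nat.choose (3*n+3) (n+1) = C' := by rw [hC']; ring_nf
    rw [hC'e] at h4
    have key : C' * ((n+1)*(2*n+1)*(2*n+2)) = C * ((3*n+1)*(3*n+2)*(3*n+3)) := by
      calc C' * ((n+1)*(2*n+1)*(2*n+2)) = (C' * (n+1)) * ((2*n+1)*(2*n+2)) := by ring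
      _ = (Nat.choose (3*n+3) n * (2*n+3)) * ((2*n+1)*(2*n+2)) := by rw [h4]
      _ = (Nat.choose (3*n+3) n * (2*n+3)) * (2*n+1)*(2*n+2) := by ring
      _ = (Nat.choose (3*n+2) n * (3*n+3)) * (2*n+1) * (2*n+2):= by rw [h3]
      _ = (Nat.choose (3*n+2) n * (2*n+2)) * (3*n+3) * (2*n+1) := by ring
      _ = (Nat.choose (3*n+1) n * (3*n+2)) * (3*n+3) * (2*n+1) := by rw [h2]
      _ = (Nat.choose (3*n+1) n * (2*n+1)) * ((3*n+2) * (3*n+3)) := by ring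
      _ = (C * (3*n+1)) * ((3*n+2) * (3*n+3)) := by rw [h1]
      _ = C * ((3*n+1)*(3*n+2)*(3*n+3)) := by ring
    set D := (n+1)*(2*n+1)*(2*n+2) with hD
    set N := (3*n+1)*(3*n+2)*(3*n+3) with hN
    have poly : 16 * N^2 * (2*n+3) ≤ 729 * D^2 * (2*n+1) := by
      rw [hD, hN]; nlinarith [sq_nonneg n, n.zero_le]
    have hpos : 0 < (2*n+1) * D^2 := by positivity
    refine Nat.le_of_mul_le_mul_right ?_ hpos
    have lhs_eq : C'^2 * 16^(n+1) * (2*(n+1)+1) * ((2*n+1) * D^2)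
        = (C^2 * 16^n * (2*n+1)) * (16 * N^2 * (2*n+3)) := by
      have e : C'^2 * D^2 = C^2 * N^2 := by rw [← mul_pow, key, mul_pow]
      calc C'^2 * 16^(n+1) * (2*(n+1)+1) * ((2*n+1) * D^2)
          = (C'^2 * D^2) * (16^(n+1) * (2*n+3) * (2*n+1)) := by ring
      _ = (C^2 * N^2) * (16^(n+1) * (2*n+3) * (2*n+1)) := by rw [e]
      _ = (C^2 * 16^n * (2*n+1)) * (16 * N^2 * (2*n+3)) := by ring
    rw [lhs_eq]
    calc (C^2 * 16^n * (2*n+1)) * (16 * N^2 * (2*n+3))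
        ≤ 729^n * (729 * D^2 * (2*n+1)) := Nat.mul_le_mul ih poly
    _ = 729^(n+1) * ((2*n+1)*D^2) := by ring


theorem majorant_summable : Summable (fun n : ℕ => (81/4 : ℝ) / (((n:ℝ)+1) * Real.sqrt ((n:ℝ)+1))) := by
  have h : Summable (fun n : ℕ => 1 / ((n:ℝ)+1) ^ ((3:ℝ)/2)) := by
    have := (Real.summable_one_div_nat_rpow (p := (3:ℝ)/2)).2 (by norm_num)
    have h2 := (summable_nat_add_iff (f := fun n : ℕ => 1 / (n:ℝ) ^ ((3:ℝ)/2)) 1).2 this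
    exact h2.congr (by intro n; push_cast; ring_nf)
  refine ((h.mul_left (81/4 : ℝ)).congr ?_)
  intro n
  have hn : (0:ℝ) ≤ (n:ℝ)+1 := by positivity
  have he : ((n:ℝ)+1) ^ ((3:ℝ)/2) = ((n:ℝ)+1) * Real.sqrt ((n:ℝ)+1) := by
    rw [show (3:ℝ)/2 = 1 + 1/2 by norm_num, Real.rpow_add (by positivity), Real.rpow_one,
      ← Real.sqrt_eq_rpow]
  rw [he]
  ring

theorem raney_succ_le : ∀ p n, raney p n ≤ raney (p+1) n
  | p, 0 => by rw [raney_zero', raney_zero']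
  | p, n+1 => by
    rw [show raney (p+1) (n+1) = raney p (n+1) + raney (p+3) n from by rw [raney]]
    exact Nat.le_add_right _ _

theorem raney_le {p q : ℕ} (h : p ≤ q) (n : ℕ) : raney p n ≤ raney q n := by
  induction q with
  | zero => simp_all
  | succ q ih =>
    rcases Nat.lt_or_ge p (q+1) with h'|h'
    · exact le_trans (ih (by omega)) (raney_succ_le q n)
    · have : p = q+1 := by omega
      subst this; rfl

-- C(3n+4,n) * (2n+1)(2n+2)(2n+3)(2n+4) = C(3n,n) * (3n+1)(3n+2)(3n+3)(3n+4)
theorem choose4_eq (n : ℕ) :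
    Nat.choose (3*n+4) n * ((2*n+1)*(2*n+2)*(2*n+3)*(2*n+4))
      = Nat.choose (3*n) n * ((3*n+1)*(3*n+2)*(3*n+3)*(3*n+4)) := by
  have h1 : Nat.choose (3*n+1) n * (2*n+1) = Nat.choose (3*n) n * (3*n+1) := by
    have := choose_step n 0; simpa using this
  have h2 := choose_step n 1
  have h3 := choose_step n 2
  have h4 := choose_step n 3
  calc Nat.choose (3*n+4) n * ((2*n+1)*(2*n+2)*(2*n+3)*(2*n+4))
      = (Nat.choose (3*n+3+1) n * (2*n+3+1)) * ((2*n+1)*(2*n+2)*(2*n+3)) := by ring_nf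
    _ = (Nat.choose (3*n+3) n * (3*n+3+1)) * ((2*n+1)*(2*n+2)*(2*n+3)) := by rw [h4]
    _ = (Nat.choose (3*n+2+1) n * (2*n+2+1)) * ((2*n+1)*(2*n+2)*(3*n+4)) := by ring_nf
    _ = (Nat.choose (3*n+2) n * (3*n+2+1)) * ((2*n+1)*(2*n+2)*(3*n+4)) := by rw [h3]
    _ = (Nat.choose (3*n+1+1) n * (2*n+1+1)) * ((2*n+1)*(3*n+3)*(3*n+4)) := by ring_nf
    _ = (Nat.choose (3*n+1) n * (3*n+1+1)) * ((2*n+1)*(3*n+3)*(3*n+4)) := by rw [h2]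
    _ = (Nat.choose (3*n+1) n * (2*n+1)) * ((3*n+2)*(3*n+3)*(3*n+4)) := by ring
    _ = (Nat.choose (3*n) n * (3*n+1)) * ((3*n+2)*(3*n+3)*(3*n+4)) := by rw [h1]
    _ = Nat.choose (3*n) n * ((3*n+1)*(3*n+2)*(3*n+3)*(3*n+4)) := by ring

-- real bound on C(3n,n): C * 4^n * sqrt(2n+1) ≤ 27^n
theorem central3_real (n : ℕ) :
    (Nat.choose (3*n) n : ℝ) * 4^n * Real.sqrt (2*(n:ℝ)+1) ≤ 27^n := by
  have h := central3_sq n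
  have hr : ((Nat.choose (3*n) n : ℝ) * 4^n)^2 * (2*(n:ℝ)+1) ≤ ((27:ℝ)^n)^2 := by
    have h' : ((Nat.choose (3*n) n : ℝ))^2 * 16^n * (2*(n:ℝ)+1) ≤ (729:ℝ)^n := by
      exact_mod_cast h
    have e1 : ((27:ℝ)^n)^2 = (729:ℝ)^n := by
      rw [← pow_mul, mul_comm, pow_mul]; norm_num
    have e2 : ((Nat.choose (3*n) n : ℝ) * 4^n)^2 = ((Nat.choose (3*n) n : ℝ))^2 * 16^n := by
      rw [mul_pow, ← pow_mul, mul_comm n 2, pow_mul]; norm_num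
    rw [e1, e2]; exact h'
  have hnn : (0:ℝ) ≤ (Nat.choose (3*n) n : ℝ) * 4^n := by positivity
  have hs := Real.sqrt_le_sqrt hr
  rwa [Real.sqrt_mul (sq_nonneg _), Real.sqrt_sq hnn, Real.sqrt_sq (by positivity)] at hs

theorem term_bound (x : ℝ) (hx0 : 0 ≤ x) (hx : x ≤ 4/27) (n : ℕ) :
    (raney 4 n : ℝ) * x^n ≤ (81/4) / (((n:ℝ)+1) * Real.sqrt ((n:ℝ)+1)) := by
  have hxn : (0:ℝ) ≤ x^n := by positivity
  -- 16 * C(3n+4,n) ≤ 81 * C(3n,n)  in ℕ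
  have hP : 16 * ((3*n+1)*(3*n+2)*(3*n+3)*(3*n+4)) ≤ 81 * ((2*n+1)*(2*n+2)*(2*n+3)*(2*n+4)) := by
    nlinarith [n.zero_le, sq_nonneg n]
  have hc4 : 16 * Nat.choose (3*n+4) n ≤ 81 * Nat.choose (3*n) n := by
    have hpos : 0 < (2*n+1)*(2*n+2)*(2*n+3)*(2*n+4) := by positivity
    refine Nat.le_of_mul_le_mul_right ?_ hpos
    calc 16 * Nat.choose (3*n+4) n * ((2*n+1)*(2*n+2)*(2*n+3)*(2*n+4))
        = 16 * (Nat.choose (3*n+4) n * ((2*n+1)*(2*n+2)*(2*n+3)*(2*n+4))) := by ring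
      _ = 16 * (Nat.choose (3*n) n * ((3*n+1)*(3*n+2)*(3*n+3)*(3*n+4))) := by rw [choose4_eq]
      _ = Nat.choose (3*n) n * (16 * ((3*n+1)*(3*n+2)*(3*n+3)*(3*n+4))) := by ring
      _ ≤ Nat.choose (3*n) n * (81 * ((2*n+1)*(2*n+2)*(2*n+3)*(2*n+4))) :=
          Nat.mul_le_mul_left _ hP
      _ = 81 * Nat.choose (3*n) n * ((2*n+1)*(2*n+2)*(2*n+3)*(2*n+4)) := by ring
  -- (3n+4) * raney 4 n = 4 * C(3n+4,n)  in ℝ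
  have hrc : ((3*(n:ℝ)+4)) * (raney 4 n : ℝ) = 4 * (Nat.choose (3*n+4) n : ℝ) := by
    have := raney_choose 4 n
    have := congrArg (Nat.cast : ℕ → ℝ) this
    push_cast at this
    linarith [this]
  have hsq : Real.sqrt ((n:ℝ)+1) ≤ Real.sqrt (2*(n:ℝ)+1) := by
    apply Real.sqrt_le_sqrt; linarith
  have hsq1 : (0:ℝ) < Real.sqrt ((n:ℝ)+1) := Real.sqrt_pos.2 (by positivity)
  have hsq2 : (0:ℝ) ≤ Real.sqrt (2*(n:ℝ)+1) := Real.sqrt_nonneg _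
  -- main estimate
  have key : (raney 4 n : ℝ) * x^n * ((3*(n:ℝ)+4) * Real.sqrt (2*(n:ℝ)+1)) ≤ 81/4 := by
    have e1 : (raney 4 n : ℝ) * x^n * ((3*(n:ℝ)+4) * Real.sqrt (2*(n:ℝ)+1))
        = 4 * (Nat.choose (3*n+4) n : ℝ) * (x^n * Real.sqrt (2*(n:ℝ)+1)) := by
      rw [← hrc]; ring
    rw [e1]
    have hc4' : 4 * (Nat.choose (3*n+4) n : ℝ) ≤ (81/4) * (Nat.choose (3*n) n : ℝ) := by
      have : (16 * Nat.choose (3*n+4) n : ℝ) ≤ (81 * Nat.choose (3*n) n : ℝ) := by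
        exact_mod_cast hc4
      push_cast at this; linarith
    calc 4 * (Nat.choose (3*n+4) n : ℝ) * (x^n * Real.sqrt (2*(n:ℝ)+1))
        ≤ (81/4) * (Nat.choose (3*n) n : ℝ) * (x^n * Real.sqrt (2*(n:ℝ)+1)) := by
          apply mul_le_mul_of_nonneg_right hc4' (by positivity)
      _ ≤ (81/4) * (Nat.choose (3*n) n : ℝ) * ((4/27)^n * Real.sqrt (2*(n:ℝ)+1)) := by
          apply mul_le_mul_of_nonneg_left ?_ (by positivity)
          apply mul_le_mul_of_nonneg_right (pow_le_pow_left₀ hx0 hx n) hsq2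
      _ = (81/4) * (((Nat.choose (3*n) n : ℝ) * 4^n * Real.sqrt (2*(n:ℝ)+1)) / 27^n) := by
          rw [div_pow]; field_simp
      _ ≤ (81/4) * ((27:ℝ)^n / 27^n) := by
          apply mul_le_mul_of_nonneg_left ?_ (by norm_num)
          exact div_le_div_of_nonneg_right (central3_real n) (by positivity)
      _ = 81/4 := by rw [div_self (by positivity)]; ring
  have hD : (0:ℝ) < ((n:ℝ)+1) * Real.sqrt ((n:ℝ)+1) := by positivity
  rw [le_div_iff₀ hD]
  calc (raney 4 n : ℝ) * x^n * (((n:ℝ)+1) * Real.sqrt ((n:ℝ)+1))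
      ≤ (raney 4 n : ℝ) * x^n * ((3*(n:ℝ)+4) * Real.sqrt (2*(n:ℝ)+1)) := by
        apply mul_le_mul_of_nonneg_left ?_ (by positivity)
        apply mul_le_mul (by linarith) hsq (le_of_lt hsq1) (by positivity)
    _ ≤ 81/4 := key

theorem raney_summable (x : ℝ) (hx0 : 0 ≤ x) (hx : x ≤ 4/27) {p : ℕ} (hp : p ≤ 4) :
    Summable (fun n => (raney p n : ℝ) * x^n) := by
  apply Summable.of_nonneg_of_le (fun n => by positivity) (fun n => ?_) majorant_summable
  calc (raney p n : ℝ) * x^n ≤ (raney 4 n : ℝ) * x^n := by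
        apply mul_le_mul_of_nonneg_right ?_ (by positivity)
        exact_mod_cast raney_le hp n
    _ ≤ _ := term_bound x hx0 hx n

theorem raney_summable_norm (x : ℝ) (hx0 : 0 ≤ x) (hx : x ≤ 4/27) {p : ℕ} (hp : p ≤ 4) :
    Summable (fun n => ‖(raney p n : ℝ) * x^n‖) := by
  refine (raney_summable x hx0 hx hp).congr fun n => ?_
  rw [Real.norm_of_nonneg (by positivity)]

theorem raney_tsum_mul (x : ℝ) (hx0 : 0 ≤ x) (hx : x ≤ 4/27) {p q : ℕ} (hp : p ≤ 4) (hq : q ≤ 4) :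
    (∑' n, (raney p n : ℝ) * x^n) * (∑' n, (raney q n : ℝ) * x^n)
      = ∑' n, (raney (p+q) n : ℝ) * x^n := by
  rw [tsum_mul_tsum_eq_tsum_sum_range_of_summable_norm
    (raney_summable_norm x hx0 hx hp) (raney_summable_norm x hx0 hx hq)]
  congr 1
  funext n
  calc ∑ k ∈ Finset.range (n+1), ((raney p k : ℝ) * x^k) * ((raney q (n-k) : ℝ) * x^(n-k))
      = ∑ k ∈ Finset.range (n+1), ((raney p k : ℝ) * (raney q (n-k) : ℝ)) * x^n := by
        apply Finset.sum_congr rfl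
        intro k hk
        have hk' : k ≤ n := by simpa using Nat.lt_succ_iff.mp (Finset.mem_range.mp hk)
        have : x^k * x^(n-k) = x^n := by
          rw [← pow_add]; congr 1; omega
        rw [← this]; ring
    _ = (raney (p+q) n : ℝ) * x^n := by
        rw [← Finset.sum_mul]
        congr 1
        exact_mod_cast congrArg (Nat.cast : ℕ → ℝ) (raney_conv p q n)

theorem S1_eq (x : ℝ) (hx0 : 0 ≤ x) (hx : x ≤ 4/27) :
    (∑' n, (raney 1 n : ℝ) * x^n) = 1 + x * ∑' n, (raney 3 n : ℝ) * x^n := by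
  rw [Summable.tsum_eq_zero_add (raney_summable x hx0 hx (by norm_num))]
  have h0 : (raney 1 0 : ℝ) * x^0 = 1 := by rw [raney_zero']; simp
  rw [h0]
  congr 1
  rw [← tsum_mul_left]
  congr 1
  funext n
  have h13 : raney 1 (n+1) = raney 3 n := by
    rw [show (1:ℕ) = 0+1 from rfl, raney, raney_zero]
    simp
  rw [h13]
  ring

theorem S1_cubic (x : ℝ) (hx0 : 0 ≤ x) (hx : x ≤ 4/27) :
    (∑' n, (raney 1 n : ℝ) * x^n) = 1 + x * (∑' n, (raney 1 n : ℝ) * x^n)^3 := by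
  have h2 := raney_tsum_mul x hx0 hx (p := 1) (q := 1) (by norm_num) (by norm_num)
  have h3 := raney_tsum_mul x hx0 hx (p := 1) (q := 2) (by norm_num) (by norm_num)
  have : (∑' n, (raney 1 n : ℝ) * x^n)^3 = ∑' n, (raney 3 n : ℝ) * x^n := by
    rw [pow_succ, pow_two, h2]
    rw [show ((1:ℕ)+2) = 3 from rfl] at h3
    rw [mul_comm] at h3
    exact h3
  rw [this]
  exact S1_eq x hx0 hx

theorem S1_ge_one (x : ℝ) (hx0 : 0 ≤ x) (hx : x ≤ 4/27) :
    1 ≤ ∑' n, (raney 1 n : ℝ) * x^n := by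
  have h := Summable.le_tsum (raney_summable x hx0 hx (by norm_num : (1:ℕ) ≤ 4)) 0
    (fun i _ => by positivity)
  simpa [raney_zero'] using h

theorem S1_le (x : ℝ) (hx0 : 0 ≤ x) (hx : x ≤ 4/27) :
    (∑' n, (raney 1 n : ℝ) * x^n) ≤ ∑' n, (raney 1 n : ℝ) * (4/27)^n := by
  apply Summable.tsum_le_tsum ?_ (raney_summable x hx0 hx (by norm_num))
    (raney_summable (4/27) (by norm_num) (by norm_num) (by norm_num))
  intro n
  apply mul_le_mul_of_nonneg_left (pow_le_pow_left₀ hx0 hx n) (by positivity)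

theorem S1_endpoint : (∑' n, (raney 1 n : ℝ) * (4/27)^n) = 3/2 := by
  set L := ∑' n, (raney 1 n : ℝ) * (4/27)^n with hL
  have hc := S1_cubic (4/27) (by norm_num) (by norm_num)
  have hg := S1_ge_one (4/27) (by norm_num) (by norm_num)
  rw [← hL] at hc hg
  have key : (2*L - 3)^2 * (L + 3) = 0 := by nlinarith [hc]
  have h2 : (0:ℝ) < L + 3 := by linarith
  have h3 : (2*L - 3)^2 = 0 := by
    rcases mul_eq_zero.mp key with h | h
    · exact h
    · linarith
  have := pow_eq_zero_iff (n := 2) (by norm_num) |>.mp h3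
  linarith

theorem S1_le_32 (x : ℝ) (hx0 : 0 ≤ x) (hx : x ≤ 4/27) :
    (∑' n, (raney 1 n : ℝ) * x^n) ≤ 3/2 := by
  have := S1_le x hx0 hx
  rw [S1_endpoint] at this
  exact this

open Real in
theorem B_props (x : ℝ) (hx0 : 0 < x) (hx : x ≤ 4/27) :
    ∃ B : ℝ, 1 ≤ B ∧ B ≤ 3/2 ∧ x * B^3 - B + 1 = 0 ∧
      B^4 = 16 / (9 * x^2) *
        Real.cos ((Real.arctan (Real.sqrt (4 / (27 * x) - 1)) + Real.pi) / 3) ^ 4 := by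
  set t := Real.sqrt (4 / (27*x) - 1) with ht
  set θ := (Real.arctan t + Real.pi) / 3 with hθ
  set c := Real.cos θ with hc
  set s := Real.sqrt (3*x) with hs
  have hs0 : 0 < s := Real.sqrt_pos.2 (by linarith)
  have hs2 : s^2 = 3*x := Real.sq_sqrt (by linarith)
  have ht0 : 0 ≤ t := Real.sqrt_nonneg _
  have harg : (0:ℝ) ≤ 4/(27*x) - 1 := by
    have : (1:ℝ) ≤ 4/(27*x) := by
      rw [le_div_iff₀ (by linarith)]; linarith
    linarith
  have ht2 : t^2 = 4/(27*x) - 1 := Real.sq_sqrt harg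
  have ha0 : 0 ≤ Real.arctan t := by
    rw [← Real.arctan_zero]; exact Real.arctan_strictMono.monotone ht0
  have ha2 : Real.arctan t < Real.pi/2 := Real.arctan_lt_pi_div_two t
  have hpi : (0:ℝ) < Real.pi := Real.pi_pos
  -- θ ∈ [π/3, π/2)
  have hθ1 : Real.pi/3 ≤ θ := by rw [hθ]; linarith
  have hθ2 : θ < Real.pi/2 := by rw [hθ]; linarith
  -- c ∈ (0, 1/2]
  have hc0 : 0 < c := Real.cos_pos_of_mem_Ioo ⟨by linarith, hθ2⟩
  have hc12 : c ≤ 1/2 := by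
    have := Real.cos_le_cos_of_nonneg_of_le_pi (by positivity) (by linarith) hθ1
    rwa [Real.cos_pi_div_three] at this
  -- cos (3θ) = -3s/2
  have h3θ : Real.cos (3*θ) = -(3*s)/2 := by
    have e : 3*θ = Real.arctan t + Real.pi := by rw [hθ]; ring
    rw [e, Real.cos_add_pi, Real.cos_arctan]
    have e2 : 1 + t^2 = 4/(27*x) := by rw [ht2]; ring
    rw [e2]
    have e3 : Real.sqrt (4/(27*x)) = 2/(3*s) := by
      rw [show 4/(27*x) = (2/(3*s))^2 by rw [div_pow]; rw [mul_pow]; rw [hs2]; field_simp; ring]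
      exact Real.sqrt_sq (by positivity)
    rw [e3]
    field_simp
  have htriple : 4*c^3 - 3*c = -(3*s)/2 := by
    rw [← h3θ, Real.cos_three_mul, hc]
  refine ⟨2*c/s, ?_, ?_, ?_, ?_⟩
  · -- 1 ≤ B ⇔ s ≤ 2c, with s = 2c - (8/3)c³
    rw [le_div_iff₀ hs0]
    nlinarith [pow_pos hc0 3]
  · rw [div_le_iff₀ hs0]
    nlinarith [pow_pos hc0 3, sq_nonneg c]
  · have hx3 : x = s^2/3 := by rw [hs2]; ring
    field_simp
    rw [hx3]
    field_simp
    linear_combination 2 * htriple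
  · have e4 : (2*c/s)^4 = 16*c^4/s^4 := by rw [div_pow]; ring_nf
    rw [e4]
    have : s^4 = 9*x^2 := by
      rw [show s^4 = (s^2)^2 by ring, hs2]; ring
    rw [this, hc]
    ring



/-- For `0 < x ≤ 4/27`, the series `f(x) = ∑ (4/(3n+4))·binom(3n+4,n)·xⁿ` converges and
`f(x) = (16/(9x²))·cos⁴((arctan(√(4/(27x) − 1)) + π)/3)`. -/
theorem dominant_series_closed_form (x : ℝ) (hx0 : 0 < x) (hx : x ≤ 4 / 27) :
    (Summable fun n : ℕ =>
      4 / (3 * (n : ℝ) + 4) * (Nat.choose (3 * n + 4) n : ℝ) * x ^ n) ∧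
    ∑' n : ℕ, 4 / (3 * (n : ℝ) + 4) * (Nat.choose (3 * n + 4) n : ℝ) * x ^ n
      = 16 / (9 * x ^ 2) *
          Real.cos ((Real.arctan (Real.sqrt (4 / (27 * x) - 1)) + Real.pi) / 3) ^ 4 := by
  have hx0' : (0:ℝ) ≤ x := hx0.le
  have hterm : ∀ n : ℕ, 4 / (3 * (n : ℝ) + 4) * (Nat.choose (3 * n + 4) n : ℝ) * x ^ n
      = (raney 4 n : ℝ) * x ^ n := by
    intro n
    have h := raney_choose 4 n
    have h' : (3*(n:ℝ)+4) * (raney 4 n : ℝ) = 4 * (Nat.choose (3*n+4) n : ℝ) := by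
      have := congrArg (Nat.cast : ℕ → ℝ) h
      push_cast at this
      linarith [this]
    have hne : (3*(n:ℝ)+4) ≠ 0 := by positivity
    field_simp
    linear_combination (-1) * h'
  constructor
  · exact (raney_summable x hx0' hx (le_refl 4)).congr (fun n => (hterm n).symm)
  · rw [tsum_congr hterm]
    obtain ⟨B, hB1, hB2, hBc, hB4⟩ := B_props x hx0 hx
    set S := ∑' n, (raney 1 n : ℝ) * x^n with hSdef
    have hcubS : x * S^3 - S + 1 = 0 := by
      have := S1_cubic x hx0' hx
      rw [← hSdef] at this
      linarith [this]
    have hSge : 1 ≤ S := S1_ge_one x hx0' hx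
    have hSle : S ≤ 3/2 := S1_le_32 x hx0' hx
    have hSB : S = B := by
      have key : (S - B) * (1 - x*(S^2 + S*B + B^2)) = 0 := by
        linear_combination hBc - hcubS
      rcases mul_eq_zero.mp key with h | h
      · linarith [sub_eq_zero.mp h]
      · have hQpos : (0:ℝ) ≤ S^2 + S*B + B^2 := by nlinarith
        have heq : x*(S^2 + S*B + B^2) = 1 := by linarith
        have hQ : 27/4 ≤ S^2 + S*B + B^2 := by
          nlinarith [mul_nonneg (by linarith : (0:ℝ) ≤ 4/27 - x) hQpos]
        have h1 : (0:ℝ) ≤ (3/2 - S) * (3/2 - B) := mul_nonneg (by linarith) (by linarith)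
        have h2 : (0:ℝ) ≤ (3/2 - S) * S := mul_nonneg (by linarith) (by linarith)
        have h3 : (0:ℝ) ≤ (3/2 - B) * B := mul_nonneg (by linarith) (by linarith)
        have hsum : 3 ≤ S + B := by nlinarith
        linarith
    have h11 := raney_tsum_mul x hx0' hx (p := 1) (q := 1) (by norm_num) (by norm_num)
    have h22 := raney_tsum_mul x hx0' hx (p := 2) (q := 2) (by norm_num) (by norm_num)
    rw [← hSdef] at h11
    norm_num at h11 h22
    rw [← h22, ← h11, ← hB4, hSB]
    ring
end

section
/- For every L ∈ ℕ and β > 0, ∑_{x ∈ (ℤ/Lℤ)²} 1 / ( 1 + ∑_{l=1}^2 |e^{i·2π·x_l/L} − 1|³ · L³ / (8π³β³) ) ≤ 4 + 8π²β/(3√3) + 4π³β²/(3√3), where x = (x₁, x₂) and each x_l is any integer representative of its class mod L. -/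
open Real Finset

lemma abs_exp_I_sub_one (θ : ℝ) :
    ‖Complex.exp (Complex.I * θ) - 1‖ = 2 * |Real.sin (θ / 2)| := by
  rw [mul_comm, Complex.exp_mul_I, ← Complex.ofReal_cos, ← Complex.ofReal_sin]
  have h : (Real.cos θ : ℂ) + (Real.sin θ : ℂ) * Complex.I - 1
      = ((Real.cos θ - 1 : ℝ) : ℂ) + ((Real.sin θ : ℝ) : ℂ) * Complex.I := by
    push_cast; ring
  have h2 : (Real.cos θ - 1) ^ 2 + Real.sin θ ^ 2 = 4 * ((1 - Real.cos θ)/2) := by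
    nlinarith [Real.sin_sq_add_cos_sq θ]
  rw [h, Complex.norm_add_mul_I, Real.abs_sin_half, h2,
    Real.sqrt_mul (by norm_num : (0:ℝ) ≤ 4), show Real.sqrt 4 = 2 by
      rw [show (4:ℝ) = 2^2 by norm_num, Real.sqrt_sq_eq_abs]; norm_num]

lemma sin_lower (L : ℕ) [NeZero L] (v : ZMod L) :
    2 * ((min v.val (L - v.val) : ℕ) : ℝ) / L ≤ Real.sin (π * v.val / L) := by
  have hL : 0 < (L : ℝ) := by exact_mod_cast Nat.pos_of_ne_zero (NeZero.ne L)
  have hn : v.val < L := ZMod.val_lt v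
  have hπ := Real.pi_pos
  set n := v.val with hn'
  rcases le_or_gt (2 * n) L with hc | hc
  · have hx0 : 0 ≤ π * n / L := by positivity
    have hx1 : π * n / L ≤ π / 2 := by
      rw [div_le_div_iff₀ hL (by norm_num)]
      have : (2 * n : ℝ) ≤ L := by exact_mod_cast hc
      nlinarith
    have := Real.mul_le_sin hx0 hx1
    calc 2 * ((min n (L - n) : ℕ) : ℝ) / L ≤ 2 * n / L := by
          gcongr
          exact_mod_cast Nat.cast_le.2 (min_le_left n (L-n))
      _ = 2 / π * (π * n / L) := by field_simp
      _ ≤ _ := this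
  · have hw : (L - n : ℕ) = (L : ℝ) - n := by
      exact_mod_cast Nat.cast_sub hn.le
    have hkey : Real.sin (π * n / L) = Real.sin (π * (L - n : ℕ) / L) := by
      rw [hw, show π * ((L:ℝ) - n) / L = π - π * n / L by field_simp,
        Real.sin_pi_sub]
    rw [hkey]
    have h2w : 2 * ((L - n : ℕ) : ℝ) ≤ L := by
      rw [hw]
      have : (L : ℝ) < 2 * n := by exact_mod_cast hc
      linarith
    have hx0 : 0 ≤ π * ((L - n : ℕ) : ℝ) / L := by positivity
    have hx1 : π * ((L - n : ℕ) : ℝ) / L ≤ π / 2 := by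
      rw [div_le_div_iff₀ hL (by norm_num)]
      nlinarith
    have := Real.mul_le_sin hx0 hx1
    calc 2 * ((min n (L - n) : ℕ) : ℝ) / L ≤ 2 * ((L - n : ℕ) : ℝ) / L := by
          gcongr
          exact_mod_cast Nat.cast_le.2 (min_le_right n (L-n))
      _ = 2 / π * (π * ((L - n : ℕ) : ℝ) / L) := by field_simp
      _ ≤ _ := this

lemma count_le (L : ℕ) [NeZero L] (M : ℕ) :
    (Finset.univ.filter (fun v : ZMod L => min v.val (L - v.val) ≤ M)).card ≤ 2 * M + 1 := by
  classical
  have h := Finset.card_le_card_of_injOn (fun v : ZMod L => v.val)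
    (s := Finset.univ.filter (fun v : ZMod L => min v.val (L - v.val) ≤ M))
    (t := Finset.range (M+1) ∪ (Finset.range M).image (fun j => L - 1 - j))
    (by
      intro v hv
      simp only [Finset.mem_coe, Finset.mem_filter, Finset.mem_univ, true_and] at hv
      have hvL : v.val < L := ZMod.val_lt v
      simp only [Finset.mem_coe, Finset.mem_union, Finset.mem_range, Finset.mem_image]
      rcases le_or_gt v.val M with h1 | h1
      · exact Or.inl (by omega)
      · right
        exact ⟨L - v.val - 1, by omega, by omega⟩)
    (fun a _ b _ h => ZMod.val_injective L h)
  calc _ ≤ _ := h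
    _ ≤ (Finset.range (M+1)).card + ((Finset.range M).image (fun j => L - 1 - j)).card :=
        Finset.card_union_le _ _
    _ ≤ (M + 1) + M := by
        gcongr
        · simp
        · exact (Finset.card_image_le).trans (by simp)
    _ ≤ 2 * M + 1 := by omega

lemma count_lt (L : ℕ) [NeZero L] (M : ℕ) :
    (Finset.univ.filter (fun v : ZMod L => min v.val (L - v.val) < M)).card ≤ 2 * M - 1 := by
  classical
  have h := Finset.card_le_card_of_injOn (fun v : ZMod L => v.val)
    (s := Finset.univ.filter (fun v : ZMod L => min v.val (L - v.val) < M))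
    (t := Finset.range M ∪ (Finset.range (M-1)).image (fun j => L - 1 - j))
    (by
      intro v hv
      simp only [Finset.mem_coe, Finset.mem_filter, Finset.mem_univ, true_and] at hv
      have hvL : v.val < L := ZMod.val_lt v
      simp only [Finset.mem_coe, Finset.mem_union, Finset.mem_range, Finset.mem_image]
      rcases le_or_gt v.val (M-1) with h1 | h1
      · left; omega
      · right
        exact ⟨L - v.val - 1, by omega, by omega⟩)
    (fun a _ b _ h => ZMod.val_injective L h)
  calc _ ≤ _ := h
    _ ≤ (Finset.range M).card + ((Finset.range (M-1)).image (fun j => L - 1 - j)).card :=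
        Finset.card_union_le _ _
    _ ≤ M + (M - 1) := by
        gcongr
        · simp
        · exact (Finset.card_image_le).trans (by simp)
    _ ≤ 2 * M - 1 := by omega

lemma count_eq (L : ℕ) [NeZero L] (M : ℕ) :
    (Finset.univ.filter (fun v : ZMod L => min v.val (L - v.val) = M)).card ≤ 2 := by
  classical
  have h := Finset.card_le_card_of_injOn (fun v : ZMod L => v.val)
    (s := Finset.univ.filter (fun v : ZMod L => min v.val (L - v.val) = M))
    (t := {M, L - M})
    (by
      intro v hv
      simp only [Finset.mem_coe, Finset.mem_filter, Finset.mem_univ, true_and] at hv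
      have hvL : v.val < L := ZMod.val_lt v
      simp only [Finset.mem_coe, Finset.mem_insert, Finset.mem_singleton]
      omega)
    (fun a _ b _ h => ZMod.val_injective L h)
  exact h.trans ((Finset.card_insert_le _ _).trans (by simp))

lemma comb (L : ℕ) [NeZero L] (f : ℕ → ℝ) (hf0 : ∀ M, 0 ≤ f M) (hf1 : f 0 ≤ 1) :
    ∑ v1 : ZMod L, ∑ v2 : ZMod L,
        f (max (min v1.val (L - v1.val)) (min v2.val (L - v2.val)))
      ≤ 1 + ∑ M ∈ Finset.Icc 1 (L/2), 8 * M * f M := by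
  classical
  set m : ZMod L → ℕ := fun v => min v.val (L - v.val) with hm
  -- pointwise split
  have step1 : ∑ v1 : ZMod L, ∑ v2 : ZMod L, f (max (m v1) (m v2))
      ≤ (∑ v1 : ZMod L, ∑ v2 : ZMod L, if m v2 ≤ m v1 then f (m v1) else 0)
        + ∑ v1 : ZMod L, ∑ v2 : ZMod L, if m v1 < m v2 then f (m v2) else 0 := by
    rw [← Finset.sum_add_distrib]
    apply Finset.sum_le_sum; intro v1 _
    rw [← Finset.sum_add_distrib]
    apply Finset.sum_le_sum; intro v2 _
    rcases le_or_gt (m v2) (m v1) with h | h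
    · rw [if_pos h, if_neg (not_lt.2 h), max_eq_left h, add_zero]
    · rw [if_neg (not_le.2 h), if_pos h, max_eq_right h.le, zero_add]
  -- first sum
  have T1 : (∑ v1 : ZMod L, ∑ v2 : ZMod L, if m v2 ≤ m v1 then f (m v1) else 0)
      ≤ ∑ v1 : ZMod L, ((2 * m v1 + 1 : ℕ) : ℝ) * f (m v1) := by
    apply Finset.sum_le_sum; intro v1 _
    rw [← Finset.sum_filter, Finset.sum_const, nsmul_eq_mul]
    gcongr
    · exact hf0 _
    · exact_mod_cast count_le L (m v1)
  have T2 : (∑ v1 : ZMod L, ∑ v2 : ZMod L, if m v1 < m v2 then f (m v2) else 0)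
      ≤ ∑ v2 : ZMod L, ((2 * m v2 - 1 : ℕ) : ℝ) * f (m v2) := by
    rw [Finset.sum_comm]
    apply Finset.sum_le_sum; intro v2 _
    rw [← Finset.sum_filter, Finset.sum_const, nsmul_eq_mul]
    gcongr
    · exact hf0 _
    · exact_mod_cast count_lt L (m v2)
  -- combine into weighted single sum
  have step2 : ∑ v1 : ZMod L, ∑ v2 : ZMod L, f (max (m v1) (m v2))
      ≤ ∑ v : ZMod L, (((2 * m v + 1 : ℕ) : ℝ) + ((2 * m v - 1 : ℕ) : ℝ)) * f (m v) := by
    refine step1.trans (le_trans (add_le_add T1 T2) (le_of_eq ?_))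
    rw [← Finset.sum_add_distrib]
    apply Finset.sum_congr rfl; intro v _; ring
  refine step2.trans ?_
  -- split off v = 0
  have h0 : m 0 = 0 := by simp [hm, ZMod.val_zero]
  rw [← Finset.sum_erase_add _ _ (Finset.mem_univ (0 : ZMod L))]
  have hz : (((2 * m 0 + 1 : ℕ) : ℝ) + ((2 * m 0 - 1 : ℕ) : ℝ)) * f (m 0) ≤ 1 := by
    rw [h0]; norm_num; exact hf1
  rw [add_comm (1 : ℝ)]
  refine add_le_add ?_ hz
  -- for v ≠ 0, weight = 4 m v, and fiber over M
  have hw : ∀ v ∈ Finset.univ.erase (0 : ZMod L),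
      (((2 * m v + 1 : ℕ) : ℝ) + ((2 * m v - 1 : ℕ) : ℝ)) * f (m v)
        = 4 * (m v) * f (m v) := by
    intro v hv
    have hv0 : v ≠ 0 := Finset.mem_erase.1 hv |>.1
    have : 1 ≤ m v := by
      have h1 : v.val < L := ZMod.val_lt v
      have h2 : v.val ≠ 0 := fun h => hv0 ((ZMod.val_eq_zero v).1 h)
      simp only [hm]; omega
    have : ((2 * m v - 1 : ℕ) : ℝ) = 2 * m v - 1 := by
      push_cast [Nat.cast_sub (by omega : 1 ≤ 2 * m v)]; ring
    rw [this]; push_cast; ring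
  rw [Finset.sum_congr rfl hw]
  -- fiberwise
  have hmaps : ∀ v ∈ Finset.univ.erase (0 : ZMod L), m v ∈ Finset.Icc 1 (L/2) := by
    intro v hv
    have hv0 : v ≠ 0 := Finset.mem_erase.1 hv |>.1
    have h1 : v.val < L := ZMod.val_lt v
    have h2 : v.val ≠ 0 := fun h => hv0 ((ZMod.val_eq_zero v).1 h)
    simp only [hm, Finset.mem_Icc]; omega
  rw [← Finset.sum_fiberwise_of_maps_to hmaps (fun v => 4 * (m v : ℝ) * f (m v))]
  apply Finset.sum_le_sum
  intro M hM
  have : ∀ v ∈ (Finset.univ.erase (0 : ZMod L)).filter (fun v => m v = M),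
      4 * (m v : ℝ) * f (m v) = 4 * M * f M := by
    intro v hv
    rw [(Finset.mem_filter.1 hv).2]
  rw [Finset.sum_congr rfl this, Finset.sum_const, nsmul_eq_mul]
  have hcard : ((Finset.univ.erase (0 : ZMod L)).filter (fun v => m v = M)).card ≤ 2 := by
    refine le_trans (Finset.card_le_card ?_) (count_eq L M)
    intro v hv
    simp only [Finset.mem_filter, Finset.mem_univ, true_and]
    exact (Finset.mem_filter.1 hv).2
  calc ((Finset.univ.erase (0 : ZMod L)).filter (fun v => m v = M)).card * (4 * M * f M)
      ≤ 2 * (4 * M * f M) := by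
        have h2 : (((Finset.univ.erase (0 : ZMod L)).filter (fun v => m v = M)).card : ℝ) ≤ 2 := by
          exact_mod_cast hcard
        have h3 : (0:ℝ) ≤ 4 * M * f M := by have := hf0 M; positivity
        exact mul_le_mul_of_nonneg_right h2 h3
    _ = 8 * M * f M := by ring

noncomputable def Fa (A B : ℝ) (u : ℝ) : ℝ :=
  (B - A)/3 * Real.log (1 + u) + (A - B)/6 * Real.log (u^2 - u + 1)
    + (A + B)/Real.sqrt 3 * Real.arctan ((2*u - 1)/Real.sqrt 3)

lemma Fa_hasDerivAt (A B : ℝ) {u : ℝ} (hu : 0 ≤ u) :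
    HasDerivAt (Fa A B) ((A*u + B)/(1 + u^3)) u := by
  have h1 : (0:ℝ) < 1 + u := by linarith
  have h2 : (0:ℝ) < u^2 - u + 1 := by nlinarith
  have h3 : (0:ℝ) < 1 + u^3 := by nlinarith
  have s3 : (0:ℝ) < Real.sqrt 3 := by positivity
  have s3sq : Real.sqrt 3 ^ 2 = 3 := Real.sq_sqrt (by norm_num)
  have d1 : HasDerivAt (fun u : ℝ => Real.log (1 + u)) (1/(1+u)) u := by
    have : HasDerivAt (fun u : ℝ => 1 + u) 1 u := (hasDerivAt_id u).const_add 1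
    simpa using this.log h1.ne'
  have dq : HasDerivAt (fun u : ℝ => u^2 - u + 1) (2*u - 1) u := by
    have : HasDerivAt (fun u : ℝ => u^2 - u + 1) (2*u^1 - 1) u :=
      ((hasDerivAt_pow 2 u).sub (hasDerivAt_id u)).add_const 1
    simpa using this
  have d2 : HasDerivAt (fun u : ℝ => Real.log (u^2 - u + 1)) ((2*u-1)/(u^2-u+1)) u := by
    simpa [div_eq_mul_inv] using dq.log h2.ne'
  have dl : HasDerivAt (fun u : ℝ => (2*u - 1)/Real.sqrt 3) (2/Real.sqrt 3) u := by
    have : HasDerivAt (fun u : ℝ => 2*u - 1) 2 u := by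
      simpa using ((hasDerivAt_id u).const_mul 2).sub_const 1
    simpa [div_eq_mul_inv] using this.div_const (Real.sqrt 3)
  have d3 : HasDerivAt (fun u : ℝ => Real.arctan ((2*u - 1)/Real.sqrt 3))
      (1/(1+((2*u-1)/Real.sqrt 3)^2) * (2/Real.sqrt 3)) u := by
    simpa using dl.arctan
  have := ((d1.const_mul ((B-A)/3)).add (d2.const_mul ((A-B)/6))).add
    (d3.const_mul ((A+B)/Real.sqrt 3))
  refine this.congr_deriv ?_
  symm
  have hkey : ((2*u-1)/Real.sqrt 3)^2 = (2*u-1)^2/3 := by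
    rw [div_pow, s3sq]
  rw [hkey]
  have h4 : (0:ℝ) < 1 + (2*u-1)^2/3 := by positivity
  have hfac : 1 + u^3 = (1+u)*(u^2-u+1) := by ring
  rw [show 1 + (2*u-1)^2/3 = 4*(u^2-u+1)/3 by ring, hfac]
  have hq := h2.ne'
  generalize hQ : u^2-u+1 = Q at hq ⊢
  field_simp
  rw [s3sq, ← hQ]
  ring

lemma Fa_zero (A B : ℝ) : Fa A B 0 = -((A + B)/Real.sqrt 3 * (π/6)) := by
  have h6 : Real.arctan (1/Real.sqrt 3) = π/6 := by
    rw [← Real.tan_pi_div_six, Real.arctan_tan] <;> nlinarith [Real.pi_pos]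
  simp only [Fa]
  norm_num
  rw [show (-1 : ℝ)/Real.sqrt 3 = -(1/Real.sqrt 3) by ring, Real.arctan_neg, h6]
  ring

lemma Fa_bound (A B : ℝ) (hA : 0 ≤ A) (hB : 0 ≤ B) (hBA : B ≤ A ∨ B ≤ 8) {u : ℝ}
    (hu : 0 ≤ u) :
    Fa A B u - Fa A B 0 ≤ 2 + (A + B) * (2 * π / (3 * Real.sqrt 3)) := by
  have h1 : (0:ℝ) < 1 + u := by linarith
  have h2 : (0:ℝ) < u^2 - u + 1 := by nlinarith
  have s3 : (0:ℝ) < Real.sqrt 3 := by positivity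
  set q : ℝ := (u^2 - u + 1)/(1+u)^2 with hqdef
  have hq0 : 0 < q := by positivity
  have hqu : q ≤ 1 := by
    rw [hqdef, div_le_one (by positivity)]; nlinarith
  have hql : (1:ℝ)/4 ≤ q := by
    rw [hqdef, div_le_div_iff₀ (by norm_num) (by positivity)]; nlinarith [sq_nonneg (u-1)]
  have hlq : Real.log (u^2-u+1) - 2*Real.log (1+u) = Real.log q := by
    rw [hqdef, Real.log_div h2.ne' (by positivity), Real.log_pow]; push_cast; ring
  have hlogq_le : Real.log q ≤ 0 := Real.log_nonpos hq0.le hqu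
  have hlogq_ge : -(2*Real.log 2) ≤ Real.log q := by
    have := Real.log_le_log (by norm_num : (0:ℝ) < 1/4) hql
    have h14 : Real.log (1/4 : ℝ) = -(2*Real.log 2) := by
      rw [show (1/4 : ℝ) = (2^2)⁻¹ by norm_num, Real.log_inv, Real.log_pow]
      push_cast; ring
    linarith [h14 ▸ this]
  have hlog : (B - A)/3 * Real.log (1 + u) + (A - B)/6 * Real.log (u^2 - u + 1) ≤ 2 := by
    have he : (B - A)/3 * Real.log (1 + u) + (A - B)/6 * Real.log (u^2 - u + 1)
        = (A - B)/6 * (Real.log (u^2-u+1) - 2*Real.log (1+u)) := by ring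
    rw [he, hlq]
    rcases le_or_gt B A with hc | hc
    · have : (A - B)/6 * Real.log q ≤ 0 :=
        mul_nonpos_of_nonneg_of_nonpos (by linarith) hlogq_le
      linarith
    · have hB8 : B ≤ 8 := hBA.resolve_left (by linarith)
      have hneg : (A - B)/6 ≤ 0 := by linarith
      have := mul_le_mul_of_nonpos_left hlogq_ge hneg
      have hl2 : Real.log 2 < 0.6931471808 := Real.log_two_lt_d9
      have hl2' : 0 < Real.log 2 := Real.log_pos (by norm_num)
      nlinarith
  have harc : Real.arctan ((2*u - 1)/Real.sqrt 3) < π/2 := Real.arctan_lt_pi_div_two _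
  have hcoef : 0 ≤ (A + B)/Real.sqrt 3 := by positivity
  rw [Fa_zero]
  have : Fa A B u ≤ 2 + (A + B)/Real.sqrt 3 * (π/2) := by
    simp only [Fa]
    have := mul_le_mul_of_nonneg_left harc.le hcoef
    linarith
  have heq : 2 + (A + B)/Real.sqrt 3 * (π/2) - -((A + B)/Real.sqrt 3 * (π/6))
      = 2 + (A + B) * (2 * π / (3 * Real.sqrt 3)) := by
    field_simp
    ring
  linarith [heq ▸ (by linarith : Fa A B u - -((A + B)/Real.sqrt 3 * (π/6)) ≤ 2 + (A + B)/Real.sqrt 3 * (π/2) - -((A + B)/Real.sqrt 3 * (π/6)))]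


noncomputable def Gf (β : ℝ) (t : ℝ) : ℝ :=
  Fa (2*π^2*β^2) (4*π*β) (2*t/(π*β))

lemma Gf_hasDerivAt {β : ℝ} (hβ : 0 < β) {t : ℝ} (ht : 0 ≤ t) :
    HasDerivAt (Gf β) (8*(t+1)/(1+8*t^3/(π^3*β^3))) t := by
  have hπ := Real.pi_pos
  have hpb : (0:ℝ) < π * β := by positivity
  have hu : 0 ≤ 2*t/(π*β) := by positivity
  have inner : HasDerivAt (fun t : ℝ => 2*t/(π*β)) (2/(π*β)) t := by
    simpa [div_eq_mul_inv] using ((hasDerivAt_id t).const_mul 2).div_const (π*β)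
  have := (Fa_hasDerivAt (2*π^2*β^2) (4*π*β) hu).comp t inner
  refine this.congr_deriv ?_
  symm
  have h1 : (2*t/(π*β))^3 = 8*t^3/(π^3*β^3) := by
    field_simp; ring
  rw [h1]
  have ht3 : (0:ℝ) ≤ t^3 := pow_nonneg ht 3
  have hd : (0:ℝ) < 1 + 8*t^3/(π^3*β^3) := by positivity
  rw [div_mul_eq_mul_div, div_eq_div_iff hd.ne' hd.ne']
  field_simp
  ring

lemma Gf_step {β : ℝ} (hβ : 0 < β) (M : ℕ) (hM : 1 ≤ M) :
    8*(M:ℝ)*(1/(1+8*(M:ℝ)^3/(π^3*β^3))) ≤ Gf β M - Gf β ((M:ℝ)-1) := by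
  have hπ := Real.pi_pos
  have hM1 : (1:ℝ) ≤ (M:ℝ) := by exact_mod_cast hM
  have hab : (M:ℝ)-1 ≤ (M:ℝ) := by linarith
  have hsub : Set.uIcc ((M:ℝ)-1) (M:ℝ) = Set.Icc ((M:ℝ)-1) (M:ℝ) := Set.uIcc_of_le hab
  set g : ℝ → ℝ := fun t => 8*(t+1)/(1+8*t^3/(π^3*β^3)) with hg
  have hderiv : ∀ t ∈ Set.uIcc ((M:ℝ)-1) (M:ℝ), HasDerivAt (Gf β) (g t) t := by
    intro t ht
    rw [hsub] at ht
    exact Gf_hasDerivAt hβ (by linarith [ht.1])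
  have hcont : ContinuousOn g (Set.uIcc ((M:ℝ)-1) (M:ℝ)) := by
    rw [hsub]
    apply ContinuousOn.div
    · fun_prop
    · fun_prop
    · intro t ht
      have ht0 : 0 ≤ t := by linarith [ht.1]
      have ht3 : (0:ℝ) ≤ t^3 := pow_nonneg ht0 3
      positivity
  have hint : IntervalIntegrable g MeasureTheory.volume ((M:ℝ)-1) (M:ℝ) :=
    hcont.intervalIntegrable
  have heq : ∫ t in ((M:ℝ)-1)..(M:ℝ), g t = Gf β M - Gf β ((M:ℝ)-1) :=
    intervalIntegral.integral_eq_sub_of_hasDerivAt hderiv hint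
  rw [← heq]
  have hconst : ∫ _ in ((M:ℝ)-1)..(M:ℝ), (8*(M:ℝ)*(1/(1+8*(M:ℝ)^3/(π^3*β^3)))) =
      8*(M:ℝ)*(1/(1+8*(M:ℝ)^3/(π^3*β^3))) := by
    rw [intervalIntegral.integral_const, smul_eq_mul]
    ring_nf
  rw [← hconst]
  apply intervalIntegral.integral_mono_on hab (intervalIntegrable_const) hint
  intro t ht
  have ht0 : 0 ≤ t := by linarith [ht.1]
  have htM : t ≤ (M:ℝ) := ht.2
  have ht1 : (M:ℝ) ≤ t + 1 := by linarith [ht.1]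
  have hM3 : (0:ℝ) ≤ (M:ℝ)^3 := by positivity
  have ht3 : (0:ℝ) ≤ t^3 := pow_nonneg ht0 3
  have hd2 : (0:ℝ) < 1+8*t^3/(π^3*β^3) := by positivity
  have hc : (0:ℝ) < π^3*β^3 := by positivity
  have hdle : 1+8*t^3/(π^3*β^3) ≤ 1+8*(M:ℝ)^3/(π^3*β^3) := by
    gcongr
  rw [mul_one_div]
  exact div_le_div₀ (by linarith) (by linarith) hd2 hdle

lemma core_sum {β : ℝ} (hβ : 0 < β) (K : ℕ) :
    ∑ M ∈ Finset.Icc 1 K, 8*(M:ℝ)*(1/(1+8*(M:ℝ)^3/(π^3*β^3)))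
      ≤ 2 + 8*π^2*β/(3*Real.sqrt 3) + 4*π^3*β^2/(3*Real.sqrt 3) := by
  have hπ := Real.pi_pos
  have h1 : ∑ M ∈ Finset.Icc 1 K, 8*(M:ℝ)*(1/(1+8*(M:ℝ)^3/(π^3*β^3)))
      ≤ ∑ M ∈ Finset.Icc 1 K, (Gf β M - Gf β ((M:ℝ)-1)) := by
    apply Finset.sum_le_sum
    intro M hM
    exact Gf_step hβ M (Finset.mem_Icc.1 hM).1
  have h2 : ∑ M ∈ Finset.Icc 1 K, (Gf β M - Gf β ((M:ℝ)-1)) = Gf β K - Gf β 0 := by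
    rw [← Finset.Ico_add_one_right_eq_Icc, Finset.sum_Ico_eq_sum_range]
    simp only [Nat.add_sub_cancel, Nat.succ_sub_one]
    have : ∀ i ∈ Finset.range K, Gf β ((1+i : ℕ) : ℝ) - Gf β (((1+i : ℕ) : ℝ)-1)
        = Gf β ((i+1 : ℕ) : ℝ) - Gf β ((i : ℕ) : ℝ) := by
      intro i _
      have e2 : ((i+1 : ℕ) : ℝ) - 1 = ((i : ℕ) : ℝ) := by push_cast; ring
      rw [show 1 + i = i + 1 from by omega, e2]
    rw [Finset.sum_congr rfl this]
    rw [Finset.sum_range_sub (fun n => Gf β (n : ℝ)) K]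
    norm_num
  have hu : 0 ≤ 2*(K:ℝ)/(π*β) := by positivity
  have h3 : Gf β K - Gf β 0 ≤ 2 + (2*π^2*β^2 + 4*π*β) * (2 * π / (3 * Real.sqrt 3)) := by
    have h0 : Gf β 0 = Fa (2*π^2*β^2) (4*π*β) 0 := by
      simp [Gf]
    rw [h0]
    apply Fa_bound _ _ (by positivity) (by positivity) _ hu
    rcases le_or_gt (π*β) 2 with h | h
    · right; nlinarith
    · left; nlinarith
  have h4 : 2 + (2*π^2*β^2 + 4*π*β) * (2 * π / (3 * Real.sqrt 3))
      = 2 + 8*π^2*β/(3*Real.sqrt 3) + 4*π^3*β^2/(3*Real.sqrt 3) := by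
    ring
  linarith [h1, h2 ▸ h1, h3, h4 ▸ h3]

/-- The discrete integral estimate: for every `L ∈ ℕ` (with `L ≠ 0`) and `β > 0`,
`∑_{x ∈ (ℤ/Lℤ)²} 1/(1 + ∑_{l=1}^2 |e^{2πi x_l/L} − 1|³ L³/(8π³β³))
  ≤ 4 + 8π²β/(3√3) + 4π³β²/(3√3)`. -/
theorem discrete_integral_estimate (L : ℕ) [NeZero L] (β : ℝ) (hβ : 0 < β) :
    ∑ x : ZMod L × ZMod L,
      1 / (1 +
        ‖Complex.exp (Complex.I * (2 * Real.pi * (x.1.val : ℝ) / L)) - 1‖ ^ 3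
          * (L : ℝ) ^ 3 / (8 * Real.pi ^ 3 * β ^ 3) +
        ‖Complex.exp (Complex.I * (2 * Real.pi * (x.2.val : ℝ) / L)) - 1‖ ^ 3
          * (L : ℝ) ^ 3 / (8 * Real.pi ^ 3 * β ^ 3))
      ≤ 4 + 8 * Real.pi ^ 2 * β / (3 * Real.sqrt 3)
          + 4 * Real.pi ^ 3 * β ^ 2 / (3 * Real.sqrt 3) := by
  have hπ := Real.pi_pos
  have hL : (0:ℝ) < L := by exact_mod_cast Nat.pos_of_ne_zero (NeZero.ne L)
  set f : ℕ → ℝ := fun M => 1/(1+8*(M:ℝ)^3/(π^3*β^3)) with hf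
  have hf0 : ∀ M, 0 ≤ f M := by intro M; rw [hf]; positivity
  have hf1 : f 0 ≤ 1 := by rw [hf]; norm_num
  have habs : ∀ v : ZMod L,
      4*((min v.val (L - v.val) : ℕ):ℝ)/L
        ≤ ‖Complex.exp (Complex.I * (2 * Real.pi * (v.val : ℝ) / L)) - 1‖ := by
    intro v
    have harg : (Complex.I * (2 * Real.pi * (v.val : ℝ) / L) : ℂ)
        = Complex.I * ((2 * Real.pi * (v.val : ℝ) / L : ℝ) : ℂ) := by push_cast; ring
    rw [harg, abs_exp_I_sub_one]
    have hhalf : (2 * Real.pi * (v.val : ℝ) / L) / 2 = Real.pi * v.val / L := by ring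
    rw [hhalf]
    have h1 := sin_lower L v
    have h2 := le_abs_self (Real.sin (π * v.val / L))
    calc 4*((min v.val (L - v.val) : ℕ):ℝ)/L
        = 2*(2*((min v.val (L - v.val) : ℕ):ℝ)/L) := by ring
      _ ≤ 2*|Real.sin (π * v.val / L)| := by linarith
  have hterm : ∀ v : ZMod L,
      8*((min v.val (L - v.val) : ℕ):ℝ)^3/(π^3*β^3)
        ≤ ‖Complex.exp (Complex.I * (2 * Real.pi * (v.val : ℝ) / L)) - 1‖ ^ 3
            * (L : ℝ) ^ 3 / (8 * Real.pi ^ 3 * β ^ 3) := by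
    intro v
    have h1 : (0:ℝ) ≤ 4*((min v.val (L - v.val) : ℕ):ℝ)/L := by positivity
    have h3 := pow_le_pow_left₀ h1 (habs v) 3
    have heq : (4*((min v.val (L - v.val) : ℕ):ℝ)/L)^3 * (L:ℝ)^3 / (8*π^3*β^3)
        = 8*((min v.val (L - v.val) : ℕ):ℝ)^3/(π^3*β^3) := by
      field_simp; ring
    calc 8*((min v.val (L - v.val) : ℕ):ℝ)^3/(π^3*β^3)
        = (4*((min v.val (L - v.val) : ℕ):ℝ)/L)^3 * (L:ℝ)^3 / (8*π^3*β^3) := heq.symm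
      _ ≤ _ := by gcongr
  have hpoint : ∀ x : ZMod L × ZMod L,
      1 / (1 +
        ‖Complex.exp (Complex.I * (2 * Real.pi * (x.1.val : ℝ) / L)) - 1‖ ^ 3
          * (L : ℝ) ^ 3 / (8 * Real.pi ^ 3 * β ^ 3) +
        ‖Complex.exp (Complex.I * (2 * Real.pi * (x.2.val : ℝ) / L)) - 1‖ ^ 3
          * (L : ℝ) ^ 3 / (8 * Real.pi ^ 3 * β ^ 3))
      ≤ f (max (min x.1.val (L - x.1.val)) (min x.2.val (L - x.2.val))) := by
    intro x
    have ha1 : (0:ℝ) ≤ ‖Complex.exp (Complex.I * (2 * Real.pi * (x.1.val : ℝ) / L)) - 1‖ ^ 3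
          * (L : ℝ) ^ 3 / (8 * Real.pi ^ 3 * β ^ 3) := by positivity
    have ha2 : (0:ℝ) ≤ ‖Complex.exp (Complex.I * (2 * Real.pi * (x.2.val : ℝ) / L)) - 1‖ ^ 3
          * (L : ℝ) ^ 3 / (8 * Real.pi ^ 3 * β ^ 3) := by positivity
    have ht1 := hterm x.1
    have ht2 := hterm x.2
    rw [hf]
    rcases max_choice (min x.1.val (L - x.1.val)) (min x.2.val (L - x.2.val)) with h | h <;>
      rw [h] <;>
      refine one_div_le_one_div_of_le (by positivity) (by linarith)
  calc ∑ x : ZMod L × ZMod L,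
      1 / (1 +
        ‖Complex.exp (Complex.I * (2 * Real.pi * (x.1.val : ℝ) / L)) - 1‖ ^ 3
          * (L : ℝ) ^ 3 / (8 * Real.pi ^ 3 * β ^ 3) +
        ‖Complex.exp (Complex.I * (2 * Real.pi * (x.2.val : ℝ) / L)) - 1‖ ^ 3
          * (L : ℝ) ^ 3 / (8 * Real.pi ^ 3 * β ^ 3))
      ≤ ∑ x : ZMod L × ZMod L,
          f (max (min x.1.val (L - x.1.val)) (min x.2.val (L - x.2.val))) :=
        Finset.sum_le_sum (fun x _ => hpoint x)
    _ = ∑ v1 : ZMod L, ∑ v2 : ZMod L,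
          f (max (min v1.val (L - v1.val)) (min v2.val (L - v2.val))) :=
        Fintype.sum_prod_type
          (fun x : ZMod L × ZMod L =>
            f (max (min x.1.val (L - x.1.val)) (min x.2.val (L - x.2.val))))
    _ ≤ 1 + ∑ M ∈ Finset.Icc 1 (L/2), 8 * M * f M := comb L f hf0 hf1
    _ ≤ 1 + (2 + 8*π^2*β/(3*Real.sqrt 3) + 4*π^3*β^2/(3*Real.sqrt 3)) := by
        have hc := core_sum hβ (L/2)
        rw [hf]
        simp only [hf] at hc ⊢
        linarith [hc]
    _ ≤ 4 + 8 * Real.pi ^ 2 * β / (3 * Real.sqrt 3)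
          + 4 * Real.pi ^ 3 * β ^ 2 / (3 * Real.sqrt 3) := by linarith
end

section
/- Let β > 0 and define F(E, s) := e^{sE}/(1 + e^{βE}) for E ∈ ℝ, s ∈ ℝ. Then for each m ∈ {1, 2, 3}, every E ∈ ℝ and every s ∈ [0, β], the m-th partial derivative in E satisfies |∂^m F/∂E^m (E, s)| ≤ ( β·e^{β|E|}/(1 + e^{β|E|}) )^m. -/
open Real

private lemma hP' (s x : ℝ) : HasDerivAt (fun E : ℝ => Real.exp (s*E)) (s * Real.exp (s*x)) x := by
  simpa [mul_comm] using ((hasDerivAt_id x).const_mul s).exp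

private lemma hE' (β x : ℝ) : HasDerivAt (fun E : ℝ => Real.exp (β*E)) (β * Real.exp (β*x)) x := by
  simpa [mul_comm] using ((hasDerivAt_id x).const_mul β).exp

private lemma hD' (β x : ℝ) : HasDerivAt (fun E : ℝ => 1 + Real.exp (β*E)) (β * Real.exp (β*x)) x := by
  simpa [mul_comm] using ((hasDerivAt_id x).const_mul β).exp.const_add 1

private lemma hd0 (β s x : ℝ) :
    HasDerivAt (fun E : ℝ => Real.exp (s*E) / (1 + Real.exp (β*E)))
      (Real.exp (s*x) * (s*(1 + Real.exp (β*x)) - β*Real.exp (β*x)) / (1 + Real.exp (β*x))^2) x := by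
  have hne : (1 + Real.exp (β*x)) ≠ 0 := by positivity
  have := (hP' s x).div (hD' β x) hne
  refine this.congr_deriv ?_
  field_simp

private lemma hd1 (β s x : ℝ) :
    HasDerivAt (fun E : ℝ => Real.exp (s*E) * (s*(1 + Real.exp (β*E)) - β*Real.exp (β*E)) / (1 + Real.exp (β*E))^2)
      (Real.exp (s*x) * (s^2*(1 + Real.exp (β*x))^2 - 2*s*β*Real.exp (β*x)*(1 + Real.exp (β*x)) + β^2*Real.exp (β*x)*(Real.exp (β*x) - 1)) / (1 + Real.exp (β*x))^3) x := by
  have hne : (1 + Real.exp (β*x)) ≠ 0 := by positivity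
  have hne2 : ((1 + Real.exp (β*x))^2) ≠ 0 := by positivity
  have hN : HasDerivAt (fun E : ℝ => s*(1 + Real.exp (β*E)) - β*Real.exp (β*E))
      (s*(β*Real.exp (β*x)) - β*(β*Real.exp (β*x))) x :=
    ((hD' β x).const_mul s).sub ((hE' β x).const_mul β)
  have := ((hP' s x).mul hN).div ((hD' β x).pow 2) hne2
  refine this.congr_deriv ?_
  simp only [Pi.pow_apply, Pi.mul_apply]
  field_simp
  ring

private lemma hd2 (β s x : ℝ) :
    HasDerivAt (fun E : ℝ => Real.exp (s*E) * (s^2*(1 + Real.exp (β*E))^2 - 2*s*β*Real.exp (β*E)*(1 + Real.exp (β*E)) + β^2*Real.exp (β*E)*(Real.exp (β*E) - 1)) / (1 + Real.exp (β*E))^3)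
      (Real.exp (s*x) * (s^3*(1 + Real.exp (β*x))^3 - 3*s^2*β*Real.exp (β*x)*(1 + Real.exp (β*x))^2 + 3*s*β^2*Real.exp (β*x)*(Real.exp (β*x) - 1)*(1 + Real.exp (β*x)) + β^3*Real.exp (β*x)*(-1 + 4*Real.exp (β*x) - Real.exp (β*x)^2)) / (1 + Real.exp (β*x))^4) x := by
  have hne : (1 + Real.exp (β*x)) ≠ 0 := by positivity
  have hne3 : ((1 + Real.exp (β*x))^3) ≠ 0 := by positivity
  have hN : HasDerivAt (fun E : ℝ => s^2*(1 + Real.exp (β*E))^2 - 2*s*β*Real.exp (β*E)*(1 + Real.exp (β*E)) + β^2*Real.exp (β*E)*(Real.exp (β*E) - 1))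
      (s^2*((2:ℕ)*(1 + Real.exp (β*x))^1*(β*Real.exp (β*x))) - ((2*s*β*Real.exp (β*x))*(β*Real.exp (β*x)) + (2*s*β)*(β*Real.exp (β*x))*(1 + Real.exp (β*x))) + (β^2*Real.exp (β*x)*(β*Real.exp (β*x)) + β^2*(β*Real.exp (β*x))*(Real.exp (β*x) - 1))) x := by
    have h1 := ((hD' β x).pow 2).const_mul (s^2)
    have h2 := ((hE' β x).const_mul (2*s*β)).mul (hD' β x)
    have h3 := ((hE' β x).const_mul (β^2)).mul ((hE' β x).sub_const 1)
    refine ((h1.sub h2).add h3).congr_deriv ?_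
    ring
  have := ((hP' s x).mul hN).div ((hD' β x).pow 3) hne3
  refine this.congr_deriv ?_
  simp only [Pi.pow_apply, Pi.mul_apply]
  field_simp
  ring

/-! ### cubic numerator bounds -/

private lemma cubicA (β Q r : ℝ) (hβ : 0 < β) (hQ : 0 < Q) (hQ1 : 1 ≤ Q)
    (hr1 : -(β*Q) ≤ r) (hr2 : r ≤ β) :
    |r^3 - 3*β^2*Q*r + β^3*Q*(Q-1)| ≤ β^3*Q^2*(1+Q) := by
  have hu : (0:ℝ) ≤ β - r := by linarith
  have hv : (0:ℝ) ≤ r + β*Q := by linarith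
  have hw : (0:ℝ) ≤ β*(Q-1) := by nlinarith
  rw [abs_le]; constructor
  · nlinarith [mul_nonneg (mul_nonneg hu hu) hv, mul_nonneg (mul_nonneg hu hu) hβ.le,
      mul_nonneg (mul_nonneg hu hv) hw, mul_nonneg (mul_nonneg hu hw) hβ.le,
      mul_nonneg (mul_nonneg hv hv) hw, mul_nonneg (mul_nonneg hv hw) hw,
      mul_nonneg (mul_nonneg hw hw) hβ.le]
  · nlinarith [mul_nonneg (mul_nonneg hu hu) hu, mul_nonneg (mul_nonneg hu hu) hw,
      mul_nonneg (mul_nonneg hu hv) hv, mul_nonneg (mul_nonneg hu hv) hβ.le,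
      mul_nonneg (mul_nonneg hu hw) hw, mul_nonneg (mul_nonneg hv hv) hw,
      mul_nonneg (mul_nonneg hv hw) hβ.le, mul_nonneg (mul_nonneg hw hw) hw]

private lemma cubicB (β Q r : ℝ) (hβ : 0 < β) (hQ : 0 < Q) (hQ1 : Q ≤ 1)
    (hr1 : -(β*Q) ≤ r) (hr2 : r ≤ β) :
    |r^3 - 3*β^2*Q*r + β^3*Q*(Q-1)| ≤ β^3*(1+Q) := by
  have hu : (0:ℝ) ≤ β - r := by linarith
  have hv : (0:ℝ) ≤ r + β*Q := by linarith
  have hw : (0:ℝ) ≤ β*(1-Q) := by nlinarith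
  rw [abs_le]; constructor
  · nlinarith [mul_nonneg (mul_nonneg hu hu) hu, mul_nonneg (mul_nonneg hu hu) hv,
      mul_nonneg (mul_nonneg hu hu) hw, mul_nonneg (mul_nonneg hv hv) hv,
      mul_nonneg (mul_nonneg hv hv) hw, mul_nonneg (mul_nonneg hv hw) hw,
      mul_nonneg (mul_nonneg hw hw) hw,
      mul_nonneg (mul_nonneg (mul_nonneg hu hu) hv) hQ.le,
      mul_nonneg (mul_nonneg (mul_nonneg hu hu) hw) hQ.le,
      mul_nonneg (mul_nonneg (mul_nonneg hu hv) hv) hQ.le,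
      mul_nonneg (mul_nonneg (mul_nonneg hu hv) hw) hQ.le,
      mul_nonneg (mul_nonneg (mul_nonneg hu hw) hw) hQ.le]
  · nlinarith [mul_nonneg (mul_nonneg hu hu) hw, mul_nonneg (mul_nonneg hu hv) hv,
      mul_nonneg (mul_nonneg hu hv) hw, mul_nonneg (mul_nonneg hu hw) hw,
      mul_nonneg (mul_nonneg (mul_nonneg hu hv) hv) hQ.le,
      mul_nonneg (mul_nonneg (mul_nonneg hu hv) hw) hQ.le,
      mul_nonneg (mul_nonneg (mul_nonneg hu hw) hw) hQ.le,
      mul_nonneg (mul_nonneg (mul_nonneg hv hv) hv) hQ.le,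
      mul_nonneg (mul_nonneg (mul_nonneg hv hv) hw) hQ.le,
      mul_nonneg (mul_nonneg (mul_nonneg hv hw) hw) hQ.le,
      mul_nonneg (mul_nonneg (mul_nonneg hw hw) hw) hQ.le]

/-! ### the six bound lemmas -/

private lemma boundA1 (β s Q P : ℝ) (hβ : 0 < β) (hs0 : 0 ≤ s) (hsβ : s ≤ β)
    (hQ : 0 < Q) (hP : 0 < P) (hQ1 : 1 ≤ Q) (hPQ : P ≤ Q) :
    |P * (s*(1+Q) - β*Q) / (1+Q)^2| ≤ (β*Q/(1+Q))^1 := by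
  have hD : (0:ℝ) < 1 + Q := by linarith
  have hN : |s*(1+Q) - β*Q| ≤ β*Q := by
    rw [abs_le]; constructor <;> nlinarith
  rw [abs_div, abs_mul, abs_of_pos hP, abs_of_pos (pow_pos hD 2)]
  have h1 : P * |s*(1+Q) - β*Q| ≤ (1+Q) * (β*Q) :=
    mul_le_mul (by linarith) hN (abs_nonneg _) hD.le
  calc P * |s*(1+Q) - β*Q| / (1+Q)^2 ≤ (1+Q)*(β*Q) / (1+Q)^2 :=
        (div_le_div_iff_of_pos_right (pow_pos hD 2)).mpr h1
    _ = (β*Q/(1+Q))^1 := by field_simp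

private lemma boundB1 (β s Q P : ℝ) (hβ : 0 < β) (hs0 : 0 ≤ s) (hsβ : s ≤ β)
    (hQ : 0 < Q) (hP : 0 < P) (hQ1 : Q ≤ 1) (hP1 : P ≤ 1) :
    |P * (s*(1+Q) - β*Q) / (1+Q)^2| ≤ (β/(1+Q))^1 := by
  have hD : (0:ℝ) < 1 + Q := by linarith
  have hN : |s*(1+Q) - β*Q| ≤ β*(1+Q) := by
    rw [abs_le]; constructor <;> nlinarith
  rw [abs_div, abs_mul, abs_of_pos hP, abs_of_pos (pow_pos hD 2)]
  have h1 : P * |s*(1+Q) - β*Q| ≤ 1 * (β*(1+Q)) :=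
    mul_le_mul hP1 hN (abs_nonneg _) one_pos.le
  calc P * |s*(1+Q) - β*Q| / (1+Q)^2 ≤ 1*(β*(1+Q)) / (1+Q)^2 :=
        (div_le_div_iff_of_pos_right (pow_pos hD 2)).mpr h1
    _ = (β/(1+Q))^1 := by field_simp

private lemma boundA2 (β s Q P : ℝ) (hβ : 0 < β) (hs0 : 0 ≤ s) (hsβ : s ≤ β)
    (hQ : 0 < Q) (hP : 0 < P) (hQ1 : 1 ≤ Q) (hPQ : P ≤ Q) :
    |P * (s^2*(1+Q)^2 - 2*s*β*Q*(1+Q) + β^2*Q*(Q-1)) / (1+Q)^3| ≤ (β*Q/(1+Q))^2 := by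
  have hD : (0:ℝ) < 1 + Q := by linarith
  have hr1 : -(β*Q) ≤ s*(1+Q) - β*Q := by nlinarith
  have hr2 : s*(1+Q) - β*Q ≤ β := by nlinarith
  have hN : |s^2*(1+Q)^2 - 2*s*β*Q*(1+Q) + β^2*Q*(Q-1)| ≤ β^2*Q^2 := by
    have heq : s^2*(1+Q)^2 - 2*s*β*Q*(1+Q) + β^2*Q*(Q-1)
        = (s*(1+Q) - β*Q)^2 - β^2*Q := by ring
    rw [heq, abs_le]
    constructor
    · nlinarith [sq_nonneg (s*(1+Q) - β*Q), mul_nonneg (mul_nonneg hβ.le hβ.le)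
        (by nlinarith : (0:ℝ) ≤ Q^2 - Q)]
    · have h : s*(1+Q) - β*Q ≤ β*Q := by nlinarith
      nlinarith [mul_nonneg (sub_nonneg.2 h) (by linarith : (0:ℝ) ≤ (s*(1+Q) - β*Q) + β*Q)]
  rw [abs_div, abs_mul, abs_of_pos hP, abs_of_pos (pow_pos hD 3)]
  have h1 : P * |s^2*(1+Q)^2 - 2*s*β*Q*(1+Q) + β^2*Q*(Q-1)| ≤ (1+Q) * (β^2*Q^2) :=
    mul_le_mul (by linarith) hN (abs_nonneg _) hD.le
  calc P * |s^2*(1+Q)^2 - 2*s*β*Q*(1+Q) + β^2*Q*(Q-1)| / (1+Q)^3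
      ≤ (1+Q)*(β^2*Q^2) / (1+Q)^3 := (div_le_div_iff_of_pos_right (pow_pos hD 3)).mpr h1
    _ = (β*Q/(1+Q))^2 := by field_simp

private lemma boundB2 (β s Q P : ℝ) (hβ : 0 < β) (hs0 : 0 ≤ s) (hsβ : s ≤ β)
    (hQ : 0 < Q) (hP : 0 < P) (hQ1 : Q ≤ 1) (hP1 : P ≤ 1) :
    |P * (s^2*(1+Q)^2 - 2*s*β*Q*(1+Q) + β^2*Q*(Q-1)) / (1+Q)^3| ≤ (β/(1+Q))^2 := by
  have hD : (0:ℝ) < 1 + Q := by linarith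
  have hr1 : -(β*Q) ≤ s*(1+Q) - β*Q := by nlinarith
  have hr2 : s*(1+Q) - β*Q ≤ β := by nlinarith
  have hN : |s^2*(1+Q)^2 - 2*s*β*Q*(1+Q) + β^2*Q*(Q-1)| ≤ β^2*(1+Q) := by
    have heq : s^2*(1+Q)^2 - 2*s*β*Q*(1+Q) + β^2*Q*(Q-1)
        = (s*(1+Q) - β*Q)^2 - β^2*Q := by ring
    rw [heq, abs_le]
    have hbr : (0:ℝ) ≤ β + (s*(1+Q) - β*Q) := by nlinarith
    constructor
    · nlinarith [sq_nonneg (s*(1+Q) - β*Q)]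
    · nlinarith [mul_nonneg (sub_nonneg.2 hr2) hbr]
  rw [abs_div, abs_mul, abs_of_pos hP, abs_of_pos (pow_pos hD 3)]
  have h1 : P * |s^2*(1+Q)^2 - 2*s*β*Q*(1+Q) + β^2*Q*(Q-1)| ≤ 1 * (β^2*(1+Q)) :=
    mul_le_mul hP1 hN (abs_nonneg _) one_pos.le
  calc P * |s^2*(1+Q)^2 - 2*s*β*Q*(1+Q) + β^2*Q*(Q-1)| / (1+Q)^3
      ≤ 1*(β^2*(1+Q)) / (1+Q)^3 := (div_le_div_iff_of_pos_right (pow_pos hD 3)).mpr h1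
    _ = (β/(1+Q))^2 := by field_simp

private lemma boundA3 (β s Q P : ℝ) (hβ : 0 < β) (hs0 : 0 ≤ s) (hsβ : s ≤ β)
    (hQ : 0 < Q) (hP : 0 < P) (hQ1 : 1 ≤ Q) (hPQ : P ≤ Q) :
    |P * (s^3*(1+Q)^3 - 3*s^2*β*Q*(1+Q)^2 + 3*s*β^2*Q*(Q-1)*(1+Q) + β^3*Q*(-1+4*Q-Q^2)) / (1+Q)^4|
      ≤ (β*Q/(1+Q))^3 := by
  have hD : (0:ℝ) < 1 + Q := by linarith
  have hr1 : -(β*Q) ≤ s*(1+Q) - β*Q := by nlinarith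
  have hr2 : s*(1+Q) - β*Q ≤ β := by nlinarith
  have hN : |s^3*(1+Q)^3 - 3*s^2*β*Q*(1+Q)^2 + 3*s*β^2*Q*(Q-1)*(1+Q) + β^3*Q*(-1+4*Q-Q^2)|
      ≤ β^3*Q^2*(1+Q) := by
    have heq : s^3*(1+Q)^3 - 3*s^2*β*Q*(1+Q)^2 + 3*s*β^2*Q*(Q-1)*(1+Q) + β^3*Q*(-1+4*Q-Q^2)
        = (s*(1+Q) - β*Q)^3 - 3*β^2*Q*(s*(1+Q) - β*Q) + β^3*Q*(Q-1) := by ring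
    rw [heq]
    exact cubicA β Q _ hβ hQ hQ1 hr1 hr2
  rw [abs_div, abs_mul, abs_of_pos hP, abs_of_pos (pow_pos hD 4)]
  have h1 : P * |s^3*(1+Q)^3 - 3*s^2*β*Q*(1+Q)^2 + 3*s*β^2*Q*(Q-1)*(1+Q) + β^3*Q*(-1+4*Q-Q^2)|
      ≤ Q * (β^3*Q^2*(1+Q)) := mul_le_mul hPQ hN (abs_nonneg _) hQ.le
  calc P * |s^3*(1+Q)^3 - 3*s^2*β*Q*(1+Q)^2 + 3*s*β^2*Q*(Q-1)*(1+Q) + β^3*Q*(-1+4*Q-Q^2)| / (1+Q)^4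
      ≤ Q*(β^3*Q^2*(1+Q)) / (1+Q)^4 := (div_le_div_iff_of_pos_right (pow_pos hD 4)).mpr h1
    _ = (β*Q/(1+Q))^3 := by field_simp

private lemma boundB3 (β s Q P : ℝ) (hβ : 0 < β) (hs0 : 0 ≤ s) (hsβ : s ≤ β)
    (hQ : 0 < Q) (hP : 0 < P) (hQ1 : Q ≤ 1) (hP1 : P ≤ 1) :
    |P * (s^3*(1+Q)^3 - 3*s^2*β*Q*(1+Q)^2 + 3*s*β^2*Q*(Q-1)*(1+Q) + β^3*Q*(-1+4*Q-Q^2)) / (1+Q)^4|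
      ≤ (β/(1+Q))^3 := by
  have hD : (0:ℝ) < 1 + Q := by linarith
  have hr1 : -(β*Q) ≤ s*(1+Q) - β*Q := by nlinarith
  have hr2 : s*(1+Q) - β*Q ≤ β := by nlinarith
  have hN : |s^3*(1+Q)^3 - 3*s^2*β*Q*(1+Q)^2 + 3*s*β^2*Q*(Q-1)*(1+Q) + β^3*Q*(-1+4*Q-Q^2)|
      ≤ β^3*(1+Q) := by
    have heq : s^3*(1+Q)^3 - 3*s^2*β*Q*(1+Q)^2 + 3*s*β^2*Q*(Q-1)*(1+Q) + β^3*Q*(-1+4*Q-Q^2)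
        = (s*(1+Q) - β*Q)^3 - 3*β^2*Q*(s*(1+Q) - β*Q) + β^3*Q*(Q-1) := by ring
    rw [heq]
    exact cubicB β Q _ hβ hQ hQ1 hr1 hr2
  rw [abs_div, abs_mul, abs_of_pos hP, abs_of_pos (pow_pos hD 4)]
  have h1 : P * |s^3*(1+Q)^3 - 3*s^2*β*Q*(1+Q)^2 + 3*s*β^2*Q*(Q-1)*(1+Q) + β^3*Q*(-1+4*Q-Q^2)|
      ≤ 1 * (β^3*(1+Q)) := mul_le_mul hP1 hN (abs_nonneg _) one_pos.le
  calc P * |s^3*(1+Q)^3 - 3*s^2*β*Q*(1+Q)^2 + 3*s*β^2*Q*(Q-1)*(1+Q) + β^3*Q*(-1+4*Q-Q^2)| / (1+Q)^4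
      ≤ 1*(β^3*(1+Q)) / (1+Q)^4 := (div_le_div_iff_of_pos_right (pow_pos hD 4)).mpr h1
    _ = (β/(1+Q))^3 := by field_simp

/-- For `F(E,s) = e^{sE}/(1+e^{βE})`, `m ∈ {1,2,3}`, `E ∈ ℝ` and `s ∈ [0,β]`:
`|∂^m F/∂E^m (E,s)| ≤ (β e^{β|E|}/(1+e^{β|E|}))^m`. -/
theorem deriv_bound_fermi_factor (β : ℝ) (hβ : 0 < β) (m : ℕ)
    (hm : m = 1 ∨ m = 2 ∨ m = 3) (E s : ℝ) (hs : s ∈ Set.Icc (0 : ℝ) β) :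
    |iteratedDeriv m (fun E : ℝ => Real.exp (s * E) / (1 + Real.exp (β * E))) E|
      ≤ (β * Real.exp (β * |E|) / (1 + Real.exp (β * |E|))) ^ m := by
  obtain ⟨hs0, hsβ⟩ := hs
  have e0 : deriv (fun E : ℝ => Real.exp (s*E) / (1 + Real.exp (β*E)))
      = fun x => Real.exp (s*x) * (s*(1 + Real.exp (β*x)) - β*Real.exp (β*x)) / (1 + Real.exp (β*x))^2 :=
    funext fun x => (hd0 β s x).deriv
  have e1 : deriv (fun E : ℝ => Real.exp (s*E) * (s*(1 + Real.exp (β*E)) - β*Real.exp (β*E)) / (1 + Real.exp (β*E))^2)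
      = fun x => Real.exp (s*x) * (s^2*(1 + Real.exp (β*x))^2 - 2*s*β*Real.exp (β*x)*(1 + Real.exp (β*x)) + β^2*Real.exp (β*x)*(Real.exp (β*x) - 1)) / (1 + Real.exp (β*x))^3 :=
    funext fun x => (hd1 β s x).deriv
  have e2 : deriv (fun E : ℝ => Real.exp (s*E) * (s^2*(1 + Real.exp (β*E))^2 - 2*s*β*Real.exp (β*E)*(1 + Real.exp (β*E)) + β^2*Real.exp (β*E)*(Real.exp (β*E) - 1)) / (1 + Real.exp (β*E))^3)
      = fun x => Real.exp (s*x) * (s^3*(1 + Real.exp (β*x))^3 - 3*s^2*β*Real.exp (β*x)*(1 + Real.exp (β*x))^2 + 3*s*β^2*Real.exp (β*x)*(Real.exp (β*x) - 1)*(1 + Real.exp (β*x)) + β^3*Real.exp (β*x)*(-1 + 4*Real.exp (β*x) - Real.exp (β*x)^2)) / (1 + Real.exp (β*x))^4 :=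
    funext fun x => (hd2 β s x).deriv
  have hQpos : 0 < Real.exp (β*E) := Real.exp_pos _
  have hPpos : 0 < Real.exp (s*E) := Real.exp_pos _
  rcases le_or_gt 0 E with hE0 | hE0
  · -- E ≥ 0
    rw [abs_of_nonneg hE0]
    have hQ1 : 1 ≤ Real.exp (β*E) := by
      rw [show (1:ℝ) = Real.exp 0 from (Real.exp_zero).symm]
      exact Real.exp_le_exp.2 (by positivity)
    have hPQ : Real.exp (s*E) ≤ Real.exp (β*E) :=
      Real.exp_le_exp.2 (by nlinarith)
    rcases hm with rfl | rfl | rfl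
    · rw [iteratedDeriv_one, e0]
      exact boundA1 β s _ _ hβ hs0 hsβ hQpos hPpos hQ1 hPQ
    · rw [iteratedDeriv_succ, iteratedDeriv_one, e0, e1]
      exact boundA2 β s _ _ hβ hs0 hsβ hQpos hPpos hQ1 hPQ
    · rw [iteratedDeriv_succ, iteratedDeriv_succ, iteratedDeriv_one, e0, e1, e2]
      exact boundA3 β s _ _ hβ hs0 hsβ hQpos hPpos hQ1 hPQ
  · -- E < 0
    rw [abs_of_neg hE0]
    have hex : Real.exp (β * -E) = (Real.exp (β*E))⁻¹ := by
      rw [mul_neg, Real.exp_neg]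
    have hrhs : β * Real.exp (β * -E) / (1 + Real.exp (β * -E)) = β / (1 + Real.exp (β*E)) := by
      rw [hex]
      rw [div_eq_div_iff (by positivity) (by positivity)]
      field_simp
      ring
    rw [hrhs]
    have hQ1 : Real.exp (β*E) ≤ 1 := by
      rw [show (1:ℝ) = Real.exp 0 from (Real.exp_zero).symm]
      exact Real.exp_le_exp.2 (by nlinarith)
    have hP1 : Real.exp (s*E) ≤ 1 := by
      rw [show (1:ℝ) = Real.exp 0 from (Real.exp_zero).symm]
      exact Real.exp_le_exp.2 (by nlinarith)
    rcases hm with rfl | rfl | rfl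
    · rw [iteratedDeriv_one, e0]
      exact boundB1 β s _ _ hβ hs0 hsβ hQpos hPpos hQ1 hP1
    · rw [iteratedDeriv_succ, iteratedDeriv_one, e0, e1]
      exact boundB2 β s _ _ hβ hs0 hsβ hQpos hPpos hQ1 hP1
    · rw [iteratedDeriv_succ, iteratedDeriv_succ, iteratedDeriv_one, e0, e1, e2]
      exact boundB3 β s _ _ hβ hs0 hsβ hQpos hPpos hQ1 hP1
end

section
/- Let β > 0, h > 0 with βh ∈ 2ℕ, and E ∈ ℝ. Define g : [−β,β)_h → ℝ by g(t) := e^{tE} ( 1_{t≥0}/(1 + e^{βE}) − 1_{t<0}/(1 + e^{−βE}) ). Then for every t ∈ [−β,β)_h, g(t) = (1/β) · ∑_{ω ∈ M_h} e^{iωt} / ( h·(1 − e^{−iω/h + E/h}) ). -/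
open Finset
set_option maxHeartbeats 1600000

private lemma aux_term (h cc : ℝ) (hh0 : (h:ℂ) ≠ 0) (n : ℕ) (ω t E : ℝ)
    (hx : Complex.exp (((E:ℂ) - Complex.I * (ω:ℂ)) / (h:ℂ)) ^ n = -(cc:ℂ))
    (hc : (1:ℂ) + (cc:ℂ) ≠ 0) :
    Complex.exp (Complex.I * ((ω * t : ℝ):ℂ)) /
        ((h:ℂ) * (1 - Complex.exp (-(Complex.I * (ω:ℂ)) / h + (E:ℂ) / h)))
      = ((h:ℂ) * (1 + (cc:ℂ)))⁻¹ *
        ∑ r ∈ range n, ((Real.exp ((r:ℝ) * E / h) : ℝ):ℂ) *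
          Complex.exp (Complex.I * ((ω * (t - r / h) : ℝ):ℂ)) := by
  have harg : -(Complex.I * (ω:ℂ)) / h + (E:ℂ)/h = ((E:ℂ) - Complex.I*(ω:ℂ))/h := by ring
  rw [harg]
  set x := Complex.exp (((E:ℂ) - Complex.I * (ω:ℂ)) / (h:ℂ)) with hxd
  have hx1 : x ≠ 1 := by
    intro h1
    rw [h1, one_pow] at hx
    exact hc (by linear_combination hx)
  have h1x : (1:ℂ) - x ≠ 0 := sub_ne_zero.mpr (Ne.symm hx1)
  have hgeom : (1 - x) * ∑ r ∈ range n, x ^ r = 1 + cc := by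
    have hg := geom_sum_mul x n
    linear_combination -hg - hx
  have hnum : ∀ r ∈ range n, ((Real.exp ((r:ℝ) * E / h) : ℝ):ℂ) *
      Complex.exp (Complex.I * ((ω * (t - r / h) : ℝ):ℂ))
      = Complex.exp (Complex.I * ((ω * t : ℝ):ℂ)) * x ^ r := by
    intro r _
    rw [hxd, ← Complex.exp_nat_mul, Complex.ofReal_exp, ← Complex.exp_add, ← Complex.exp_add]
    congr 1
    push_cast
    field_simp
    ring
  rw [Finset.sum_congr rfl hnum, ← Finset.mul_sum]
  have hc' : (h:ℂ) * (1 + (cc:ℂ)) ≠ 0 := mul_ne_zero hh0 hc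
  rw [eq_comm, inv_mul_eq_div, div_eq_div_iff hc' (mul_ne_zero hh0 h1x)]
  linear_combination (Complex.exp (Complex.I * ((ω * t : ℝ):ℂ)) * (h:ℂ)) * hgeom

/-- Matsubara expansion of `g(t) = e^{tE}(1_{t≥0}/(1+e^{βE}) − 1_{t<0}/(1+e^{−βE}))` on
the grid `[−β,β)_h` with `βh = 2N`: at `t = t_m = −β + m/h`,
`g(t) = (1/β) ∑_{ω ∈ M_h} e^{iωt}/(h(1 − e^{−iω/h + E/h}))`, with
`M_h` parametrized by `ω_j = −πh + π/β + 2πj/β`, `j = 0,…,2N−1`. -/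
theorem matsubara_expansion_of_g (β h : ℝ) (hβ : 0 < β) (hh : 0 < h)
    (N : ℕ) (hM : β * h = 2 * N) (E : ℝ) (m : Fin (2 * (2 * N))) :
    (Complex.ofReal (Real.exp ((-β + (m : ℝ) / h) * E) *
        (if 0 ≤ -β + (m : ℝ) / h then 1 / (1 + Real.exp (β * E))
          else -(1 / (1 + Real.exp (-(β * E)))))))
      = (1 / (β : ℂ)) *
        ∑ j : Fin (2 * N),
          Complex.exp (Complex.I *
            Complex.ofReal ((-Real.pi * h + Real.pi / β + 2 * Real.pi * (j : ℝ) / β)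
              * (-β + (m : ℝ) / h))) /
          ((h : ℂ) * (1 - Complex.exp
            (-(Complex.I *
                Complex.ofReal (-Real.pi * h + Real.pi / β + 2 * Real.pi * (j : ℝ) / β)) / h
              + (E : ℂ) / h))) := by
  have hh' : h ≠ 0 := hh.ne'
  have hh0 : (h:ℂ) ≠ 0 := Complex.ofReal_ne_zero.mpr hh'
  have hNr0 : (0:ℝ) < 2 * N := hM ▸ mul_pos hβ hh
  have hN : 0 < N := by exact_mod_cast (by linarith : (0:ℝ) < (N:ℝ))
  have hNr : ((N:ℝ)) ≠ 0 := by positivity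
  have hNc : ((N:ℂ)) ≠ 0 := by exact_mod_cast Complex.ofReal_ne_zero.mpr hNr
  have hβeq : β = 2 * N / h := by field_simp; linarith [hM]
  subst hβeq
  have hm4 : (m:ℕ) < 2 * (2 * N) := m.isLt
  set c : ℝ := Real.exp (2 * N / h * E) with hcdef
  have hc0 : (0:ℝ) < 1 + c := by positivity
  have hcc : (1:ℂ) + (c:ℂ) ≠ 0 := by
    rw [show (1:ℂ) + (c:ℂ) = ((1 + c : ℝ):ℂ) by push_cast; ring]
    exact Complex.ofReal_ne_zero.mpr hc0.ne'
  have hcx : ∀ j : Fin (2 * N),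
      Complex.exp (((E:ℂ) - Complex.I *
          ((-Real.pi * h + Real.pi / (2 * N / h) + 2 * Real.pi * (j : ℝ) / (2 * N / h) : ℝ):ℂ)) / (h:ℂ)) ^ (2 * N)
        = -((c:ℝ):ℂ) := by
    intro j
    rw [← Complex.exp_nat_mul]
    rw [show ((2 * N : ℕ):ℂ) * (((E:ℂ) - Complex.I *
          ((-Real.pi * h + Real.pi / (2 * N / h) + 2 * Real.pi * (j : ℝ) / (2 * N / h) : ℝ):ℂ)) / (h:ℂ))
        = ((2 * N / h * E : ℝ):ℂ) + ((((N:ℤ) - (j:ℕ) - 1) : ℤ) * (2 * (Real.pi:ℂ) * Complex.I) + (Real.pi:ℂ) * Complex.I) from by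
      push_cast
      field_simp
      ring]
    rw [Complex.exp_add, Complex.exp_add, Complex.exp_int_mul_two_pi_mul_I, Complex.exp_pi_mul_I,
      ← Complex.ofReal_exp, ← hcdef]
    ring
  refine Eq.trans ?_ (congrArg (fun S : ℂ => (1 / ((2 * (N:ℝ) / h : ℝ):ℂ)) * S)
    (Finset.sum_congr rfl (fun j _ => (aux_term h c hh0 (2 * N) _ _ E (hcx j) hcc).symm)))
  have hπ : Real.pi ≠ 0 := Real.pi_ne_zero
  set t : ℝ := -(2 * N / h) + (m : ℝ) / h with htdef
  -- split each exponential into phase * q^j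
  have hsplit : ∀ (s : ℝ) (j : Fin (2 * N)),
      Complex.exp (Complex.I *
          (((-Real.pi * h + Real.pi / (2 * N / h) + 2 * Real.pi * (j : ℝ) / (2 * N / h)) * s : ℝ):ℂ))
        = Complex.exp (Complex.I * (((-Real.pi * h + Real.pi / (2 * N / h)) * s : ℝ):ℂ)) *
          Complex.exp (Complex.I * ((2 * Real.pi * s / (2 * N / h) : ℝ):ℂ)) ^ (j : ℕ) := by
    intro s j
    rw [← Complex.exp_nat_mul, ← Complex.exp_add]
    congr 1
    push_cast
    field_simp
  rw [← Finset.mul_sum, Finset.sum_comm]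
  simp only [← Finset.mul_sum]
  set r0 : ℕ := if (m : ℕ) < 2 * N then (m : ℕ) else (m : ℕ) - 2 * N with hr0
  have hmem : r0 ∈ range (2 * N) := by
    rw [Finset.mem_range, hr0]
    split <;> omega
  have hvan : ∀ r ∈ range (2 * N), r ≠ r0 →
      ((Real.exp ((r : ℝ) * E / h) : ℝ):ℂ) *
        ∑ j : Fin (2 * N), Complex.exp (Complex.I *
          (((-Real.pi * h + Real.pi / (2 * N / h) + 2 * Real.pi * (j : ℝ) / (2 * N / h))
            * (t - (r : ℝ) / h) : ℝ):ℂ)) = 0 := by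
    intro r hr hne
    rw [Finset.mem_range] at hr
    apply mul_eq_zero_of_right
    rw [Finset.sum_congr rfl (fun j _ => hsplit (t - (r : ℝ) / h) j), ← Finset.mul_sum]
    apply mul_eq_zero_of_right
    set q : ℂ := Complex.exp (Complex.I * ((2 * Real.pi * (t - (r : ℝ) / h) / (2 * N / h) : ℝ):ℂ)) with hq
    have hq2N : q ^ (2 * N) = 1 := by
      rw [hq, ← Complex.exp_nat_mul,
        show ((2 * N : ℕ):ℂ) * (Complex.I * ((2 * Real.pi * (t - (r : ℝ) / h) / (2 * N / h) : ℝ):ℂ))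
          = (((m : ℕ) : ℤ) - 2 * N - r : ℤ) * (2 * (Real.pi:ℂ) * Complex.I) from by
            push_cast [htdef]; field_simp; ring,
        Complex.exp_int_mul_two_pi_mul_I]
    have hq1 : q ≠ 1 := by
      rw [Ne, Complex.exp_eq_one_iff]
      rintro ⟨k, hk⟩
      have h2 : Complex.I * ((2 * Real.pi * (t - (r : ℝ) / h) / (2 * N / h) : ℝ):ℂ)
          = Complex.I * ((k : ℂ) * (2 * (Real.pi:ℂ))) := by rw [hk]; ring
      have h3 := mul_left_cancel₀ Complex.I_ne_zero h2
      have h4 : 2 * Real.pi * (t - (r : ℝ) / h) / (2 * N / h) = (k : ℝ) * (2 * Real.pi) := by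
        exact_mod_cast h3
      have hbne : (2 * (N:ℝ) / h) ≠ 0 := by positivity
      have h5 : (t - (r:ℝ) / h) / (2 * (N:ℝ) / h) = (k:ℝ) := by
        apply mul_left_cancel₀ (a := (2:ℝ) * Real.pi) (by positivity)
        linear_combination h4
      have hx5 : (t - (r:ℝ) / h) / (2 * (N:ℝ) / h) = (((m:ℕ):ℝ) - 2 * N - r) / (2 * N) := by
        rw [htdef]
        field_simp
        ring
      rw [hx5, div_eq_iff (by positivity : (2 * (N:ℝ)) ≠ 0)] at h5
      have h6 : ((m : ℕ) : ℤ) - 2 * N - r = 2 * N * k := by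
        have : ((m : ℕ) : ℤ) - 2 * N - r = k * (2 * N) := by exact_mod_cast h5
        linarith
      have hm' : ((m : ℕ) : ℤ) < 2 * (2 * N) := by exact_mod_cast hm4
      have hr' : (r : ℤ) < 2 * N := by exact_mod_cast hr
      have hN' : (0:ℤ) < N := by exact_mod_cast hN
      have hklb : -2 < k := by
        by_contra hc2
        push_neg at hc2
        have : 2 * (N:ℤ) * k ≤ 2 * (N:ℤ) * (-2) :=
          mul_le_mul_of_nonneg_left hc2 (by positivity)
        linarith [Int.ofNat_nonneg (m : ℕ), Int.ofNat_nonneg r]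
      have hkub : k < 1 := by
        by_contra hc2
        push_neg at hc2
        have : 2 * (N:ℤ) * 1 ≤ 2 * (N:ℤ) * k :=
          mul_le_mul_of_nonneg_left hc2 (by positivity)
        linarith [Int.ofNat_nonneg r]
      have hk01 : k = -1 ∨ k = 0 := by omega
      rw [hr0] at hne
      rcases hk01 with hk0 | hk0 <;> rw [hk0] at h6 <;>
        [skip; skip] <;> split at hne <;> omega
    rw [Fin.sum_univ_eq_sum_range (fun jn => q ^ jn), geom_sum_eq hq1, hq2N]
    simp
  rw [Finset.sum_eq_single_of_mem r0 hmem hvan]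
  have hcpos : 0 < c := Real.exp_pos _
  rcases Nat.lt_or_ge (m : ℕ) (2 * N) with hlt | hge
  · -- m < 2N : t < 0
    have hr0v : r0 = (m : ℕ) := by rw [hr0, if_pos hlt]
    rw [hr0v]
    have hmR : ((m:ℕ):ℝ) < 2 * N := by exact_mod_cast hlt
    have hneg : ¬ (0 ≤ t) := by
      push_neg
      rw [htdef]
      have := (div_lt_div_iff_of_pos_right hh).mpr hmR
      linarith
    rw [if_neg hneg]
    have hterm : ∀ j : Fin (2 * N),
        Complex.exp (Complex.I *
          (((-Real.pi * h + Real.pi / (2 * N / h) + 2 * Real.pi * (j : ℝ) / (2 * N / h))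
            * (t - ((m:ℕ) : ℝ) / h) : ℝ):ℂ)) = -1 := by
      intro j
      rw [show Complex.I *
          (((-Real.pi * h + Real.pi / (2 * N / h) + 2 * Real.pi * (j : ℝ) / (2 * N / h))
            * (t - ((m:ℕ) : ℝ) / h) : ℝ):ℂ)
          = (((N:ℤ) - (j:ℕ) - 1) : ℤ) * (2 * (Real.pi:ℂ) * Complex.I) + (Real.pi:ℂ) * Complex.I from by
        push_cast [htdef]
        field_simp
        ring]
      rw [Complex.exp_add, Complex.exp_int_mul_two_pi_mul_I, Complex.exp_pi_mul_I]
      ring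
    rw [Finset.sum_congr rfl (fun j _ => hterm j), Finset.sum_const, Finset.card_univ,
      Fintype.card_fin]
    have hexp : Real.exp (t * E) * c = Real.exp (((m:ℕ):ℝ) * E / h) := by
      rw [hcdef, ← Real.exp_add]
      congr 1
      rw [htdef]
      field_simp
      ring
    have hfin : Real.exp (t * E) * -(1 / (1 + Real.exp (-(2 * N / h * E))))
        = -(Real.exp (((m:ℕ):ℝ) * E / h) / (1 + c)) := by
      rw [Real.exp_neg, ← hcdef, ← hexp]
      have h1c : (1:ℝ) + c⁻¹ ≠ 0 := by positivity
      field_simp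
      ring
    rw [hfin]
    simp only [nsmul_eq_mul]
    push_cast
    field_simp
  · -- m ≥ 2N : t ≥ 0
    have hr0v : r0 = (m : ℕ) - 2 * N := by rw [hr0, if_neg (not_lt.mpr hge)]
    rw [hr0v]
    have hmR : 2 * (N:ℝ) ≤ ((m:ℕ):ℝ) := by exact_mod_cast hge
    have hpos : 0 ≤ t := by
      rw [htdef]
      have := (div_le_div_iff_of_pos_right hh).mpr hmR
      linarith
    rw [if_pos hpos]
    have hterm : ∀ j : Fin (2 * N),
        Complex.exp (Complex.I *
          (((-Real.pi * h + Real.pi / (2 * N / h) + 2 * Real.pi * (j : ℝ) / (2 * N / h))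
            * (t - ((((m:ℕ) - 2 * N : ℕ)) : ℝ) / h) : ℝ):ℂ)) = 1 := by
      intro j
      rw [show (t - ((((m:ℕ) - 2 * N : ℕ)) : ℝ) / h) = 0 from by
        push_cast [Nat.cast_sub hge, htdef]
        field_simp
        ring]
      simp
    rw [Finset.sum_congr rfl (fun j _ => hterm j), Finset.sum_const, Finset.card_univ,
      Fintype.card_fin]
    have hexp : Real.exp (t * E) = Real.exp ((((m:ℕ) - 2 * N : ℕ) : ℝ) * E / h) := by
      congr 1
      push_cast [Nat.cast_sub hge, htdef]
      field_simp
      ring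
    rw [hexp]
    simp only [nsmul_eq_mul]
    push_cast [Nat.cast_sub hge]
    field_simp
end
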